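/- arXiv:0810.4216 — 5 statements merged into one kernel-verified Lean document; each statement's English description precedes it below -/
import Mathlib

section
/- For every p ∈ [1, +∞] there exists a constant C > 0, depending only on κ and p, such that for every x ∈ ℝ and every bounded continuous function f ∈ L^p(μ_κ) on ℝ, the function τ_x^κ f belongs to L^p(μ_κ) and ‖τ_x^κ f‖_{κ,p} ≤ C ‖f‖_{κ,p}, with C independent of x and f. -/
noncomputable section
open MeasureTheory Set Real
open scoped ENNReal NNReal

/-- one-dimensional measure `dμ_κ(x) = |x|^{2κ} dx` -/
def muK1 (κ : ℝ) : Measure ℝ :=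
  volume.withDensity fun x => ENNReal.ofReal (|x| ^ (2 * κ))

/-- the measure `μ_κ` on `ℝ^d` with density `∏_j |x_j|^{2κ_j}` -/
def muK (d : ℕ) (κ : Fin d → ℝ) : Measure (Fin d → ℝ) :=
  volume.withDensity fun x => ENNReal.ofReal (∏ j, |x j| ^ (2 * κ j))

/-- the constant `M_κ = Γ(κ+1/2)/(Γ(κ)Γ(1/2))` -/
def Mconst (κ : ℝ) : ℝ := Real.Gamma (κ + 1/2) / (Real.Gamma κ * Real.Gamma (1/2))

/-- `σ_{x,y,z}` -/
def sigma3 (x y z : ℝ) : ℝ := if x ≠ 0 ∧ y ≠ 0 then (x^2 + y^2 - z^2) / (2*x*y) else 0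

/-- area of the (possibly degenerate) triangle with side lengths `x,y,z` (Heron) -/
def triArea (x y z : ℝ) : ℝ :=
  Real.sqrt (((x+y+z)/2) * ((x+y+z)/2 - x) * ((x+y+z)/2 - y) * ((x+y+z)/2 - z))

/-- the kernel `K_κ(x,y,z)` -/
def Kker (κ x y z : ℝ) : ℝ :=
  if |x - y| ≤ z ∧ z ≤ x + y then
    (2:ℝ) ^ (2*κ - 2) * Mconst κ * triArea x y z ^ (2*κ - 2) * (x*y*z) ^ (1 - 2*κ)
  else 0

/-- density of the measure `ν^{κ,+}_{x,y}` with respect to Lebesgue measure -/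
def nuDens (κ x y z : ℝ) : ℝ≥0∞ :=
  ENNReal.ofReal ((1/2) * Kker κ |x| |y| |z| * (1 - sigma3 x y z) * |z| ^ (2*κ))

/-- the measure `ν^{κ,+}_{x,y}` -/
def nuPlus (κ x y : ℝ) : Measure ℝ := volume.withDensity (nuDens κ x y)

/-- the product measure `υ^κ_{x,y} = ν^{κ_1,+}_{x_1,y_1} ⊗ ⋯ ⊗ ν^{κ_d,+}_{x_d,y_d}` -/
def upsilon (d : ℕ) (κ x y : Fin d → ℝ) : Measure (Fin d → ℝ) :=
  volume.withDensity fun z => ∏ j, nuDens (κ j) (x j) (y j) (z j)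

/-- the set `ℝ^d_reg` of regular points -/
def regSet (d : ℕ) : Set (Fin d → ℝ) := {x | ∀ j, x j ≠ 0}

/-- the Euclidean ball of radius `r` centered at the origin -/
def eBall (d : ℕ) (r : ℝ) : Set (Fin d → ℝ) := {x | ∑ j, (x j)^2 < r^2}

/-- the open cube `Q_r` -/
def cubeQ (d : ℕ) (r : ℝ) : Set (Fin d → ℝ) := {x | ∀ j, |x j| < r}

/-- the constant `c_κ` with `c_κ⁻¹ = ∫ e^{-‖x‖²/2} dμ_κ` -/
def cKappa (d : ℕ) (κ : Fin d → ℝ) : ℝ :=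
  (∫ x, Real.exp (-(∑ j, (x j)^2) / 2) ∂(muK d κ))⁻¹

open Classical in
/-- the `ℤ_2^d` Dunkl maximal operator (explicit form), vanishing off `ℝ^d_reg` -/
def Mdunkl (d : ℕ) (κ : Fin d → ℝ) (f : (Fin d → ℝ) → ℝ) (x : Fin d → ℝ) : ℝ≥0∞ :=
  if x ∈ regSet d then
    ⨆ (r : ℝ) (_ : 0 < r), ENNReal.ofReal
      ((cKappa d κ / (muK d κ (eBall d r)).toReal) *
        |∫ y in regSet d, f y * (upsilon d κ x (-y) (eBall d r)).toReal ∂(muK d κ)|)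
  else 0

/-- the cube Dunkl maximal operator `M_κ^Q` (explicit form) -/
def MdunklQ (d : ℕ) (κ : Fin d → ℝ) (f : (Fin d → ℝ) → ℝ) (x : Fin d → ℝ) : ℝ≥0∞ :=
  ⨆ (r : ℝ) (_ : 0 < r), ENNReal.ofReal
    ((cKappa d κ / (muK d κ (cubeQ d r)).toReal) *
      |∫ y in regSet d, f y * (upsilon d κ x (-y) (cubeQ d r)).toReal ∂(muK d κ)|)

/-- the interval `I(x,r) = [max{0,|x|-r}, |x|+r)` -/
def Iset (x r : ℝ) : Set ℝ := Set.Ico (max 0 (|x| - r)) (|x| + r)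

/-- the rectangle `R(z,r) = I(z_1,r) × ⋯ × I(z_d,r)` -/
def Rset (d : ℕ) (z : Fin d → ℝ) (r : ℝ) : Set (Fin d → ℝ) :=
  Set.univ.pi fun j => Iset (z j) r

/-- the weighted maximal operator `M_κ^R` -/
def MR (d : ℕ) (κ : Fin d → ℝ) (f : (Fin d → ℝ) → ℝ) (x : Fin d → ℝ) : ℝ≥0∞ :=
  ⨆ (r : ℝ) (_ : 0 < r),
    (muK d κ (Rset d x r))⁻¹ *
      ∫⁻ y in {y | (fun j => |y j|) ∈ Rset d x r}, ENNReal.ofReal |f y| ∂(muK d κ)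

/-- Rösler's explicit formula for the one-dimensional Dunkl translation `τ_x^κ f(y)` -/
def tauK (κ x : ℝ) (f : ℝ → ℝ) (y : ℝ) : ℝ :=
  (1/2) * (∫ t in Set.Ioo (-1:ℝ) 1,
      f (Real.sqrt (x^2 + y^2 + 2*x*y*t)) *
        (1 + (x + y) / Real.sqrt (x^2 + y^2 + 2*x*y*t)) *
        (Mconst κ * (1 + t) * (1 - t^2) ^ (κ - 1)))
  + (1/2) * (∫ t in Set.Ioo (-1:ℝ) 1,
      f (-Real.sqrt (x^2 + y^2 + 2*x*y*t)) *
        (1 - (x + y) / Real.sqrt (x^2 + y^2 + 2*x*y*t)) *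
        (Mconst κ * (1 + t) * (1 - t^2) ^ (κ - 1)))

/-- an `ℝ≥0∞`-valued `L^p` norm for `ℝ≥0∞`-valued functions -/
def lpNormE {α : Type*} [MeasurableSpace α] (g : α → ℝ≥0∞) (p : ℝ≥0∞) (μ : Measure α) : ℝ≥0∞ :=
  if p = ∞ then essSup g μ else (∫⁻ x, g x ^ p.toReal ∂μ) ^ (1 / p.toReal)

/-- the Hardy–Littlewood maximal operator over cubes centered at `x` -/
def HLmax (d : ℕ) (f : (Fin d → ℝ) → ℝ) (x : Fin d → ℝ) : ℝ≥0∞ :=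
  ⨆ (r : ℝ) (_ : 0 < r),
    (volume {y : Fin d → ℝ | ∀ j, |y j - x j| < r})⁻¹ *
      ∫⁻ y in {y : Fin d → ℝ | ∀ j, |y j - x j| < r}, ENNReal.ofReal |f y| ∂volume


namespace DTaux

open MeasureTheory Set
open scoped ENNReal

variable {κ : ℝ}

/-! ### basic helpers -/

lemma ofReal_int_le {α : Type*} [MeasurableSpace α] (μ : Measure α) (g : α → ℝ)
    (hg : 0 ≤ᵐ[μ] g) :
    ENNReal.ofReal (∫ a, g a ∂μ) ≤ ∫⁻ a, ENNReal.ofReal (g a) ∂μ := by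
  by_cases hi : Integrable g μ
  · rw [MeasureTheory.ofReal_integral_eq_lintegral_ofReal hi hg]
  · rw [integral_undef hi]; simp

lemma Mconst_pos (hκ : 0 < κ) : 0 < Mconst κ :=
  div_pos (Real.Gamma_pos_of_pos (by linarith))
    (mul_pos (Real.Gamma_pos_of_pos hκ) (Real.Gamma_pos_of_pos (by norm_num)))

lemma sqrt_add_le {a b : ℝ} (ha : 0 ≤ a) (hb : 0 ≤ b) :
    Real.sqrt (a + b) ≤ Real.sqrt a + Real.sqrt b := by
  have h1 := Real.sq_sqrt ha
  have h2 := Real.sq_sqrt hb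
  have h : a + b ≤ (Real.sqrt a + Real.sqrt b)^2 := by
    nlinarith [Real.sqrt_nonneg a, Real.sqrt_nonneg b]
  calc Real.sqrt (a+b) ≤ Real.sqrt ((Real.sqrt a + Real.sqrt b)^2) := Real.sqrt_le_sqrt h
    _ = Real.sqrt a + Real.sqrt b := Real.sqrt_sq (by positivity)

/-! ### the function `phi` -/

def phi (x y t : ℝ) : ℝ := Real.sqrt (x^2 + y^2 + 2*x*y*t)

lemma phi_nonneg (x y t : ℝ) : 0 ≤ phi x y t := Real.sqrt_nonneg _

lemma measurable_phi (x : ℝ) : Measurable (fun p : ℝ × ℝ => phi x p.1 p.2) := by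
  apply (Real.continuous_sqrt.comp (by fun_prop : Continuous
    (fun p : ℝ × ℝ => x^2 + p.1^2 + 2*x*p.1*p.2))).measurable

lemma measurable_phi_t (x y : ℝ) : Measurable (fun t : ℝ => phi x y t) := by
  apply (Real.continuous_sqrt.comp (by fun_prop : Continuous
    (fun t : ℝ => x^2 + y^2 + 2*x*y*t))).measurable

lemma ubound {x y t : ℝ} (ht : t ∈ Set.Ioo (-1:ℝ) 1) :
    |x + y| / phi x y t ≤ 1 + Real.sqrt 2 / Real.sqrt (1 + t) := by
  obtain ⟨ht1, ht2⟩ := ht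
  have h1t : (0:ℝ) < 1 + t := by linarith
  have hrhs0 : (0:ℝ) ≤ Real.sqrt 2 / Real.sqrt (1+t) :=
    div_nonneg (Real.sqrt_nonneg _) (Real.sqrt_nonneg _)
  rcases eq_or_lt_of_le (phi_nonneg x y t) with h0 | hpos
  · rw [← h0, div_zero]; linarith
  have hs2 : 0 < x^2 + y^2 + 2*x*y*t := by
    by_contra h
    push_neg at h
    have : phi x y t = 0 := by rw [phi]; exact Real.sqrt_eq_zero'.mpr h
    linarith
  have hphisq : (phi x y t)^2 = x^2 + y^2 + 2*x*y*t := Real.sq_sqrt hs2.le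
  rcases le_or_gt (x*y) 0 with hxy | hxy
  · have hle : (x+y)^2 ≤ (phi x y t)^2 := by rw [hphisq]; nlinarith
    have h2 : |x + y| ≤ phi x y t := by
      calc |x + y| = Real.sqrt ((x+y)^2) := (Real.sqrt_sq_eq_abs _).symm
        _ ≤ Real.sqrt ((phi x y t)^2) := Real.sqrt_le_sqrt hle
        _ = phi x y t := Real.sqrt_sq hpos.le
    have : |x + y| / phi x y t ≤ 1 := (div_le_one hpos).mpr h2
    linarith
  · have h4 : (x+y)^2 ≤ (phi x y t)^2 + 4*(x*y) := by rw [hphisq]; nlinarith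
    have hsa : |x + y| ≤ phi x y t + Real.sqrt (4*(x*y)) := by
      calc |x + y| = Real.sqrt ((x+y)^2) := (Real.sqrt_sq_eq_abs _).symm
        _ ≤ Real.sqrt ((phi x y t)^2 + 4*(x*y)) := Real.sqrt_le_sqrt h4
        _ ≤ Real.sqrt ((phi x y t)^2) + Real.sqrt (4*(x*y)) :=
            sqrt_add_le (sq_nonneg _) (by positivity)
        _ = phi x y t + Real.sqrt (4*(x*y)) := by rw [Real.sqrt_sq hpos.le]
    have hlow : Real.sqrt (2*(x*y)*(1+t)) ≤ phi x y t := by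
      rw [phi]
      apply Real.sqrt_le_sqrt
      nlinarith [sq_nonneg (x - y)]
    have hlowpos : 0 < Real.sqrt (2*(x*y)*(1+t)) := Real.sqrt_pos.mpr (by positivity)
    have key : Real.sqrt (4*(x*y)) / phi x y t ≤ Real.sqrt 2 / Real.sqrt (1+t) := by
      have h5 : Real.sqrt (4*(x*y)) / phi x y t
          ≤ Real.sqrt (4*(x*y)) / Real.sqrt (2*(x*y)*(1+t)) :=
        div_le_div_of_nonneg_left (Real.sqrt_nonneg _) hlowpos hlow
      have h6 : Real.sqrt (4*(x*y)) / Real.sqrt (2*(x*y)*(1+t))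
          = Real.sqrt 2 / Real.sqrt (1+t) := by
        rw [← Real.sqrt_div (by positivity), ← Real.sqrt_div (by norm_num : (0:ℝ) ≤ 2)]
        congr 1
        rw [div_eq_div_iff (by positivity) (by positivity)]; ring
      linarith
    calc |x + y| / phi x y t ≤ (phi x y t + Real.sqrt (4*(x*y))) / phi x y t :=
          (div_le_div_iff_of_pos_right hpos).mpr hsa
      _ = 1 + Real.sqrt (4*(x*y)) / phi x y t := by
          rw [add_div, div_self hpos.ne']
      _ ≤ 1 + Real.sqrt 2 / Real.sqrt (1+t) := by linarith

/-! ### kernels -/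

def wB (κ t : ℝ) : ℝ≥0∞ := ENNReal.ofReal ((1 - t^2) ^ (κ - 1))

def WkR (κ t : ℝ) : ℝ :=
  (1/2) * ((2 + Real.sqrt 2 / Real.sqrt (1 + t)) * (Mconst κ * (1 + t) * (1 - t^2) ^ (κ - 1)))

def Wk (κ t : ℝ) : ℝ≥0∞ := ENNReal.ofReal (WkR κ t)

def KkR (κ x y z : ℝ) : ℝ :=
  (2:ℝ) ^ (2 - 2*κ) * (x*y) ^ (1 - 2*κ) * z * (((x+y)^2 - z^2) * (z^2 - (x-y)^2)) ^ (κ - 1)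

def Kk (κ x y z : ℝ) : ℝ≥0∞ := ENNReal.ofReal (KkR κ x y z)

lemma measurable_wB : Measurable (wB κ) := by
  apply ENNReal.measurable_ofReal.comp
  fun_prop

lemma measurable_Wk : Measurable (Wk κ) := by
  apply ENNReal.measurable_ofReal.comp
  unfold WkR
  fun_prop

lemma measurable_Kk (x y : ℝ) : Measurable (fun z => Kk κ x y z) := by
  apply ENNReal.measurable_ofReal.comp
  unfold KkR
  fun_prop

def Bc (κ : ℝ) : ℝ≥0∞ := ∫⁻ t in Ioo (-1:ℝ) 1, wB κ t

/-! ### change of variables -/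

lemma lintegral_image_1d {s : Set ℝ} {f f' : ℝ → ℝ} (hs : MeasurableSet s)
    (hf' : ∀ x ∈ s, HasDerivWithinAt f (f' x) s x) (hf : Set.InjOn f s) (g : ℝ → ℝ≥0∞) :
    ∫⁻ x in f '' s, g x = ∫⁻ x in s, ENNReal.ofReal |f' x| * g (f x) := by
  simpa only [ContinuousLinearMap.det_toSpanSingleton] using
    lintegral_image_eq_lintegral_abs_det_fderiv_mul volume hs
      (fun x hx => (hf' x hx).hasFDerivWithinAt) hf g

lemma s2_pos {x y t : ℝ} (hx : 0 < x) (hy : 0 < y) (ht : t ∈ Set.Ioo (-1:ℝ) 1) :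
    0 < x^2 + y^2 + 2*x*y*t := by
  nlinarith [sq_nonneg (x - y), ht.1, ht.2, mul_pos hx hy]

lemma phi_image (x y : ℝ) (hx : 0 < x) (hy : 0 < y) :
    (fun t => phi x y t) '' Set.Ioo (-1:ℝ) 1 = Set.Ioo (|x - y|) (x + y) := by
  ext z
  constructor
  · rintro ⟨t, ht, rfl⟩
    have hs2 := s2_pos hx hy ht
    constructor
    · rw [← Real.sqrt_sq_eq_abs]
      apply Real.sqrt_lt_sqrt (sq_nonneg _)
      nlinarith [ht.1, mul_pos hx hy]
    · rw [show x + y = Real.sqrt ((x+y)^2) from (Real.sqrt_sq (by positivity)).symm]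
      apply Real.sqrt_lt_sqrt hs2.le
      nlinarith [ht.2, mul_pos hx hy]
  · rintro ⟨hz1, hz2⟩
    have hz0 : 0 < z := lt_of_le_of_lt (abs_nonneg _) hz1
    refine ⟨(z^2 - x^2 - y^2) / (2*x*y), ⟨?_, ?_⟩, ?_⟩
    · rw [lt_div_iff₀ (by positivity)]
      have : (x-y)^2 < z^2 := by
        rw [← sq_abs (x-y)]
        apply sq_lt_sq' _ hz1
        calc -z < 0 := by linarith
          _ ≤ |x - y| := abs_nonneg _
      nlinarith
    · rw [div_lt_iff₀ (by positivity)]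
      have : z^2 < (x+y)^2 := by nlinarith
      nlinarith
    · show Real.sqrt _ = z
      rw [show x^2 + y^2 + 2*x*y*((z^2 - x^2 - y^2) / (2*x*y)) = z^2 by field_simp; ring]
      exact Real.sqrt_sq hz0.le

lemma phi_hasDeriv {x y : ℝ} (hx : 0 < x) (hy : 0 < y) {t : ℝ} (ht : t ∈ Set.Ioo (-1:ℝ) 1) :
    HasDerivWithinAt (fun t => phi x y t) (x*y / phi x y t) (Set.Ioo (-1:ℝ) 1) t := by
  have hs2 := s2_pos hx hy ht
  have h1 : HasDerivAt (fun t : ℝ => x^2 + y^2 + 2*x*y*t) (2*x*y) t := by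
    simpa using ((hasDerivAt_id t).const_mul (2*x*y)).const_add (x^2 + y^2)
  have h2 := (Real.hasDerivAt_sqrt hs2.ne').comp t h1
  have heq : 1 / (2 * Real.sqrt (x^2 + y^2 + 2*x*y*t)) * (2*x*y) = x*y / phi x y t := by
    rw [phi]; field_simp
  rw [← heq]
  exact (h2.congr_deriv rfl).hasDerivWithinAt

lemma phi_injOn {x y : ℝ} (hx : 0 < x) (hy : 0 < y) :
    Set.InjOn (fun t => phi x y t) (Set.Ioo (-1:ℝ) 1) := by
  intro a ha b hb hab
  have h2a := s2_pos hx hy ha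
  have h2b := s2_pos hx hy hb
  have : x^2 + y^2 + 2*x*y*a = x^2 + y^2 + 2*x*y*b := by
    have := congrArg (fun r => r^2) hab
    simpa [phi, Real.sq_sqrt h2a.le, Real.sq_sqrt h2b.le] using this
  have hxy : 0 < x*y := mul_pos hx hy
  nlinarith

lemma kernel_id {x y t : ℝ} (hx : 0 < x) (hy : 0 < y) (ht : t ∈ Set.Ioo (-1:ℝ) 1) :
    (x*y / phi x y t) * KkR κ x y (phi x y t) = (1 - t^2)^(κ-1) := by
  have hs2 := s2_pos hx hy ht
  have hphipos : 0 < phi x y t := Real.sqrt_pos.mpr hs2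
  have hphisq : (phi x y t)^2 = x^2 + y^2 + 2*x*y*t := Real.sq_sqrt hs2.le
  have hxy : 0 < x*y := mul_pos hx hy
  have ht2 : 0 ≤ 1 - t^2 := by nlinarith [ht.1, ht.2]
  rw [KkR]
  have hS : ((x+y)^2 - (phi x y t)^2) * ((phi x y t)^2 - (x-y)^2)
      = (2*(x*y))^2 * (1 - t^2) := by rw [hphisq]; ring
  rw [hS]
  rw [Real.mul_rpow (sq_nonneg _) ht2]
  have e1 : (((2*(x*y))^2 : ℝ))^(κ-1) = (2:ℝ)^(2*κ-2) * (x*y)^(2*κ-2) := by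
    rw [← Real.rpow_natCast (2*(x*y)) 2, ← Real.rpow_mul (by positivity : (0:ℝ) ≤ 2*(x*y)),
      Real.mul_rpow (by norm_num : (0:ℝ) ≤ 2) hxy.le,
      show ((2:ℕ):ℝ) * (κ-1) = 2*κ-2 by push_cast; ring]
  have e2 : (2:ℝ)^(2-2*κ) * (2:ℝ)^(2*κ-2) = 1 := by
    rw [← Real.rpow_add (by norm_num : (0:ℝ) < 2), show 2-2*κ+(2*κ-2) = 0 by ring,
      Real.rpow_zero]
  have e3 : (x*y)^(1-2*κ) * (x*y)^(2*κ-2) = (x*y)⁻¹ := by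
    rw [← Real.rpow_add hxy, show 1-2*κ+(2*κ-2) = (-1:ℝ) by ring, Real.rpow_neg_one]
  rw [e1]
  calc x*y / phi x y t * ((2:ℝ)^(2-2*κ) * (x*y)^(1-2*κ) * phi x y t *
        ((2:ℝ)^(2*κ-2) * (x*y)^(2*κ-2) * (1-t^2)^(κ-1)))
      = ((2:ℝ)^(2-2*κ) * 2^(2*κ-2)) * ((x*y)^(1-2*κ) * (x*y)^(2*κ-2)) * (x*y) *
          (phi x y t / phi x y t) * (1-t^2)^(κ-1) := by ring
    _ = (1-t^2)^(κ-1) := by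
        rw [e2, e3, div_self hphipos.ne']
        field_simp

lemma changeVar (κ x y : ℝ) (hx : 0 < x) (hy : 0 < y) (h : ℝ → ℝ≥0∞) :
    ∫⁻ t in Set.Ioo (-1:ℝ) 1, h (phi x y t) * wB κ t
      = ∫⁻ z in Set.Ioo (|x-y|) (x+y), h z * Kk κ x y z := by
  rw [← phi_image x y hx hy,
    lintegral_image_1d measurableSet_Ioo (fun t ht => phi_hasDeriv hx hy ht)
      (phi_injOn hx hy) (fun z => h z * Kk κ x y z)]
  refine setLIntegral_congr_fun measurableSet_Ioo (fun t ht => ?_)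
  have hs2 := s2_pos hx hy ht
  have hphipos : 0 < phi x y t := Real.sqrt_pos.mpr hs2
  have hd : 0 ≤ x*y / phi x y t := by positivity
  rw [abs_of_nonneg hd]
  have hkey : ENNReal.ofReal (x*y / phi x y t) * Kk κ x y (phi x y t) = wB κ t := by
    rw [Kk, ← ENNReal.ofReal_mul hd, kernel_id hx hy ht, wB]
  rw [← hkey]; ring

lemma Bc_eq (κ x y : ℝ) (hx : 0 < x) (hy : 0 < y) :
    ∫⁻ z in Set.Ioo (|x-y|) (x+y), Kk κ x y z = Bc κ := by
  have := changeVar κ x y hx hy (fun _ => 1)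
  simp only [one_mul] at this
  rw [← this, Bc]

lemma Kk_symm {x y z : ℝ} (hx : 0 < x) (hy : 0 < y) (hz : 0 < z) :
    Kk κ x y z * ENNReal.ofReal (y^(2*κ)) = Kk κ x z y * ENNReal.ofReal (z^(2*κ)) := by
  have hxy : 0 < x*y := mul_pos hx hy
  have hxz : 0 < x*z := mul_pos hx hz
  rw [Kk, Kk, ← ENNReal.ofReal_mul' (Real.rpow_nonneg hy.le _),
    ← ENNReal.ofReal_mul' (Real.rpow_nonneg hz.le _)]
  congr 1
  have hS : ((x+z)^2 - y^2) * (y^2 - (x-z)^2) = ((x+y)^2 - z^2) * (z^2 - (x-y)^2) := by ring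
  rw [KkR, KkR, hS]
  rw [Real.mul_rpow hx.le hy.le, Real.mul_rpow hx.le hz.le]
  have e1 : (y:ℝ)^(1-2*κ) * y^(2*κ) = y := by
    rw [← Real.rpow_add hy, show 1-2*κ+2*κ = (1:ℝ) by ring, Real.rpow_one]
  have e2 : (z:ℝ)^(1-2*κ) * z^(2*κ) = z := by
    rw [← Real.rpow_add hz, show 1-2*κ+2*κ = (1:ℝ) by ring, Real.rpow_one]
  calc 2^(2-2*κ) * (x^(1-2*κ) * y^(1-2*κ)) * z *
        (((x+y)^2 - z^2) * (z^2 - (x-y)^2))^(κ-1) * y^(2*κ)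
      = 2^(2-2*κ) * x^(1-2*κ) * z * (((x+y)^2 - z^2) * (z^2 - (x-y)^2))^(κ-1) *
          (y^(1-2*κ) * y^(2*κ)) := by ring
    _ = 2^(2-2*κ) * x^(1-2*κ) * y * (((x+y)^2 - z^2) * (z^2 - (x-y)^2))^(κ-1) *
          (z^(1-2*κ) * z^(2*κ)) := by rw [e1, e2]; ring
    _ = 2^(2-2*κ) * (x^(1-2*κ) * z^(1-2*κ)) * y *
          (((x+y)^2 - z^2) * (z^2 - (x-y)^2))^(κ-1) * z^(2*κ) := by ring

/-! ### integral splitting and reflection -/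

lemma lint_neg (F : ℝ → ℝ≥0∞) (s : Set ℝ) :
    ∫⁻ y in s, F y = ∫⁻ y in (fun y : ℝ => -y) ⁻¹' s, F (-y) := by
  exact ((Measure.measurePreserving_neg (volume : Measure ℝ)).setLIntegral_comp_preimage_emb
    (MeasurableEquiv.neg ℝ).measurableEmbedding F s).symm

lemma lint_neg_Iio (F : ℝ → ℝ≥0∞) :
    ∫⁻ y in Set.Iio (0:ℝ), F y = ∫⁻ y in Set.Ioi (0:ℝ), F (-y) := by
  have hset : (fun y : ℝ => -y) ⁻¹' (Set.Iio 0) = Set.Ioi 0 := by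
    ext a
    simp only [Set.mem_preimage, Set.mem_Iio, Set.mem_Ioi]
    constructor <;> intro <;> linarith
  rw [lint_neg F (Set.Iio 0), hset]

lemma lint_split (F : ℝ → ℝ≥0∞) :
    ∫⁻ y, F y ∂(volume : Measure ℝ)
      = (∫⁻ y in Set.Iio (0:ℝ), F y) + ∫⁻ y in Set.Ioi (0:ℝ), F y := by
  have h := lintegral_add_compl F (measurableSet_singleton (0:ℝ)) (μ := volume)
  rw [Measure.restrict_eq_zero.mpr (by simp), lintegral_zero_measure, zero_add] at h
  rw [← h, show ({0}ᶜ : Set ℝ) = Set.Iio 0 ∪ Set.Ioi 0 from (Set.Iio_union_Ioi).symm,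
    lintegral_union measurableSet_Ioi ((Set.Iio_disjoint_Ici le_rfl).mono_right Set.Ioi_subset_Ici_self)]

lemma lint_Ioo_neg (H : ℝ → ℝ≥0∞) :
    ∫⁻ t in Set.Ioo (-1:ℝ) 1, H t = ∫⁻ t in Set.Ioo (-1:ℝ) 1, H (-t) := by
  have hset : (fun y : ℝ => -y) ⁻¹' (Set.Ioo (-1:ℝ) 1) = Set.Ioo (-1:ℝ) 1 := by
    ext a
    simp only [Set.mem_preimage, Set.mem_Ioo]
    constructor <;> intro h' <;> constructor <;> linarith [h'.1, h'.2]
  rw [lint_neg H (Set.Ioo (-1) 1), hset]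

lemma muK1_lintegral (κ : ℝ) (F : ℝ → ℝ≥0∞) (hF : Measurable F) :
    ∫⁻ y, F y ∂(muK1 κ) = ∫⁻ y, ENNReal.ofReal (|y| ^ (2*κ)) * F y ∂(volume : Measure ℝ) := by
  rw [muK1, lintegral_withDensity_eq_lintegral_mul _ (by fun_prop) hF]
  rfl

lemma triangle_iff {x y z : ℝ} (hx : 0 < x) :
    (0 < y ∧ |x - y| < z ∧ z < x + y) ↔ (0 < z ∧ |x - z| < y ∧ y < x + z) := by
  rw [abs_lt, abs_lt]
  constructor <;> rintro ⟨h1, ⟨h2, h3⟩, h4⟩ <;>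
    exact ⟨by linarith, ⟨by linarith, by linarith⟩, by linarith⟩

lemma measurable_inner (κ x : ℝ) (g : ℝ → ℝ≥0∞) (hg : Measurable g) :
    Measurable fun y => ∫⁻ t in Set.Ioo (-1:ℝ) 1, g (phi x y t) * wB κ t := by
  apply Measurable.lintegral_prod_right' (f := fun p : ℝ × ℝ => g (phi x p.1 p.2) * wB κ p.2)
  exact (hg.comp (measurable_phi x)).mul (measurable_wB.comp measurable_snd)

lemma kernelMass (κ x : ℝ) (hx : 0 < x) (g : ℝ → ℝ≥0∞) (hg : Measurable g) :
    ∫⁻ y, (∫⁻ t in Set.Ioo (-1:ℝ) 1, g (phi x y t) * wB κ t) ∂(muK1 κ)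
      = 2 * Bc κ * ∫⁻ z in Set.Ioi (0:ℝ), g z * ENNReal.ofReal (z ^ (2*κ)) := by
  rw [muK1_lintegral κ _ (measurable_inner κ x g hg)]
  set G : ℝ → ℝ≥0∞ :=
    fun y => ENNReal.ofReal (|y| ^ (2*κ)) * ∫⁻ t in Set.Ioo (-1:ℝ) 1, g (phi x y t) * wB κ t
    with hG
  rw [lint_split G, lint_neg_Iio G]
  have hrefl : ∀ y, G (-y) = G y := by
    intro y
    simp only [hG, abs_neg]
    congr 1
    rw [lint_Ioo_neg (fun t => g (phi x (-y) t) * wB κ t)]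
    refine setLIntegral_congr_fun measurableSet_Ioo (fun t ht => ?_)
    have h1 : phi x (-y) (-t) = phi x y t := by
      simp only [phi]; congr 1; ring
    have h2 : wB κ (-t) = wB κ t := by simp only [wB]; congr 2; ring
    simp only [h1, h2]
  rw [show (∫⁻ y in Set.Ioi (0:ℝ), G (-y)) = ∫⁻ y in Set.Ioi (0:ℝ), G y from
    setLIntegral_congr_fun measurableSet_Ioi (fun y _ => hrefl y), ← two_mul]
  -- double-integral representation
  set Ψ : ℝ → ℝ → ℝ≥0∞ := fun y z =>
    if 0 < y ∧ |x - y| < z ∧ z < x + y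
    then g z * Kk κ x y z * ENNReal.ofReal (y^(2*κ)) else 0 with hΨ
  have hΨmeas : Measurable (fun p : ℝ × ℝ => Ψ p.1 p.2) := by
    apply Measurable.ite
    · apply MeasurableSet.inter
      · exact measurableSet_lt measurable_const measurable_fst
      apply MeasurableSet.inter
      · exact measurableSet_lt ((measurable_fst.const_sub x).abs) measurable_snd
      · exact measurableSet_lt measurable_snd (measurable_fst.const_add x)
    · exact ((hg.comp measurable_snd).mul
        ((ENNReal.measurable_ofReal.comp (by unfold KkR; fun_prop)))).mul
        (ENNReal.measurable_ofReal.comp ((measurable_fst.pow_const _)))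
    · exact measurable_const
  have stepA : ∫⁻ y in Set.Ioi (0:ℝ), G y = ∫⁻ y, ∫⁻ z, Ψ y z := by
    rw [← lintegral_indicator (measurableSet_Ioi)]
    apply lintegral_congr
    intro y
    by_cases hy : 0 < y
    · rw [Set.indicator_of_mem (Set.mem_Ioi.mpr hy)]
      have hcond : ∀ z : ℝ, (0 < y ∧ |x - y| < z ∧ z < x + y) ↔ z ∈ Set.Ioo (|x-y|) (x+y) := by
        intro z
        simp only [Set.mem_Ioo]
        exact ⟨fun h => ⟨h.2.1, h.2.2⟩, fun h => ⟨hy, h.1, h.2⟩⟩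
      have : ∀ z, Ψ y z = (Set.Ioo (|x-y|) (x+y)).indicator
          (fun z => ENNReal.ofReal (y^(2*κ)) * (g z * Kk κ x y z)) z := by
        intro z
        simp only [hΨ]
        by_cases hz : z ∈ Set.Ioo (|x-y|) (x+y)
        · rw [Set.indicator_of_mem hz, if_pos ((hcond z).mpr hz)]
          ring
        · rw [Set.indicator_of_notMem hz, if_neg (fun hc => hz ((hcond z).mp hc))]
      rw [lintegral_congr this, lintegral_indicator measurableSet_Ioo,
        lintegral_const_mul (f := fun z => g z * Kk κ x y z) _ ((hg.mul (measurable_Kk x y)))]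
      simp only [hG, abs_of_pos hy, changeVar κ x y hx hy g]
    · rw [Set.indicator_of_notMem (fun h => hy (Set.mem_Ioi.mp h))]
      symm
      simp only [hΨ]
      rw [show (fun z => if 0 < y ∧ |x - y| < z ∧ z < x + y
          then g z * Kk κ x y z * ENNReal.ofReal (y^(2*κ)) else 0) = fun _ => 0 from
        funext fun z => if_neg (fun hc => hy hc.1)]
      exact lintegral_zero
  have stepB : (∫⁻ y, ∫⁻ z, Ψ y z) = ∫⁻ z, ∫⁻ y, Ψ y z :=
    lintegral_lintegral_swap hΨmeas.aemeasurable
  have stepC : ∀ z : ℝ, (∫⁻ y, Ψ y z)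
      = (Set.Ioi (0:ℝ)).indicator (fun z => Bc κ * (g z * ENNReal.ofReal (z^(2*κ)))) z := by
    intro z
    by_cases hz : 0 < z
    · rw [Set.indicator_of_mem (Set.mem_Ioi.mpr hz)]
      have hcond : ∀ y : ℝ, (0 < y ∧ |x - y| < z ∧ z < x + y) ↔ y ∈ Set.Ioo (|x-z|) (x+z) := by
        intro y
        rw [triangle_iff hx]
        simp only [Set.mem_Ioo]
        exact ⟨fun h => ⟨h.2.1, h.2.2⟩, fun h => ⟨hz, h.1, h.2⟩⟩
      have hpt : ∀ y, Ψ y z = (Set.Ioo (|x-z|) (x+z)).indicator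
          (fun y => (g z * ENNReal.ofReal (z^(2*κ))) * Kk κ x z y) y := by
        intro y
        simp only [hΨ]
        by_cases hy : y ∈ Set.Ioo (|x-z|) (x+z)
        · rw [Set.indicator_of_mem hy, if_pos ((hcond y).mpr hy)]
          have hy0 : 0 < y := lt_of_le_of_lt (abs_nonneg _) hy.1
          rw [mul_assoc, Kk_symm hx hy0 hz]
          ring
        · rw [Set.indicator_of_notMem hy, if_neg (fun hc => hy ((hcond y).mp hc))]
      rw [lintegral_congr hpt, lintegral_indicator measurableSet_Ioo,
        lintegral_const_mul _ (measurable_Kk x z), Bc_eq κ x z hx hz]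
      ring
    · rw [Set.indicator_of_notMem (fun h => hz (Set.mem_Ioi.mp h))]
      have : ∀ y, Ψ y z = 0 := by
        intro y
        simp only [hΨ]
        rw [if_neg]
        rintro ⟨h1, h2, h3⟩
        rw [abs_lt] at h2
        exact hz (by linarith [h2.1, h2.2])
      simp only [this, lintegral_zero]
  rw [stepA, stepB, lintegral_congr stepC, lintegral_indicator measurableSet_Ioi,
    lintegral_const_mul (f := fun z => g z * ENNReal.ofReal (z^(2*κ))) _ (hg.mul (show Measurable fun z : ℝ => ENNReal.ofReal (z^(2*κ)) by
      fun_prop))]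
  ring

lemma kernelMassAll (κ x : ℝ) (g : ℝ → ℝ≥0∞) (hg : Measurable g) :
    ∫⁻ y, (∫⁻ t in Set.Ioo (-1:ℝ) 1, g (phi x y t) * wB κ t) ∂(muK1 κ)
      = 2 * Bc κ * ∫⁻ z in Set.Ioi (0:ℝ), g z * ENNReal.ofReal (z ^ (2*κ)) := by
  rcases lt_trichotomy x 0 with hx | hx | hx
  · have hptw : ∀ y, (∫⁻ t in Set.Ioo (-1:ℝ) 1, g (phi x y t) * wB κ t)
        = ∫⁻ t in Set.Ioo (-1:ℝ) 1, g (phi (-x) y t) * wB κ t := by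
      intro y
      rw [lint_Ioo_neg (fun t => g (phi (-x) y t) * wB κ t)]
      refine setLIntegral_congr_fun measurableSet_Ioo (fun t ht => ?_)
      have h1 : phi (-x) y (-t) = phi x y t := by
        simp only [phi]; congr 1; ring
      have h2 : wB κ (-t) = wB κ t := by simp only [wB]; congr 2; ring
      simp only [h1, h2]
    rw [lintegral_congr hptw]
    exact kernelMass κ (-x) (by linarith) g hg
  · subst hx
    have hphi0 : ∀ y t : ℝ, phi 0 y t = |y| := by
      intro y t
      simp only [phi]
      rw [show (0:ℝ)^2 + y^2 + 2*0*y*t = y^2 by ring, Real.sqrt_sq_eq_abs]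
    have hptw : ∀ y, (∫⁻ t in Set.Ioo (-1:ℝ) 1, g (phi 0 y t) * wB κ t) = g |y| * Bc κ := by
      intro y
      simp only [hphi0]
      rw [lintegral_const_mul _ measurable_wB, Bc]
    rw [lintegral_congr hptw, muK1_lintegral κ (fun y => g |y| * Bc κ)
      ((show Measurable fun y : ℝ => g |y| by exact hg.comp measurable_abs).mul
        measurable_const)]
    set G : ℝ → ℝ≥0∞ := fun y => ENNReal.ofReal (|y| ^ (2*κ)) * (g |y| * Bc κ) with hG
    rw [lint_split G, lint_neg_Iio G]
    have hrefl : ∀ y, G (-y) = G y := by intro y; simp only [hG, abs_neg]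
    rw [show (∫⁻ y in Set.Ioi (0:ℝ), G (-y)) = ∫⁻ y in Set.Ioi (0:ℝ), G y from
      setLIntegral_congr_fun measurableSet_Ioi (fun y _ => hrefl y), ← two_mul]
    have hpos : ∀ y ∈ Set.Ioi (0:ℝ), G y = Bc κ * (g y * ENNReal.ofReal (y^(2*κ))) := by
      intro y hy
      simp only [hG, abs_of_pos (Set.mem_Ioi.mp hy)]
      ring
    rw [setLIntegral_congr_fun measurableSet_Ioi hpos,
      lintegral_const_mul (f := fun z => g z * ENNReal.ofReal (z^(2*κ))) _ (hg.mul (show Measurable fun z : ℝ => ENNReal.ofReal (z^(2*κ)) by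
        fun_prop))]
    ring
  · exact kernelMass κ x hx g hg

/-! ### finiteness of the constants -/

lemma ofReal_le_nnnorm (r : ℝ) : ENNReal.ofReal r ≤ (‖r‖₊ : ℝ≥0∞) :=
  (ENNReal.ofReal_le_ofReal (le_abs_self r)).trans_eq
    (by rw [← Real.norm_eq_abs, ofReal_norm, enorm_eq_nnnorm])

lemma lint_ofReal_lt_top {s : Set ℝ} {g : ℝ → ℝ} (h : IntegrableOn g s) :
    ∫⁻ t in s, ENNReal.ofReal (g t) < ⊤ :=
  lt_of_le_of_lt (lintegral_mono fun t => ofReal_le_nnnorm (g t)) h.2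

lemma rpow_int_lt_top (c : ℝ) (hc : -1 < c) :
    ∫⁻ t in Set.Ioo (-1:ℝ) 1, ENNReal.ofReal ((1+t)^c) < ⊤ := by
  apply lint_ofReal_lt_top
  have h1 : IntervalIntegrable (fun u : ℝ => u^c) volume 0 2 :=
    intervalIntegral.intervalIntegrable_rpow' hc
  have h2 : IntervalIntegrable (fun t : ℝ => (t+1)^c) volume (-1) 1 := by
    have := h1.comp_add_right 1
    norm_num at this
    exact this
  have h3 : IntegrableOn (fun t : ℝ => (t+1)^c) (Set.Ioc (-1:ℝ) 1) := by
    rw [intervalIntegrable_iff, Set.uIoc_of_le (by norm_num : (-1:ℝ) ≤ 1)] at h2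
    exact h2
  have h4 := h3.mono_set Set.Ioo_subset_Ioc_self
  exact h4.congr_fun (fun t _ => by rw [add_comm]) measurableSet_Ioo

lemma rpow_int_lt_top' (c : ℝ) (hc : -1 < c) :
    ∫⁻ t in Set.Ioo (-1:ℝ) 1, ENNReal.ofReal ((1-t)^c) < ⊤ := by
  rw [lint_Ioo_neg (fun t => ENNReal.ofReal ((1-t)^c))]
  simp only [sub_neg_eq_add]
  exact rpow_int_lt_top c hc

lemma Bc_lt_top (hκ : 0 < κ) : Bc κ < ⊤ := by
  set m : ℝ := max ((2:ℝ)^(κ-1)) 1 with hm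
  have hm1 : (1:ℝ) ≤ m := le_max_right _ _
  have hm0 : (0:ℝ) ≤ m := by linarith
  have hfac : ∀ u : ℝ, 0 < u → u ≤ 2 → u^(κ-1) ≤ m * 1 ∨ True := fun _ _ _ => Or.inr trivial
  have key : ∀ u : ℝ, 1 ≤ u → u ≤ 2 → u^(κ-1) ≤ m := by
    intro u h1 h2
    rcases le_or_gt 1 κ with hk | hk
    · exact le_trans (Real.rpow_le_rpow (by linarith) h2 (by linarith)) (le_max_left _ _)
    · exact le_trans (Real.rpow_le_one_of_one_le_of_nonpos h1 (by linarith)) hm1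
  have bound : ∀ t ∈ Set.Ioo (-1:ℝ) 1,
      (1-t^2)^(κ-1) ≤ m*(1+t)^(κ-1) + m*(1-t)^(κ-1) := by
    intro t ht
    have h1 : 0 < 1 + t := by linarith [ht.1]
    have h2 : 0 < 1 - t := by linarith [ht.2]
    have hsplit : (1-t^2)^(κ-1) = (1-t)^(κ-1) * (1+t)^(κ-1) := by
      rw [← Real.mul_rpow h2.le h1.le]
      congr 1
      ring
    rcases le_total t 0 with htn | htn
    · have hb : (1-t)^(κ-1) ≤ m := key _ (by linarith) (by linarith)
      have : (1-t^2)^(κ-1) ≤ m * (1+t)^(κ-1) := by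
        rw [hsplit]
        exact mul_le_mul_of_nonneg_right hb (Real.rpow_nonneg h1.le _)
      have h0 : 0 ≤ m*(1-t)^(κ-1) := mul_nonneg hm0 (Real.rpow_nonneg h2.le _)
      linarith
    · have hb : (1+t)^(κ-1) ≤ m := key _ (by linarith) (by linarith)
      have : (1-t^2)^(κ-1) ≤ m * (1-t)^(κ-1) := by
        rw [hsplit, mul_comm ((1-t:ℝ)^(κ-1)) _]
        exact mul_le_mul_of_nonneg_right hb (Real.rpow_nonneg h2.le _)
      have h0 : 0 ≤ m*(1+t)^(κ-1) := mul_nonneg hm0 (Real.rpow_nonneg h1.le _)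
      linarith
  have step1 : Bc κ ≤ ∫⁻ t in Set.Ioo (-1:ℝ) 1,
      (ENNReal.ofReal (m*(1+t)^(κ-1)) + ENNReal.ofReal (m*(1-t)^(κ-1))) := by
    rw [Bc]
    refine setLIntegral_mono' measurableSet_Ioo (fun t ht => ?_)
    calc wB κ t ≤ ENNReal.ofReal (m*(1+t)^(κ-1) + m*(1-t)^(κ-1)) :=
          ENNReal.ofReal_le_ofReal (bound t ht)
      _ ≤ _ := ENNReal.ofReal_add_le
  have step2 : ∫⁻ t in Set.Ioo (-1:ℝ) 1,
      (ENNReal.ofReal (m*(1+t)^(κ-1)) + ENNReal.ofReal (m*(1-t)^(κ-1)))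
      ≤ ENNReal.ofReal m * ((∫⁻ t in Set.Ioo (-1:ℝ) 1, ENNReal.ofReal ((1+t)^(κ-1)))
          + ∫⁻ t in Set.Ioo (-1:ℝ) 1, ENNReal.ofReal ((1-t)^(κ-1))) := by
    rw [lintegral_add_left (by fun_prop), mul_add,
      ← lintegral_const_mul' _ _ ENNReal.ofReal_ne_top,
      ← lintegral_const_mul' _ _ ENNReal.ofReal_ne_top]
    gcongr with t
    · exact (ENNReal.ofReal_mul hm0).le
    · exact (ENNReal.ofReal_mul hm0).le
  have hfin : ENNReal.ofReal m * ((∫⁻ t in Set.Ioo (-1:ℝ) 1, ENNReal.ofReal ((1+t)^(κ-1)))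
      + ∫⁻ t in Set.Ioo (-1:ℝ) 1, ENNReal.ofReal ((1-t)^(κ-1))) < ⊤ :=
    ENNReal.mul_lt_top ENNReal.ofReal_lt_top
      (ENNReal.add_lt_top.mpr ⟨rpow_int_lt_top _ (by linarith), rpow_int_lt_top' _ (by linarith)⟩)
  exact lt_of_le_of_lt (le_trans step1 step2) hfin

def Ak (κ : ℝ) : ℝ≥0∞ := ∫⁻ t in Set.Ioo (-1:ℝ) 1, Wk κ t

lemma Wk_le (hκ : 0 < κ) {t : ℝ} (ht : t ∈ Set.Ioo (-1:ℝ) 1) :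
    Wk κ t ≤ ENNReal.ofReal (3 * Mconst κ) * wB κ t := by
  have h1t : (0:ℝ) < 1 + t := by linarith [ht.1]
  have hM := Mconst_pos hκ
  have hw : (0:ℝ) ≤ (1-t^2)^(κ-1) := Real.rpow_nonneg (by nlinarith [ht.1, ht.2]) _
  rw [Wk, wB, ← ENNReal.ofReal_mul (by positivity)]
  apply ENNReal.ofReal_le_ofReal
  rw [WkR]
  have e : Real.sqrt 2 / Real.sqrt (1+t) * (1+t) = Real.sqrt 2 * Real.sqrt (1+t) := by
    calc Real.sqrt 2 / Real.sqrt (1+t) * (1+t)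
        = Real.sqrt 2 * ((1+t) / Real.sqrt (1+t)) := by ring
      _ = Real.sqrt 2 * Real.sqrt (1+t) := by rw [Real.div_sqrt]
  have h2 : Real.sqrt (1+t) ≤ Real.sqrt 2 := Real.sqrt_le_sqrt (by linarith [ht.2])
  have h3 : Real.sqrt 2 * Real.sqrt (1+t) ≤ Real.sqrt 2 * Real.sqrt 2 :=
    mul_le_mul_of_nonneg_left h2 (Real.sqrt_nonneg 2)
  have h4 : Real.sqrt 2 * Real.sqrt 2 = 2 := Real.mul_self_sqrt (by norm_num)
  have key : (1/2) * ((2 + Real.sqrt 2 / Real.sqrt (1+t)) * (1+t)) ≤ 3 := by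
    have heq : (1/2) * ((2 + Real.sqrt 2 / Real.sqrt (1+t)) * (1+t))
        = (1+t) + (1/2)*(Real.sqrt 2 * Real.sqrt (1+t)) := by
      rw [← e]; ring
    rw [heq]
    nlinarith [ht.2]
  calc (1/2) * ((2 + Real.sqrt 2 / Real.sqrt (1 + t)) * (Mconst κ * (1 + t) * (1 - t^2) ^ (κ - 1)))
      = ((1/2) * ((2 + Real.sqrt 2 / Real.sqrt (1+t)) * (1+t))) * (Mconst κ * (1-t^2)^(κ-1)) := by
        ring
    _ ≤ 3 * (Mconst κ * (1-t^2)^(κ-1)) :=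
        mul_le_mul_of_nonneg_right key (by positivity)
    _ = 3 * Mconst κ * (1-t^2)^(κ-1) := by ring

lemma Ak_le (hκ : 0 < κ) : Ak κ ≤ ENNReal.ofReal (3 * Mconst κ) * Bc κ := by
  rw [Bc, ← lintegral_const_mul' _ _ ENNReal.ofReal_ne_top]
  exact setLIntegral_mono' measurableSet_Ioo (fun t ht => Wk_le hκ ht)

lemma Ak_lt_top (hκ : 0 < κ) : Ak κ < ⊤ :=
  lt_of_le_of_lt (Ak_le hκ) (ENNReal.mul_lt_top ENNReal.ofReal_lt_top (Bc_lt_top hκ))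

/-! ### Hölder-type inequality -/

lemma holder_pow {α : Type*} [MeasurableSpace α] (μ : Measure α) (q : ℝ) (hq : 1 ≤ q)
    (H W : α → ℝ≥0∞) (hH : Measurable H) (hW : Measurable W) :
    (∫⁻ t, H t * W t ∂μ) ^ q ≤ (∫⁻ t, H t ^ q * W t ∂μ) * (∫⁻ t, W t ∂μ) ^ (q - 1) := by
  rcases eq_or_lt_of_le hq with hq1 | hq1
  · rw [← hq1]
    simp
  have hq0 : 0 < q := by linarith
  have hqne : q ≠ 0 := hq0.ne'
  have hq1ne : q - 1 ≠ 0 := by linarith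
  set r : ℝ := q / (q - 1) with hr
  have hrpos : 0 < r := div_pos hq0 (by linarith)
  have hsum : 1/q + 1/r = 1 := by
    rw [hr, one_div_div, ← add_div, show 1 + (q-1) = q by ring, div_self hqne]
  have hconj : q.HolderConjugate r := (Real.holderConjugate_iff_eq_conjExponent hq1).mpr hr
  have hsplit : ∀ t, H t * W t = (H t * (W t) ^ (1/q)) * (W t) ^ (1/r) := by
    intro t
    rw [mul_assoc, ← ENNReal.rpow_add_of_nonneg _ _ (one_div_nonneg.mpr hq0.le)
      (one_div_nonneg.mpr hrpos.le), hsum, ENNReal.rpow_one]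
  calc (∫⁻ t, H t * W t ∂μ) ^ q
      = (∫⁻ t, (fun t => H t * (W t) ^ (1/q)) t * (fun t => (W t) ^ (1/r)) t ∂μ) ^ q := by
        congr 1
        exact lintegral_congr hsplit
    _ ≤ ((∫⁻ t, ((fun t => H t * (W t) ^ (1/q)) t) ^ q ∂μ) ^ (1/q)
          * (∫⁻ t, ((fun t => (W t) ^ (1/r)) t) ^ r ∂μ) ^ (1/r)) ^ q := by
        apply ENNReal.rpow_le_rpow _ hq0.le
        exact ENNReal.lintegral_mul_le_Lp_mul_Lq μ hconj
          (hH.mul (hW.pow_const _)).aemeasurable ((hW.pow_const _)).aemeasurable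
    _ = (∫⁻ t, H t ^ q * W t ∂μ) * (∫⁻ t, W t ∂μ) ^ (q - 1) := by
        have e1 : ∀ t, (H t * (W t) ^ (1/q)) ^ q = H t ^ q * W t := by
          intro t
          rw [ENNReal.mul_rpow_of_nonneg _ _ hq0.le, ← ENNReal.rpow_mul,
            one_div_mul_cancel hq0.ne', ENNReal.rpow_one]
        have e2 : ∀ t, ((W t) ^ (1/r)) ^ r = W t := by
          intro t
          rw [← ENNReal.rpow_mul, one_div_mul_cancel hrpos.ne', ENNReal.rpow_one]
        rw [ENNReal.mul_rpow_of_nonneg _ _ hq0.le]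
        simp only [e1, e2]
        rw [← ENNReal.rpow_mul, ← ENNReal.rpow_mul, one_div_mul_cancel hq0.ne',
          ENNReal.rpow_one, show 1/r * q = q - 1 by
            rw [hr, one_div_div, div_mul_cancel₀ _ hqne]]

lemma pow_add_le (a b : ℝ≥0∞) (q : ℝ) (hq : 1 ≤ q) :
    (a + b) ^ q ≤ 2 ^ q * (a ^ q + b ^ q) := by
  have hq0 : (0:ℝ) ≤ q := by linarith
  have h1 : a + b ≤ 2 * (a ⊔ b) := by
    rcases le_total a b with h | h
    · rw [sup_of_le_right h, two_mul]
      exact add_le_add_left h b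
    · rw [sup_of_le_left h, two_mul]
      exact add_le_add_right h a
  calc (a + b) ^ q ≤ (2 * (a ⊔ b)) ^ q := ENNReal.rpow_le_rpow h1 hq0
    _ = 2 ^ q * (a ⊔ b) ^ q := ENNReal.mul_rpow_of_nonneg _ _ hq0
    _ ≤ 2 ^ q * (a ^ q + b ^ q) := by
        apply mul_le_mul_right
        rcases le_total a b with h | h
        · rw [sup_of_le_right h]
          exact le_add_self
        · rw [sup_of_le_left h]
          exact le_self_add

/-! ### the pointwise bound for the translation -/

lemma tau_bound (κ : ℝ) (hκ : 0 < κ) (x : ℝ) (f : ℝ → ℝ) (hf : Measurable f) (y : ℝ) :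
    ENNReal.ofReal |tauK κ x f y| ≤
      ∫⁻ t in Set.Ioo (-1:ℝ) 1,
        (ENNReal.ofReal |f (phi x y t)| + ENNReal.ofReal |f (-phi x y t)|) * Wk κ t := by
  have hM := Mconst_pos hκ
  set F1 : ℝ → ℝ := fun t => f (Real.sqrt (x^2 + y^2 + 2*x*y*t)) *
      (1 + (x + y) / Real.sqrt (x^2 + y^2 + 2*x*y*t)) *
      (Mconst κ * (1 + t) * (1 - t^2) ^ (κ - 1)) with hF1
  set F2 : ℝ → ℝ := fun t => f (-Real.sqrt (x^2 + y^2 + 2*x*y*t)) *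
      (1 - (x + y) / Real.sqrt (x^2 + y^2 + 2*x*y*t)) *
      (Mconst κ * (1 + t) * (1 - t^2) ^ (κ - 1)) with hF2
  have habs : |tauK κ x f y| ≤
      (∫ t in Set.Ioo (-1:ℝ) 1, (1/2) * ‖F1 t‖) + ∫ t in Set.Ioo (-1:ℝ) 1, (1/2) * ‖F2 t‖ := by
    have half_le : ∀ F : ℝ → ℝ, |(1/2 : ℝ) * ∫ t in Set.Ioo (-1:ℝ) 1, F t|
        ≤ ∫ t in Set.Ioo (-1:ℝ) 1, (1/2) * ‖F t‖ := by
      intro F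
      rw [integral_const_mul, abs_mul, abs_of_nonneg (by norm_num : (0:ℝ) ≤ 1/2)]
      exact mul_le_mul_of_nonneg_left
        (by simpa [Real.norm_eq_abs] using
          norm_integral_le_integral_norm (μ := volume.restrict (Set.Ioo (-1:ℝ) 1)) F)
        (by norm_num)
    rw [tauK, ← hF1, ← hF2]
    exact le_trans (abs_add_le _ _) (add_le_add (half_le F1) (half_le F2))
  have hptb1 : ∀ t ∈ Set.Ioo (-1:ℝ) 1, (1/2) * ‖F1 t‖ ≤ |f (phi x y t)| * WkR κ t := by
    intro t ht
    have h1t : (0:ℝ) < 1 + t := by linarith [ht.1]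
    have hw : (0:ℝ) ≤ (1-t^2)^(κ-1) := Real.rpow_nonneg (by nlinarith [ht.1, ht.2]) _
    have hwM : (0:ℝ) ≤ Mconst κ * (1 + t) * (1 - t^2) ^ (κ - 1) := by positivity
    have h0 := ubound (x := x) (y := y) ht
    have hphiabs : |(x + y) / Real.sqrt (x^2 + y^2 + 2*x*y*t)| = |x+y| / phi x y t := by
      rw [abs_div, abs_of_nonneg (Real.sqrt_nonneg _)]
      rfl
    have hub1 : |1 + (x + y) / Real.sqrt (x^2 + y^2 + 2*x*y*t)|
        ≤ 2 + Real.sqrt 2 / Real.sqrt (1+t) := by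
      calc |1 + (x + y) / Real.sqrt (x^2 + y^2 + 2*x*y*t)|
          ≤ |(1:ℝ)| + |(x + y) / Real.sqrt (x^2 + y^2 + 2*x*y*t)| := abs_add_le _ _
        _ = 1 + |x+y| / phi x y t := by rw [abs_one, hphiabs]
        _ ≤ 2 + Real.sqrt 2 / Real.sqrt (1+t) := by linarith
    rw [hF1, Real.norm_eq_abs, abs_mul, abs_mul, abs_of_nonneg hwM]
    calc (1/2) * (|f (Real.sqrt (x^2 + y^2 + 2*x*y*t))| *
            |1 + (x + y) / Real.sqrt (x^2 + y^2 + 2*x*y*t)| *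
            (Mconst κ * (1 + t) * (1 - t^2) ^ (κ - 1)))
        ≤ (1/2) * (|f (Real.sqrt (x^2 + y^2 + 2*x*y*t))| *
            (2 + Real.sqrt 2 / Real.sqrt (1+t)) *
            (Mconst κ * (1 + t) * (1 - t^2) ^ (κ - 1))) := by
          apply mul_le_mul_of_nonneg_left _ (by norm_num)
          exact mul_le_mul_of_nonneg_right
            (mul_le_mul_of_nonneg_left hub1 (abs_nonneg _)) hwM
      _ = |f (phi x y t)| * WkR κ t := by
          rw [WkR, show phi x y t = Real.sqrt (x^2 + y^2 + 2*x*y*t) from rfl]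
          ring
  have hptb2 : ∀ t ∈ Set.Ioo (-1:ℝ) 1, (1/2) * ‖F2 t‖ ≤ |f (-phi x y t)| * WkR κ t := by
    intro t ht
    have h1t : (0:ℝ) < 1 + t := by linarith [ht.1]
    have hw : (0:ℝ) ≤ (1-t^2)^(κ-1) := Real.rpow_nonneg (by nlinarith [ht.1, ht.2]) _
    have hwM : (0:ℝ) ≤ Mconst κ * (1 + t) * (1 - t^2) ^ (κ - 1) := by positivity
    have h0 := ubound (x := x) (y := y) ht
    have hphiabs : |(x + y) / Real.sqrt (x^2 + y^2 + 2*x*y*t)| = |x+y| / phi x y t := by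
      rw [abs_div, abs_of_nonneg (Real.sqrt_nonneg _)]
      rfl
    have hub2 : |1 - (x + y) / Real.sqrt (x^2 + y^2 + 2*x*y*t)|
        ≤ 2 + Real.sqrt 2 / Real.sqrt (1+t) := by
      calc |1 - (x + y) / Real.sqrt (x^2 + y^2 + 2*x*y*t)|
          ≤ |(1:ℝ)| + |-((x + y) / Real.sqrt (x^2 + y^2 + 2*x*y*t))| := by
            rw [sub_eq_add_neg]
            exact abs_add_le _ _
        _ = 1 + |x+y| / phi x y t := by rw [abs_one, abs_neg, hphiabs]
        _ ≤ 2 + Real.sqrt 2 / Real.sqrt (1+t) := by linarith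
    rw [hF2, Real.norm_eq_abs, abs_mul, abs_mul, abs_of_nonneg hwM]
    calc (1/2) * (|f (-Real.sqrt (x^2 + y^2 + 2*x*y*t))| *
            |1 - (x + y) / Real.sqrt (x^2 + y^2 + 2*x*y*t)| *
            (Mconst κ * (1 + t) * (1 - t^2) ^ (κ - 1)))
        ≤ (1/2) * (|f (-Real.sqrt (x^2 + y^2 + 2*x*y*t))| *
            (2 + Real.sqrt 2 / Real.sqrt (1+t)) *
            (Mconst κ * (1 + t) * (1 - t^2) ^ (κ - 1))) := by
          apply mul_le_mul_of_nonneg_left _ (by norm_num)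
          exact mul_le_mul_of_nonneg_right
            (mul_le_mul_of_nonneg_left hub2 (abs_nonneg _)) hwM
      _ = |f (-phi x y t)| * WkR κ t := by
          rw [WkR, show phi x y t = Real.sqrt (x^2 + y^2 + 2*x*y*t) from rfl]
          ring
  have hstep1 : ENNReal.ofReal (∫ t in Set.Ioo (-1:ℝ) 1, (1/2) * ‖F1 t‖)
      ≤ ∫⁻ t in Set.Ioo (-1:ℝ) 1, ENNReal.ofReal |f (phi x y t)| * Wk κ t := by
    calc ENNReal.ofReal (∫ t in Set.Ioo (-1:ℝ) 1, (1/2) * ‖F1 t‖)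
        ≤ ∫⁻ t in Set.Ioo (-1:ℝ) 1, ENNReal.ofReal ((1/2) * ‖F1 t‖) :=
          ofReal_int_le _ _ (ae_of_all _ fun t => by positivity)
      _ ≤ _ := by
          refine setLIntegral_mono' measurableSet_Ioo (fun t ht => ?_)
          calc ENNReal.ofReal ((1/2) * ‖F1 t‖)
              ≤ ENNReal.ofReal (|f (phi x y t)| * WkR κ t) :=
                ENNReal.ofReal_le_ofReal (hptb1 t ht)
            _ = ENNReal.ofReal |f (phi x y t)| * Wk κ t := by
                rw [ENNReal.ofReal_mul (abs_nonneg _), Wk]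
  have hstep2 : ENNReal.ofReal (∫ t in Set.Ioo (-1:ℝ) 1, (1/2) * ‖F2 t‖)
      ≤ ∫⁻ t in Set.Ioo (-1:ℝ) 1, ENNReal.ofReal |f (-phi x y t)| * Wk κ t := by
    calc ENNReal.ofReal (∫ t in Set.Ioo (-1:ℝ) 1, (1/2) * ‖F2 t‖)
        ≤ ∫⁻ t in Set.Ioo (-1:ℝ) 1, ENNReal.ofReal ((1/2) * ‖F2 t‖) :=
          ofReal_int_le _ _ (ae_of_all _ fun t => by positivity)
      _ ≤ _ := by
          refine setLIntegral_mono' measurableSet_Ioo (fun t ht => ?_)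
          calc ENNReal.ofReal ((1/2) * ‖F2 t‖)
              ≤ ENNReal.ofReal (|f (-phi x y t)| * WkR κ t) :=
                ENNReal.ofReal_le_ofReal (hptb2 t ht)
            _ = ENNReal.ofReal |f (-phi x y t)| * Wk κ t := by
                rw [ENNReal.ofReal_mul (abs_nonneg _), Wk]
  calc ENNReal.ofReal |tauK κ x f y|
      ≤ ENNReal.ofReal ((∫ t in Set.Ioo (-1:ℝ) 1, (1/2) * ‖F1 t‖)
          + ∫ t in Set.Ioo (-1:ℝ) 1, (1/2) * ‖F2 t‖) :=
        ENNReal.ofReal_le_ofReal habs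
    _ ≤ ENNReal.ofReal (∫ t in Set.Ioo (-1:ℝ) 1, (1/2) * ‖F1 t‖)
          + ENNReal.ofReal (∫ t in Set.Ioo (-1:ℝ) 1, (1/2) * ‖F2 t‖) := ENNReal.ofReal_add_le
    _ ≤ (∫⁻ t in Set.Ioo (-1:ℝ) 1, ENNReal.ofReal |f (phi x y t)| * Wk κ t)
          + ∫⁻ t in Set.Ioo (-1:ℝ) 1, ENNReal.ofReal |f (-phi x y t)| * Wk κ t :=
        add_le_add hstep1 hstep2
    _ = _ := by
        rw [← lintegral_add_left]
        · apply lintegral_congr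
          intro t
          rw [add_mul]
        · exact ((ENNReal.measurable_ofReal.comp
            ((hf.comp (measurable_phi_t x y)).abs)).mul measurable_Wk)

/-! ### summing the two halves -/

lemma ioiSum (κ q : ℝ) (f : ℝ → ℝ) (hf : Measurable f) :
    ∫⁻ z in Set.Ioi (0:ℝ),
        ((ENNReal.ofReal |f z|)^q + (ENNReal.ofReal |f (-z)|)^q) * ENNReal.ofReal (z^(2*κ))
      = ∫⁻ z, (ENNReal.ofReal |f z|)^q ∂(muK1 κ) := by
  have hmeasA : Measurable fun z => (ENNReal.ofReal |f z|)^q :=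
    (ENNReal.measurable_ofReal.comp hf.abs).pow_const q
  rw [muK1_lintegral κ _ hmeasA, lint_split, lint_neg_Iio]
  have hL : ∀ z ∈ Set.Ioi (0:ℝ),
      ((ENNReal.ofReal |f z|)^q + (ENNReal.ofReal |f (-z)|)^q) * ENNReal.ofReal (z^(2*κ))
      = ENNReal.ofReal (|z|^(2*κ)) * (ENNReal.ofReal |f z|)^q
        + ENNReal.ofReal (|(-z)|^(2*κ)) * (ENNReal.ofReal |f (-z)|)^q := by
    intro z hz
    rw [abs_neg, abs_of_pos (Set.mem_Ioi.mp hz), add_mul]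
    ring
  rw [setLIntegral_congr_fun measurableSet_Ioi hL,
    lintegral_add_left (f := fun z => ENNReal.ofReal (|z|^(2*κ)) * (ENNReal.ofReal |f z|)^q) ((show Measurable fun z : ℝ => ENNReal.ofReal (|z|^(2*κ)) by
      fun_prop).mul hmeasA)]
  exact add_comm _ _

/-! ### measurability of the translation -/

lemma tauK_measurable (κ x : ℝ) (f : ℝ → ℝ) (hf : Measurable f) :
    Measurable (tauK κ x f) := by
  have hm : Measurable (fun p : ℝ × ℝ => Real.sqrt (x^2 + p.1^2 + 2*x*p.1*p.2)) := by
    apply Real.continuous_sqrt.measurable.comp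
    fun_prop
  have hB : Measurable (fun p : ℝ × ℝ => Mconst κ * (1 + p.2) * (1 - p.2^2)^(κ-1)) := by
    fun_prop
  have h1 : StronglyMeasurable (fun p : ℝ × ℝ =>
      f (Real.sqrt (x^2 + p.1^2 + 2*x*p.1*p.2)) *
        (1 + (x + p.1) / Real.sqrt (x^2 + p.1^2 + 2*x*p.1*p.2)) *
        (Mconst κ * (1 + p.2) * (1 - p.2^2)^(κ-1))) := by
    apply Measurable.stronglyMeasurable
    exact ((hf.comp hm).mul (((measurable_fst.const_add x).div hm).const_add 1)).mul hB
  have h2 : StronglyMeasurable (fun p : ℝ × ℝ =>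
      f (-Real.sqrt (x^2 + p.1^2 + 2*x*p.1*p.2)) *
        (1 - (x + p.1) / Real.sqrt (x^2 + p.1^2 + 2*x*p.1*p.2)) *
        (Mconst κ * (1 + p.2) * (1 - p.2^2)^(κ-1))) := by
    apply Measurable.stronglyMeasurable
    exact ((hf.comp hm.neg).mul
      (((measurable_fst.const_add x).div hm).const_sub 1)).mul hB
  unfold tauK
  apply Measurable.add <;> apply Measurable.const_mul
  · exact h1.integral_prod_right'.measurable
  · exact h2.integral_prod_right'.measurable

/-! ### positivity of `muK1` on open sets, essential sup bounds -/

lemma muK1_open_pos (hκ : 0 < κ) {U : Set ℝ} (hU : IsOpen U) {z : ℝ} (hz : z ∈ U) :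
    0 < muK1 κ U := by
  obtain ⟨a, b, hab, hsub, h0⟩ : ∃ a b : ℝ, a < b ∧ Set.Ioo a b ⊆ U ∧ (0:ℝ) ∉ Set.Icc a b := by
    rcases Metric.isOpen_iff.mp hU z hz with ⟨ε, hε, hball⟩
    rcases eq_or_ne z 0 with rfl | hz0
    · refine ⟨ε/4, ε/2, by linarith, ?_, ?_⟩
      · intro w hw
        apply hball
        rw [Metric.mem_ball, Real.dist_eq, sub_zero, abs_of_pos (by linarith [hw.1])]
        linarith [hw.2]
      · intro h
        simp only [Set.mem_Icc] at h
        linarith [h.1]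
    · have hza : 0 < |z| := abs_pos.mpr hz0
      set δ : ℝ := min (ε/2) (|z|/2) with hδ
      have hδ0 : 0 < δ := lt_min (by linarith) (by linarith)
      refine ⟨z - δ, z + δ, by linarith, ?_, ?_⟩
      · intro w hw
        apply hball
        rw [Metric.mem_ball, Real.dist_eq, abs_lt]
        have : δ ≤ ε/2 := min_le_left _ _
        constructor <;> [linarith [hw.1]; linarith [hw.2]]
      · intro h
        simp only [Set.mem_Icc] at h
        have h1 : |z| ≤ δ := abs_le.mpr ⟨by linarith [h.2], by linarith [h.1]⟩
        have h2 : δ ≤ |z|/2 := min_le_right _ _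
        linarith
  have hcase : b < 0 ∨ 0 < a := by
    by_contra h
    push_neg at h
    exact h0 ⟨h.2, h.1⟩
  set c : ℝ := min |a| |b| with hc
  have hc0 : 0 < c := by
    rcases hcase with h | h
    · exact lt_min (abs_pos.mpr (by linarith)) (abs_pos.mpr (by linarith))
    · exact lt_min (abs_pos.mpr (by linarith)) (abs_pos.mpr (by linarith))
  have hlow : ∀ w ∈ Set.Ioo a b, c ≤ |w| := by
    intro w hw
    rcases hcase with h | h
    · refine le_trans (min_le_right _ _) ?_
      rw [abs_of_neg (by linarith [hw.2] : w < 0), abs_of_neg h]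
      linarith [hw.2]
    · refine le_trans (min_le_left _ _) ?_
      rw [abs_of_pos (by linarith [hw.1] : 0 < w), abs_of_pos h]
      linarith [hw.1]
  have key : ENNReal.ofReal (c^(2*κ)) * volume (Set.Ioo a b) ≤ muK1 κ (Set.Ioo a b) := by
    rw [muK1, withDensity_apply _ measurableSet_Ioo]
    calc ENNReal.ofReal (c^(2*κ)) * volume (Set.Ioo a b)
        = ∫⁻ _ in Set.Ioo a b, ENNReal.ofReal (c^(2*κ)) := by
          rw [setLIntegral_const]
      _ ≤ ∫⁻ w in Set.Ioo a b, ENNReal.ofReal (|w|^(2*κ)) :=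
          setLIntegral_mono' measurableSet_Ioo (fun w hw =>
            ENNReal.ofReal_le_ofReal
              (Real.rpow_le_rpow hc0.le (hlow w hw) (by positivity)))
  have hpos : 0 < ENNReal.ofReal (c^(2*κ)) * volume (Set.Ioo a b) := by
    apply ENNReal.mul_pos
    · exact (ENNReal.ofReal_pos.mpr (Real.rpow_pos_of_pos hc0 _)).ne'
    · rw [Real.volume_Ioo]
      exact (ENNReal.ofReal_pos.mpr (by linarith)).ne'
  exact lt_of_lt_of_le hpos (le_trans key (measure_mono hsub))

lemma pointwise_le_top (hκ : 0 < κ) (f : ℝ → ℝ) (hf : Continuous f) (z : ℝ) :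
    ENNReal.ofReal |f z| ≤ eLpNorm f ⊤ (muK1 κ) := by
  by_contra hcon
  push_neg at hcon
  rw [eLpNorm_exponent_top, eLpNormEssSup] at hcon
  set N := essSup (fun x => (‖f x‖₊ : ℝ≥0∞)) (muK1 κ) with hN
  have hNtop : N ≠ ⊤ := (hcon.trans ENNReal.ofReal_lt_top).ne
  have hseteq : {w : ℝ | N < ENNReal.ofReal |f w|} = {w : ℝ | N.toReal < |f w|} := by
    ext w
    simp only [Set.mem_setOf_eq]
    rw [ENNReal.lt_ofReal_iff_toReal_lt hNtop]
  have hU : IsOpen {w : ℝ | N < ENNReal.ofReal |f w|} := by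
    rw [hseteq]
    exact isOpen_lt continuous_const hf.abs
  have hae : ∀ᵐ w ∂(muK1 κ), (‖f w‖₊ : ℝ≥0∞) ≤ N := ae_le_essSup
  have hnull : muK1 κ {w : ℝ | N < ENNReal.ofReal |f w|} = 0 := by
    have hrw : {w : ℝ | N < ENNReal.ofReal |f w|} = {w : ℝ | ¬ ((‖f w‖₊ : ℝ≥0∞) ≤ N)} := by
      ext w
      simp only [Set.mem_setOf_eq, not_le]
      rw [← enorm_eq_nnnorm, ← ofReal_norm, Real.norm_eq_abs]
    rw [hrw]
    exact hae
  exact (muK1_open_pos hκ hU hcon).ne' hnull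

end DTaux

/-- `L^p`-boundedness of the one-dimensional Dunkl translation, uniformly in `x`. -/
theorem dunkl_translation_Lp_bounded (κ : ℝ) (hκ : 0 < κ) (p : ℝ≥0∞) (hp : 1 ≤ p) :
    ∃ C : ℝ, 0 < C ∧ ∀ (x : ℝ) (f : ℝ → ℝ), Continuous f → (∃ B : ℝ, ∀ y, |f y| ≤ B) →
      MemLp f p (muK1 κ) →
      MemLp (tauK κ x f) p (muK1 κ) ∧
        eLpNorm (tauK κ x f) p (muK1 κ) ≤ ENNReal.ofReal C * eLpNorm f p (muK1 κ) := by
  classical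
  by_cases hptop : p = ∞
  · subst hptop
    set A := DTaux.Ak κ with hA
    have hAfin : A ≠ ⊤ := (DTaux.Ak_lt_top hκ).ne
    refine ⟨2 * A.toReal + 1, by positivity, ?_⟩
    intro x f hf hfb hmem
    have hfm : Measurable f := hf.measurable
    set N := eLpNorm f ⊤ (muK1 κ) with hNdef
    have hNfin : N ≠ ⊤ := hmem.2.ne
    have hpt : ∀ y, ENNReal.ofReal |tauK κ x f y| ≤ 2 * N * A := by
      intro y
      calc ENNReal.ofReal |tauK κ x f y|
          ≤ ∫⁻ t in Set.Ioo (-1:ℝ) 1,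
              (ENNReal.ofReal |f (DTaux.phi x y t)| + ENNReal.ofReal |f (-DTaux.phi x y t)|)
                * DTaux.Wk κ t :=
            DTaux.tau_bound κ hκ x f hfm y
        _ ≤ ∫⁻ t in Set.Ioo (-1:ℝ) 1, (N + N) * DTaux.Wk κ t := by
            apply lintegral_mono
            intro t
            exact mul_le_mul_left
              (add_le_add (DTaux.pointwise_le_top hκ f hf _)
                (DTaux.pointwise_le_top hκ f hf _)) _
        _ = (N + N) * A := by
            rw [lintegral_const_mul' _ _ (ENNReal.add_ne_top.mpr ⟨hNfin, hNfin⟩), hA, DTaux.Ak]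
        _ = 2 * N * A := by rw [two_mul]
    have hmeasτ : AEStronglyMeasurable (tauK κ x f) (muK1 κ) :=
      (DTaux.tauK_measurable κ x f hfm).aestronglyMeasurable
    have hbound : eLpNorm (tauK κ x f) ⊤ (muK1 κ) ≤ 2 * N * A := by
      rw [eLpNorm_exponent_top, eLpNormEssSup]
      refine essSup_le_of_ae_le _ ?_
      apply ae_of_all
      intro y
      calc (‖tauK κ x f y‖₊ : ℝ≥0∞) = ENNReal.ofReal |tauK κ x f y| := by
            rw [← enorm_eq_nnnorm, ← ofReal_norm, Real.norm_eq_abs]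
        _ ≤ 2 * N * A := hpt y
    have hCle : (2 : ℝ≥0∞) * A ≤ ENNReal.ofReal (2 * A.toReal + 1) := by
      have h1 : (2 : ℝ≥0∞) * A = ENNReal.ofReal (2 * A.toReal) := by
        rw [ENNReal.ofReal_mul (by norm_num : (0:ℝ) ≤ 2), ENNReal.ofReal_ofNat,
          ENNReal.ofReal_toReal hAfin]
      rw [h1]
      exact ENNReal.ofReal_le_ofReal (by linarith)
    constructor
    · refine ⟨hmeasτ, lt_of_le_of_lt hbound ?_⟩
      exact ENNReal.mul_lt_top
        (ENNReal.mul_lt_top (by norm_num) hNfin.lt_top) hAfin.lt_top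
    · calc eLpNorm (tauK κ x f) ⊤ (muK1 κ) ≤ 2 * N * A := hbound
        _ = (2 * A) * N := by ring
        _ ≤ ENNReal.ofReal (2 * A.toReal + 1) * N := mul_le_mul_left hCle N
  · have hp0 : p ≠ 0 := (lt_of_lt_of_le zero_lt_one hp).ne'
    set q := p.toReal with hq
    have hq1 : (1:ℝ) ≤ q := by
      rw [hq]
      calc (1:ℝ) = (1 : ℝ≥0∞).toReal := by simp
        _ ≤ p.toReal := ENNReal.toReal_mono hptop hp
    have hq0 : (0:ℝ) < q := by linarith
    set A := DTaux.Ak κ with hA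
    have hAfin : A ≠ ⊤ := (DTaux.Ak_lt_top hκ).ne
    set D := ENNReal.ofReal (3 * Mconst κ) with hD
    set Ktot := A^(q-1) * (2^q * (D * (2 * DTaux.Bc κ))) with hK
    have hKfin : Ktot ≠ ⊤ := by
      rw [hK]
      apply ENNReal.mul_ne_top (ENNReal.rpow_ne_top_of_nonneg (by linarith) hAfin)
      apply ENNReal.mul_ne_top (ENNReal.rpow_ne_top_of_nonneg hq0.le ENNReal.ofNat_ne_top)
      apply ENNReal.mul_ne_top ENNReal.ofReal_ne_top
      exact ENNReal.mul_ne_top ENNReal.ofNat_ne_top (DTaux.Bc_lt_top hκ).ne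
    have hKq_fin : Ktot^(1/q) ≠ ⊤ :=
      ENNReal.rpow_ne_top_of_nonneg (by positivity) hKfin
    refine ⟨(Ktot^(1/q)).toReal + 1, by positivity, ?_⟩
    intro x f hf hfb hmem
    have hfm : Measurable f := hf.measurable
    set g : ℝ → ℝ≥0∞ :=
      fun z => (ENNReal.ofReal |f z|)^q + (ENNReal.ofReal |f (-z)|)^q with hg
    have hgmeas : Measurable g := by
      apply Measurable.fun_add
      · exact (ENNReal.measurable_ofReal.comp hfm.abs).pow_const q
      · exact (ENNReal.measurable_ofReal.comp ((hfm.comp measurable_neg).abs)).pow_const q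
    have hptw : ∀ y, (ENNReal.ofReal |tauK κ x f y|)^q
        ≤ A^(q-1) * (2^q * ∫⁻ t in Set.Ioo (-1:ℝ) 1, g (DTaux.phi x y t) * DTaux.Wk κ t) := by
      intro y
      set H : ℝ → ℝ≥0∞ := fun t =>
        ENNReal.ofReal |f (DTaux.phi x y t)| + ENNReal.ofReal |f (-DTaux.phi x y t)| with hH
      have hHm : Measurable H := by
        apply Measurable.fun_add
        · exact ENNReal.measurable_ofReal.comp (hfm.comp (DTaux.measurable_phi_t x y)).abs
        · exact ENNReal.measurable_ofReal.comp
            ((hfm.comp (DTaux.measurable_phi_t x y).neg).abs)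
      calc (ENNReal.ofReal |tauK κ x f y|)^q
          ≤ (∫⁻ t in Set.Ioo (-1:ℝ) 1, H t * DTaux.Wk κ t)^q :=
            ENNReal.rpow_le_rpow (DTaux.tau_bound κ hκ x f hfm y) hq0.le
        _ ≤ (∫⁻ t in Set.Ioo (-1:ℝ) 1, H t ^ q * DTaux.Wk κ t) *
              (∫⁻ t in Set.Ioo (-1:ℝ) 1, DTaux.Wk κ t)^(q-1) :=
            DTaux.holder_pow _ q hq1 H (DTaux.Wk κ) hHm DTaux.measurable_Wk
        _ = A^(q-1) * ∫⁻ t in Set.Ioo (-1:ℝ) 1, H t ^ q * DTaux.Wk κ t := by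
            rw [mul_comm, hA, DTaux.Ak]
        _ ≤ A^(q-1) * (2^q * ∫⁻ t in Set.Ioo (-1:ℝ) 1, g (DTaux.phi x y t) * DTaux.Wk κ t) := by
            apply mul_le_mul_right
            rw [← lintegral_const_mul' _ _
              (ENNReal.rpow_ne_top_of_nonneg hq0.le ENNReal.ofNat_ne_top)]
            apply lintegral_mono
            intro t
            calc H t ^ q * DTaux.Wk κ t
                ≤ (2^q * g (DTaux.phi x y t)) * DTaux.Wk κ t :=
                  mul_le_mul_left
                    (DTaux.pow_add_le (ENNReal.ofReal |f (DTaux.phi x y t)|)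
                      (ENNReal.ofReal |f (-DTaux.phi x y t)|) q hq1) _
              _ = 2^q * (g (DTaux.phi x y t) * DTaux.Wk κ t) := by rw [mul_assoc]
    have hWk_wB : ∀ y, (∫⁻ t in Set.Ioo (-1:ℝ) 1, g (DTaux.phi x y t) * DTaux.Wk κ t)
        ≤ D * ∫⁻ t in Set.Ioo (-1:ℝ) 1, g (DTaux.phi x y t) * DTaux.wB κ t := by
      intro y
      rw [← lintegral_const_mul' _ _ ENNReal.ofReal_ne_top]
      refine setLIntegral_mono' measurableSet_Ioo (fun t ht => ?_)
      calc g (DTaux.phi x y t) * DTaux.Wk κ t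
          ≤ g (DTaux.phi x y t) * (D * DTaux.wB κ t) :=
            mul_le_mul_right (DTaux.Wk_le hκ ht) _
        _ = D * (g (DTaux.phi x y t) * DTaux.wB κ t) := by ring
    have hint : ∫⁻ y, (ENNReal.ofReal |tauK κ x f y|)^q ∂(muK1 κ)
        ≤ Ktot * ∫⁻ z, (ENNReal.ofReal |f z|)^q ∂(muK1 κ) := by
      calc ∫⁻ y, (ENNReal.ofReal |tauK κ x f y|)^q ∂(muK1 κ)
          ≤ ∫⁻ y, A^(q-1) * (2^q * ∫⁻ t in Set.Ioo (-1:ℝ) 1,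
              g (DTaux.phi x y t) * DTaux.Wk κ t) ∂(muK1 κ) := lintegral_mono hptw
        _ = A^(q-1) * (2^q * ∫⁻ y, (∫⁻ t in Set.Ioo (-1:ℝ) 1,
              g (DTaux.phi x y t) * DTaux.Wk κ t) ∂(muK1 κ)) := by
            rw [lintegral_const_mul' _ _ (ENNReal.rpow_ne_top_of_nonneg (by linarith) hAfin)]
            congr 1
            rw [lintegral_const_mul' _ _
              (ENNReal.rpow_ne_top_of_nonneg hq0.le ENNReal.ofNat_ne_top)]
        _ ≤ A^(q-1) * (2^q * (D * ∫⁻ y, (∫⁻ t in Set.Ioo (-1:ℝ) 1,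
              g (DTaux.phi x y t) * DTaux.wB κ t) ∂(muK1 κ))) := by
            apply mul_le_mul_right
            apply mul_le_mul_right
            rw [← lintegral_const_mul' _ _ ENNReal.ofReal_ne_top]
            exact lintegral_mono (fun y => le_trans (hWk_wB y) (le_of_eq rfl))
        _ = A^(q-1) * (2^q * (D * (2 * DTaux.Bc κ *
              ∫⁻ z in Set.Ioi (0:ℝ), g z * ENNReal.ofReal (z^(2*κ))))) := by
            rw [DTaux.kernelMassAll κ x g hgmeas]
        _ = Ktot * ∫⁻ z, (ENNReal.ofReal |f z|)^q ∂(muK1 κ) := by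
            rw [show (∫⁻ z in Set.Ioi (0:ℝ), g z * ENNReal.ofReal (z^(2*κ)))
                = ∫⁻ z, (ENNReal.ofReal |f z|)^q ∂(muK1 κ) from DTaux.ioiSum κ q f hfm,
              hK]
            ring
    have hsnorm : ∀ (h : ℝ → ℝ), eLpNorm h p (muK1 κ)
        = (∫⁻ y, (ENNReal.ofReal |h y|)^q ∂(muK1 κ))^(1/q) := by
      intro h
      rw [eLpNorm_eq_lintegral_rpow_enorm_toReal hp0 hptop]
      congr 1
      apply lintegral_congr
      intro y
      rw [← ofReal_norm, Real.norm_eq_abs]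
    have hmeasτ : AEStronglyMeasurable (tauK κ x f) (muK1 κ) :=
      (DTaux.tauK_measurable κ x f hfm).aestronglyMeasurable
    have hfin : eLpNorm f p (muK1 κ) < ⊤ := hmem.2
    have hfinal : eLpNorm (tauK κ x f) p (muK1 κ) ≤ Ktot^(1/q) * eLpNorm f p (muK1 κ) := by
      rw [hsnorm (tauK κ x f), hsnorm f]
      calc (∫⁻ y, (ENNReal.ofReal |tauK κ x f y|)^q ∂(muK1 κ))^(1/q)
          ≤ (Ktot * ∫⁻ z, (ENNReal.ofReal |f z|)^q ∂(muK1 κ))^(1/q) :=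
            ENNReal.rpow_le_rpow hint (by positivity)
        _ = Ktot^(1/q) * (∫⁻ z, (ENNReal.ofReal |f z|)^q ∂(muK1 κ))^(1/q) :=
            ENNReal.mul_rpow_of_nonneg _ _ (by positivity)
    have hCle : Ktot^(1/q) ≤ ENNReal.ofReal ((Ktot^(1/q)).toReal + 1) := by
      conv_lhs => rw [← ENNReal.ofReal_toReal hKq_fin]
      exact ENNReal.ofReal_le_ofReal (by linarith [ENNReal.toReal_nonneg (a := Ktot^(1/q))])
    constructor
    · exact ⟨hmeasτ, lt_of_le_of_lt hfinal
        (ENNReal.mul_lt_top hKq_fin.lt_top hfin)⟩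
    · exact le_trans hfinal (mul_le_mul_left hCle _)
end
end

section
/- There exists a constant C > 0, depending only on κ, such that for all x, y ∈ ℝ and every r > 0, |τ_x^κ(χ_{[−r,r]})(y)| ≤ C · μ_κ((−r,r)) / μ_κ(I(x,r)), where I(x,r) = [max{0, |x|−r}, |x|+r). -/
noncomputable section
open MeasureTheory Set Real
open scoped ENNReal NNReal

private lemma quadE_ge_add (x y t : ℝ) (ht : t ≤ 1) :
    (x+y)^2*(1+t)/2 ≤ x^2+y^2+2*x*y*t := by
  nlinarith [mul_nonneg (sub_nonneg.2 ht) (sq_nonneg (x-y))]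

private lemma quadE_ge_sub (x y t : ℝ) (ht : -1 ≤ t) :
    (x-y)^2*(1-t)/2 ≤ x^2+y^2+2*x*y*t := by
  nlinarith [mul_nonneg (by linarith : (0:ℝ) ≤ 1+t) (sq_nonneg (x+y))]

private lemma u_bound (x y t : ℝ) (ht : t ∈ Set.Ioo (-1:ℝ) 1) :
    |(x+y) / Real.sqrt (x^2+y^2+2*x*y*t)| ≤ Real.sqrt 2 / Real.sqrt (1+t) := by
  have hv : 0 < 1 + t := by linarith [ht.1]
  rcases eq_or_ne (x+y) 0 with h0 | h0
  · rw [h0]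
    simp only [zero_div, abs_zero]
    positivity
  · have hsq : 0 < (x+y)^2 := by positivity
    have hE : (x+y)^2*(1+t)/2 ≤ x^2+y^2+2*x*y*t := quadE_ge_add x y t ht.2.le
    have hEpos : 0 < x^2+y^2+2*x*y*t := lt_of_lt_of_le (by positivity) hE
    rw [abs_div, abs_of_nonneg (Real.sqrt_nonneg _)]
    rw [div_le_div_iff₀ (Real.sqrt_pos.2 hEpos) (Real.sqrt_pos.2 hv)]
    have h1 : |x+y| * Real.sqrt (1+t) = Real.sqrt ((x+y)^2*(1+t)) := by
      rw [Real.sqrt_mul (sq_nonneg _), Real.sqrt_sq_eq_abs]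
    have h2 : Real.sqrt 2 * Real.sqrt (x^2+y^2+2*x*y*t)
        = Real.sqrt (2*(x^2+y^2+2*x*y*t)) := (Real.sqrt_mul (by norm_num) _).symm
    rw [h1, h2]
    exact Real.sqrt_le_sqrt (by nlinarith)

private lemma rpow_window (w e : ℝ) (h1 : 1 ≤ w) (h2 : w ≤ 2) : w^e ≤ max 1 ((2:ℝ)^e) := by
  rcases le_or_gt 0 e with he | he
  · exact le_max_of_le_right (Real.rpow_le_rpow (by linarith) h2 he)
  · exact le_max_of_le_left (Real.rpow_le_one_of_one_le_of_nonpos h1 he.le)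

private lemma phi_rearrange (κ t : ℝ) (hv : 0 < 1+t) (hw : 0 < 1-t) :
    (1/Real.sqrt (1+t)) * ((1+t)*(1-t^2)^(κ-1)) = (1+t)^(κ-1/2)*(1-t)^(κ-1) := by
  have h12 : (1:ℝ)-t^2 = (1+t)*(1-t) := by ring
  have key : (1+t)^(κ-1/2) * (1+t)^((1:ℝ)/2) = (1+t) * (1+t)^(κ-1) := by
    have h1 : (1+t) * (1+t)^(κ-1) = (1+t)^(1+(κ-1)) := by
      rw [Real.rpow_add hv, Real.rpow_one]
    rw [h1, ← Real.rpow_add hv]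
    norm_num
  have hpos : (0:ℝ) < (1+t)^((1:ℝ)/2) := Real.rpow_pos_of_pos hv _
  rw [h12, Real.mul_rpow hv.le hw.le, Real.sqrt_eq_rpow]
  have h2 : 1/(1+t)^((1:ℝ)/2) * ((1+t) * ((1+t)^(κ-1) * (1-t)^(κ-1)))
      = ((1+t) * (1+t)^(κ-1)) * (1-t)^(κ-1) / (1+t)^((1:ℝ)/2) := by ring
  rw [h2, ← key]
  field_simp

private lemma lint_shift (p : ℝ) (hp : -1 < p) (α c : ℝ) (hα : 0 < α) (hc : 0 ≤ c) :
    ∫⁻ t in Set.Ioc (-1 : ℝ) (-1+α), ENNReal.ofReal (c*(1+t)^p) ≤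
      ENNReal.ofReal (c*(α^(p+1)/(p+1))) := by
  have hle : (-1:ℝ) ≤ -1+α := by linarith
  have hInt0 : IntervalIntegrable (fun s : ℝ => s ^ p) volume 0 α :=
    intervalIntegral.intervalIntegrable_rpow' hp
  have hInt1 : IntervalIntegrable (fun t : ℝ => (1+t) ^ p) volume (-1) (-1+α) := by
    have h := hInt0.comp_add_right 1
    simp only [zero_sub] at h
    have hfe : (fun t : ℝ => (1+t)^p) = (fun x : ℝ => (x+1)^p) := by
      funext t; rw [add_comm]
    rw [show (-1:ℝ)+α = α - 1 by ring, hfe]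
    exact h
  have hInt : IntegrableOn (fun t : ℝ => c*(1+t)^p) (Set.Ioc (-1:ℝ) (-1+α)) volume := by
    have := (hInt1.const_mul c)
    rw [intervalIntegrable_iff_integrableOn_Ioc_of_le hle] at this
    exact this
  have hnn : 0 ≤ᵐ[volume.restrict (Set.Ioc (-1:ℝ) (-1+α))] fun t : ℝ => c*(1+t)^p := by
    refine (ae_restrict_iff' measurableSet_Ioc).2 (Filter.Eventually.of_forall fun t ht => ?_)
    have : (0:ℝ) ≤ 1+t := by linarith [ht.1]
    exact mul_nonneg hc (Real.rpow_nonneg this p)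
  rw [← ofReal_integral_eq_lintegral_ofReal hInt hnn]
  apply ENNReal.ofReal_le_ofReal
  rw [← intervalIntegral.integral_of_le hle, intervalIntegral.integral_const_mul]
  have hcv : ∫ t in (-1:ℝ)..(-1+α), (1+t)^p = ∫ s in (0:ℝ)..α, s^p := by
    have h := intervalIntegral.integral_comp_add_right (a := (-1:ℝ)) (b := -1+α)
      (fun s : ℝ => s^p) 1
    rw [show (-1:ℝ)+1 = 0 by ring, show (-1:ℝ)+α+1 = α by ring] at h
    have hfe : (fun t : ℝ => (1+t)^p) = (fun x : ℝ => (x+1)^p) := by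
      funext t; rw [add_comm]
    rw [hfe]
    exact h
  rw [hcv, integral_rpow (Or.inl hp), Real.zero_rpow (by linarith : p+1 ≠ 0)]
  apply le_of_eq; ring

private lemma lint_shift' (q : ℝ) (hq : -1 < q) (β c : ℝ) (hβ : 0 < β) (hc : 0 ≤ c) :
    ∫⁻ t in Set.Ico (1-β : ℝ) 1, ENNReal.ofReal (c*(1-t)^q) ≤
      ENNReal.ofReal (c*(β^(q+1)/(q+1))) := by
  have hle : (1-β:ℝ) ≤ 1 := by linarith
  rw [MeasureTheory.restrict_Ico_eq_restrict_Ioc]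
  have hInt0 : IntervalIntegrable (fun s : ℝ => s ^ q) volume 0 β :=
    intervalIntegral.intervalIntegrable_rpow' hq
  have hInt1 : IntervalIntegrable (fun t : ℝ => (1-t) ^ q) volume (1-β) 1 := by
    have h := hInt0.comp_sub_left 1
    simpa using h.symm
  have hInt : IntegrableOn (fun t : ℝ => c*(1-t)^q) (Set.Ioc (1-β:ℝ) 1) volume := by
    have := (hInt1.const_mul c)
    rw [intervalIntegrable_iff_integrableOn_Ioc_of_le hle] at this
    exact this
  have hnn : 0 ≤ᵐ[volume.restrict (Set.Ioc (1-β:ℝ) 1)] fun t : ℝ => c*(1-t)^q := by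
    refine (ae_restrict_iff' measurableSet_Ioc).2 (Filter.Eventually.of_forall fun t ht => ?_)
    have : (0:ℝ) ≤ 1-t := by linarith [ht.2]
    exact mul_nonneg hc (Real.rpow_nonneg this q)
  rw [← ofReal_integral_eq_lintegral_ofReal hInt hnn]
  apply ENNReal.ofReal_le_ofReal
  rw [← intervalIntegral.integral_of_le hle, intervalIntegral.integral_const_mul]
  have hcv : ∫ t in (1-β:ℝ)..1, (1-t)^q = ∫ s in (0:ℝ)..β, s^q := by
    have h := intervalIntegral.integral_comp_sub_left (a := (1-β:ℝ)) (b := 1)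
      (fun s : ℝ => s^q) 1
    rw [show (1:ℝ)-1 = 0 by ring, show (1:ℝ)-(1-β) = β by ring] at h
    exact h
  rw [hcv, integral_rpow (Or.inl hq), Real.zero_rpow (by linarith : q+1 ≠ 0)]
  apply le_of_eq; ring

private lemma key_bound (κ : ℝ) (hκ : 0 < κ) (r aa : ℝ) (hr : 0 < r) (ha : 0 ≤ aa)
    (s s' : ℝ) (hs : 0 ≤ s) (hsum : 2*aa^2 ≤ s + s') (hs' : s' ≤ 2*r^2)
    (e : ℝ) (he : κ ≤ e) :
    (if s ≤ 2*r^2 then (1:ℝ) else 2*r^2/s) ^ e ≤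
      (4*6^(2*κ)*2^κ) * (((r/2)^(2*κ)*(r/2))/((aa+r)^(2*κ)*(2*r))) := by
  set γ := if s ≤ 2*r^2 then (1:ℝ) else 2*r^2/s with hγdef
  have hγ0 : 0 < γ := by
    rw [hγdef]; split
    · norm_num
    · next h => exact div_pos (by positivity) (lt_trans (by positivity) (lt_of_not_ge h))
  have hγ1 : γ ≤ 1 := by
    rw [hγdef]; split
    · exact le_refl 1
    · next h =>
        exact (div_le_one (lt_trans (by positivity) (lt_of_not_ge h))).2 (le_of_not_ge h)
  have h1 : γ^e ≤ γ^κ := Real.rpow_le_rpow_of_exponent_ge hγ0 hγ1 he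
  have hDpos : 0 < (aa+r)^(2*κ)*(2*r) := by positivity
  have h2κ : (1:ℝ) ≤ (2:ℝ)^κ := by
    have := Real.rpow_le_rpow_of_exponent_le (by norm_num : (1:ℝ) ≤ 2) hκ.le
    simpa using this
  rcases le_or_gt aa (2*r) with har | har
  · -- near case
    have h2 : γ^κ ≤ 1 := Real.rpow_le_one hγ0.le hγ1 hκ.le
    refine le_trans h1 (le_trans h2 ?_)
    have hDle : (aa+r)^(2*κ)*(2*r) ≤ (6^(2*κ)*((r/2)^(2*κ)))*(2*r) := by
      have h3 : (6:ℝ)^(2*κ)*((r/2)^(2*κ)) = (3*r)^(2*κ) := by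
        rw [← Real.mul_rpow (by norm_num) (by positivity)]
        ring_nf
      rw [h3]
      exact mul_le_mul_of_nonneg_right
        (Real.rpow_le_rpow (by positivity) (by linarith) (by positivity)) (by positivity)
    have hstep : ((r/2)^(2*κ)*(r/2))/((6^(2*κ)*((r/2)^(2*κ)))*(2*r)) ≤
        ((r/2)^(2*κ)*(r/2))/((aa+r)^(2*κ)*(2*r)) :=
      div_le_div_of_nonneg_left (by positivity) hDpos hDle
    have hval : 4*6^(2*κ)*2^κ * (((r/2)^(2*κ)*(r/2))/((6^(2*κ)*((r/2)^(2*κ)))*(2*r)))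
        = (2:ℝ)^κ := by
      have hP2 : ((r:ℝ)/2)^(2*κ) ≠ 0 := by positivity
      have hP6 : ((6:ℝ))^(2*κ) ≠ 0 := by positivity
      field_simp
      ring
    calc (1:ℝ) ≤ (2:ℝ)^κ := h2κ
      _ = 4*6^(2*κ)*2^κ * (((r/2)^(2*κ)*(r/2))/((6^(2*κ)*((r/2)^(2*κ)))*(2*r))) := hval.symm
      _ ≤ _ := mul_le_mul_of_nonneg_left hstep (by positivity)
  · -- far case
    have haa : 0 < aa := by linarith
    have hs2 : 2*r^2 < s := by nlinarith
    have hγ : γ = 2*r^2/s := if_neg (not_le.2 hs2)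
    have hsaa : aa^2 ≤ s := by nlinarith
    have hγle : γ ≤ 2*r^2/aa^2 := by
      rw [hγ]
      exact div_le_div_of_nonneg_left (by positivity) (by positivity) hsaa
    have h4 : γ^κ ≤ (2*r^2/aa^2)^κ := Real.rpow_le_rpow hγ0.le hγle hκ.le
    refine le_trans h1 (le_trans h4 ?_)
    have hδ : (2*r^2/aa^2 : ℝ) = 2*(r/aa)^2 := by field_simp
    have h5 : (2*r^2/aa^2 : ℝ)^κ = 2^κ * ((r/aa)^(2*κ)) := by
      rw [hδ, Real.mul_rpow (by norm_num) (by positivity)]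
      congr 1
      rw [← Real.rpow_natCast (r/aa) 2, ← Real.rpow_mul (by positivity)]
      ring_nf
    rw [h5]
    rw [show (4:ℝ)*6^(2*κ)*2^κ = 2^κ*(4*6^(2*κ)) by ring, mul_assoc]
    apply mul_le_mul_of_nonneg_left _ (by positivity : (0:ℝ) ≤ (2:ℝ)^κ)
    rw [← mul_div_assoc, le_div_iff₀ hDpos]
    have hD2 : (aa+r)^(2*κ) ≤ ((3/2)*aa)^(2*κ) :=
      Real.rpow_le_rpow (by positivity) (by linarith) (by positivity)
    have hcomb : (r/aa)^(2*κ) * (((3/2:ℝ)*aa)^(2*κ)) = ((3/2:ℝ)*r)^(2*κ) := by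
      rw [← Real.mul_rpow (by positivity) (by positivity)]
      congr 1
      field_simp
    have hRHSeq : 4*6^(2*κ)*((r/2)^(2*κ)*(r/2)) = (3*r)^(2*κ)*(2*r) := by
      have h3 : (6:ℝ)^(2*κ)*((r/2)^(2*κ)) = (3*r)^(2*κ) := by
        rw [← Real.mul_rpow (by norm_num) (by positivity)]
        ring_nf
      calc 4*6^(2*κ)*((r/2)^(2*κ)*(r/2)) = (6^(2*κ)*((r/2)^(2*κ)))*(4*(r/2)) := by ring
        _ = (3*r)^(2*κ)*(2*r) := by rw [h3]; ring
    rw [hRHSeq]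
    calc (r/aa)^(2*κ) * ((aa+r)^(2*κ)*(2*r))
        ≤ (r/aa)^(2*κ) * ((((3/2:ℝ)*aa)^(2*κ))*(2*r)) := by
          apply mul_le_mul_of_nonneg_left
            (mul_le_mul_of_nonneg_right hD2 (by positivity)) (by positivity)
      _ = ((3/2:ℝ)*r)^(2*κ)*(2*r) := by rw [← mul_assoc, hcomb]
      _ ≤ (3*r)^(2*κ)*(2*r) :=
          mul_le_mul_of_nonneg_right
            (Real.rpow_le_rpow (by positivity) (by linarith) (by positivity)) (by positivity)

private lemma num_lower (κ r : ℝ) (hκ : 0 < κ) (hr : 0 < r) :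
    ENNReal.ofReal ((r/2)^(2*κ)*(r/2)) ≤ muK1 κ (Set.Ioo (-r) r) := by
  rw [muK1, withDensity_apply _ measurableSet_Ioo]
  calc ENNReal.ofReal ((r/2)^(2*κ)*(r/2))
      = ∫⁻ _ in Set.Ioo (r/2) r, ENNReal.ofReal ((r/2)^(2*κ)) := by
        rw [setLIntegral_const, Real.volume_Ioo, show r - r/2 = r/2 by ring,
          ← ENNReal.ofReal_mul (by positivity)]
    _ ≤ ∫⁻ z in Set.Ioo (r/2) r, ENNReal.ofReal (|z|^(2*κ)) := by
        refine setLIntegral_mono' measurableSet_Ioo fun z hz => ?_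
        apply ENNReal.ofReal_le_ofReal
        have h1 : 0 < z := lt_trans (by positivity) hz.1
        rw [abs_of_pos h1]
        exact Real.rpow_le_rpow (by positivity) hz.1.le (by positivity)
    _ ≤ ∫⁻ z in Set.Ioo (-r) r, ENNReal.ofReal (|z|^(2*κ)) := by
        apply lintegral_mono_set
        intro z hz
        exact ⟨by linarith [hz.1], hz.2⟩

private lemma num_upper (κ r : ℝ) (hκ : 0 < κ) (hr : 0 < r) :
    muK1 κ (Set.Ioo (-r) r) ≤ ENNReal.ofReal (r^(2*κ)) * ENNReal.ofReal (2*r) := by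
  rw [muK1, withDensity_apply _ measurableSet_Ioo]
  calc ∫⁻ z in Set.Ioo (-r) r, ENNReal.ofReal (|z|^(2*κ))
      ≤ ∫⁻ _ in Set.Ioo (-r) r, ENNReal.ofReal (r^(2*κ)) := by
        refine setLIntegral_mono' measurableSet_Ioo fun z hz => ?_
        exact ENNReal.ofReal_le_ofReal
          (Real.rpow_le_rpow (abs_nonneg z) (abs_le.2 ⟨hz.1.le, hz.2.le⟩) (by positivity))
    _ = ENNReal.ofReal (r^(2*κ)) * ENNReal.ofReal (2*r) := by
        rw [setLIntegral_const, Real.volume_Ioo, show r - -r = 2*r by ring]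

private lemma den_upper (κ x r : ℝ) (hκ : 0 < κ) (hr : 0 < r) :
    muK1 κ (Iset x r) ≤ ENNReal.ofReal ((|x|+r)^(2*κ)) * ENNReal.ofReal (2*r) := by
  rw [muK1, Iset, withDensity_apply _ measurableSet_Ico]
  calc ∫⁻ z in Set.Ico (max 0 (|x|-r)) (|x|+r), ENNReal.ofReal (|z|^(2*κ))
      ≤ ∫⁻ _ in Set.Ico (max 0 (|x|-r)) (|x|+r), ENNReal.ofReal ((|x|+r)^(2*κ)) := by
        refine setLIntegral_mono' measurableSet_Ico fun z hz => ?_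
        have h0 : 0 ≤ z := le_trans (le_max_left 0 _) hz.1
        exact ENNReal.ofReal_le_ofReal
          (Real.rpow_le_rpow (abs_nonneg z) (by rw [abs_of_nonneg h0]; exact hz.2.le)
            (by positivity))
    _ ≤ ENNReal.ofReal ((|x|+r)^(2*κ)) * ENNReal.ofReal (2*r) := by
        rw [setLIntegral_const, Real.volume_Ico]
        apply mul_le_mul_right
        apply ENNReal.ofReal_le_ofReal
        linarith [le_max_right 0 (|x|-r)]

private lemma den_lower (κ x r : ℝ) (hκ : 0 < κ) (hr : 0 < r) :
    0 < muK1 κ (Iset x r) := by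
  set m := max (|x|-r) ((|x|+r)/2) with hm
  have hxr : 0 < |x|+r := by positivity
  have hm2 : m < |x|+r := max_lt (by linarith) (by linarith)
  have hm0 : 0 < m := lt_of_lt_of_le (by positivity) (le_max_right _ _)
  have hlow : ENNReal.ofReal (((|x|+r)/2)^(2*κ)) * ENNReal.ofReal ((|x|+r) - m) ≤
      muK1 κ (Iset x r) := by
    rw [muK1, Iset, withDensity_apply _ measurableSet_Ico]
    calc ENNReal.ofReal (((|x|+r)/2)^(2*κ)) * ENNReal.ofReal ((|x|+r) - m)
        = ∫⁻ _ in Set.Ioo m (|x|+r), ENNReal.ofReal (((|x|+r)/2)^(2*κ)) := by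
          rw [setLIntegral_const, Real.volume_Ioo]
      _ ≤ ∫⁻ z in Set.Ioo m (|x|+r), ENNReal.ofReal (|z|^(2*κ)) := by
          refine setLIntegral_mono' measurableSet_Ioo fun z hz => ?_
          have h1 : 0 < z := lt_trans hm0 hz.1
          apply ENNReal.ofReal_le_ofReal
          rw [abs_of_pos h1]
          refine Real.rpow_le_rpow (by positivity) ?_ (by positivity)
          exact le_trans (le_max_right _ _) hz.1.le
      _ ≤ ∫⁻ z in Set.Ico (max 0 (|x|-r)) (|x|+r), ENNReal.ofReal (|z|^(2*κ)) := by
          apply lintegral_mono_set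
          intro z hz
          have h1 : 0 < z := lt_trans hm0 hz.1
          exact ⟨max_le h1.le (le_trans (le_max_left _ _) hz.1.le), hz.2⟩
  refine lt_of_lt_of_le ?_ hlow
  apply ENNReal.mul_pos <;> simp [ENNReal.ofReal_pos] <;> [positivity; linarith]

private def Gfun (κ c₀ x y r : ℝ) (t : ℝ) : ℝ :=
  if x^2+y^2+2*x*y*t ≤ r^2 then c₀*((1+t)^(κ-1/2)*(1-t)^(κ-1)) else 0

private lemma piece1_bound (κ x y r c₀ : ℝ) (hκ : 0 < κ) (hr : 0 < r) (hc₀ : 0 ≤ c₀) :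
    ∫⁻ t in Set.Ioc (-1:ℝ) 0, ENNReal.ofReal (Gfun κ c₀ x y r t) ≤
      ENNReal.ofReal (c₀*(max 1 ((2:ℝ)^(κ-1)))*
        ((4*6^(2*κ)*2^κ) * (((r/2)^(2*κ)*(r/2))/((|x|+r)^(2*κ)*(2*r))))/(κ-1/2+1)) := by
  set c₁ : ℝ := max 1 ((2:ℝ)^(κ-1)) with hc₁
  have hc₁p : (0:ℝ) < c₁ := lt_of_lt_of_le one_pos (le_max_left _ _)
  set Kρ : ℝ := (4*6^(2*κ)*2^κ) * (((r/2)^(2*κ)*(r/2))/((|x|+r)^(2*κ)*(2*r))) with hKρ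
  have hKρ0 : 0 ≤ Kρ := by
    apply mul_nonneg (by positivity)
    apply div_nonneg
    · exact mul_nonneg (Real.rpow_nonneg (by linarith) _) (by linarith)
    · exact mul_nonneg (Real.rpow_nonneg (by positivity) _) (by linarith)
  by_cases hsm : (x-y)^2 ≤ 2*r^2
  · set α : ℝ := if (x+y)^2 ≤ 2*r^2 then (1:ℝ) else 2*r^2/(x+y)^2 with hα
    have hα0 : 0 < α := by
      rw [hα]; split
      · norm_num
      · next h => exact div_pos (by positivity) (lt_trans (by positivity) (lt_of_not_ge h))
    have hpt : ∀ t ∈ Set.Ioc (-1:ℝ) 0, ENNReal.ofReal (Gfun κ c₀ x y r t) ≤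
        (Set.Ioc (-1:ℝ) (-1+α)).indicator
          (fun t => ENNReal.ofReal (c₀*c₁*(1+t)^(κ-1/2))) t := by
      intro t ht
      rw [Gfun]
      by_cases hEr : x^2+y^2+2*x*y*t ≤ r^2
      · rw [if_pos hEr]
        have hv : 0 < 1+t := by linarith [ht.1]
        have h1t : 1+t ≤ α := by
          rw [hα]; split
          · linarith [ht.2]
          · next h =>
              have hp : (0:ℝ) < (x+y)^2 := lt_trans (by positivity) (lt_of_not_ge h)
              have hq := quadE_ge_add x y t (by linarith [ht.2] : t ≤ 1)
              rw [le_div_iff₀ hp]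
              nlinarith
        have htmem : t ∈ Set.Ioc (-1:ℝ) (-1+α) := ⟨ht.1, by linarith⟩
        rw [Set.indicator_of_mem htmem]
        apply ENNReal.ofReal_le_ofReal
        have hwnd : (1-t)^(κ-1) ≤ c₁ :=
          rpow_window _ _ (by linarith [ht.2]) (by linarith [ht.1])
        have hrp : (0:ℝ) ≤ (1+t)^(κ-1/2) := Real.rpow_nonneg hv.le _
        calc c₀*((1+t)^(κ-1/2)*(1-t)^(κ-1))
            = ((1-t)^(κ-1)) * (c₀ * (1+t)^(κ-1/2)) := by ring
          _ ≤ c₁ * (c₀*(1+t)^(κ-1/2)) :=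
              mul_le_mul_of_nonneg_right hwnd (by positivity)
          _ = c₀*c₁*(1+t)^(κ-1/2) := by ring
      · rw [if_neg hEr]
        simp only [ENNReal.ofReal_zero]
        exact zero_le
    calc ∫⁻ t in Set.Ioc (-1:ℝ) 0, ENNReal.ofReal (Gfun κ c₀ x y r t)
        ≤ ∫⁻ t in Set.Ioc (-1:ℝ) 0, (Set.Ioc (-1:ℝ) (-1+α)).indicator
            (fun t => ENNReal.ofReal (c₀*c₁*(1+t)^(κ-1/2))) t :=
          setLIntegral_mono' measurableSet_Ioc hpt
      _ = ∫⁻ t in Set.Ioc (-1:ℝ) (-1+α) ∩ Set.Ioc (-1:ℝ) 0,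
            ENNReal.ofReal (c₀*c₁*(1+t)^(κ-1/2)) := by
          rw [lintegral_indicator measurableSet_Ioc, Measure.restrict_restrict measurableSet_Ioc]
      _ ≤ ∫⁻ t in Set.Ioc (-1:ℝ) (-1+α), ENNReal.ofReal (c₀*c₁*(1+t)^(κ-1/2)) :=
          lintegral_mono_set Set.inter_subset_left
      _ ≤ ENNReal.ofReal ((c₀*c₁)*(α^(κ-1/2+1)/(κ-1/2+1))) :=
          lint_shift (κ-1/2) (by linarith) α (c₀*c₁) hα0 (by positivity)
      _ ≤ ENNReal.ofReal (c₀*c₁*Kρ/(κ-1/2+1)) := by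
          apply ENNReal.ofReal_le_ofReal
          have hkey := key_bound κ hκ r |x| hr (abs_nonneg x) ((x+y)^2) ((x-y)^2)
            (sq_nonneg _) (by nlinarith [sq_abs x, sq_nonneg y]) hsm (κ-1/2+1) (by linarith)
          rw [← hα, ← hKρ] at hkey
          have he1 : (0:ℝ) < κ-1/2+1 := by linarith
          calc c₀*c₁*(α^(κ-1/2+1)/(κ-1/2+1))
              = (c₀*c₁)*α^(κ-1/2+1)/(κ-1/2+1) := by ring
            _ ≤ c₀*c₁*Kρ/(κ-1/2+1) := by gcongr
  · have hpt : ∀ t ∈ Set.Ioc (-1:ℝ) 0, ENNReal.ofReal (Gfun κ c₀ x y r t) ≤ 0 := by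
      intro t ht
      rw [Gfun, if_neg]
      · simp
      · intro hEr
        apply hsm
        have hq := quadE_ge_sub x y t (le_of_lt ht.1)
        nlinarith [sq_nonneg (x-y), ht.2]
    calc ∫⁻ t in Set.Ioc (-1:ℝ) 0, ENNReal.ofReal (Gfun κ c₀ x y r t)
        ≤ ∫⁻ _ in Set.Ioc (-1:ℝ) 0, (0:ℝ≥0∞) := setLIntegral_mono' measurableSet_Ioc hpt
      _ = 0 := lintegral_zero
      _ ≤ _ := zero_le

private lemma piece2_bound (κ x y r c₀ : ℝ) (hκ : 0 < κ) (hr : 0 < r) (hc₀ : 0 ≤ c₀) :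
    ∫⁻ t in Set.Ioo (0:ℝ) 1, ENNReal.ofReal (Gfun κ c₀ x y r t) ≤
      ENNReal.ofReal (c₀*(max 1 ((2:ℝ)^(κ-1/2)))*
        ((4*6^(2*κ)*2^κ) * (((r/2)^(2*κ)*(r/2))/((|x|+r)^(2*κ)*(2*r))))/(κ-1+1)) := by
  set c₂ : ℝ := max 1 ((2:ℝ)^(κ-1/2)) with hc₂
  have hc₂p : (0:ℝ) < c₂ := lt_of_lt_of_le one_pos (le_max_left _ _)
  set Kρ : ℝ := (4*6^(2*κ)*2^κ) * (((r/2)^(2*κ)*(r/2))/((|x|+r)^(2*κ)*(2*r))) with hKρ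
  have hKρ0 : 0 ≤ Kρ := by
    apply mul_nonneg (by positivity)
    apply div_nonneg
    · exact mul_nonneg (Real.rpow_nonneg (by linarith) _) (by linarith)
    · exact mul_nonneg (Real.rpow_nonneg (by positivity) _) (by linarith)
  by_cases hsm : (x+y)^2 ≤ 2*r^2
  · set β : ℝ := if (x-y)^2 ≤ 2*r^2 then (1:ℝ) else 2*r^2/(x-y)^2 with hβ
    have hβ0 : 0 < β := by
      rw [hβ]; split
      · norm_num
      · next h => exact div_pos (by positivity) (lt_trans (by positivity) (lt_of_not_ge h))
    have hpt : ∀ t ∈ Set.Ioo (0:ℝ) 1, ENNReal.ofReal (Gfun κ c₀ x y r t) ≤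
        (Set.Ico (1-β:ℝ) 1).indicator
          (fun t => ENNReal.ofReal (c₀*c₂*(1-t)^(κ-1))) t := by
      intro t ht
      rw [Gfun]
      by_cases hEr : x^2+y^2+2*x*y*t ≤ r^2
      · rw [if_pos hEr]
        have hw : 0 < 1-t := by linarith [ht.2]
        have h1t : 1-t ≤ β := by
          rw [hβ]; split
          · linarith [ht.1]
          · next h =>
              have hp : (0:ℝ) < (x-y)^2 := lt_trans (by positivity) (lt_of_not_ge h)
              have hq := quadE_ge_sub x y t (by linarith [ht.1] : (-1:ℝ) ≤ t)
              rw [le_div_iff₀ hp]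
              nlinarith
        have htmem : t ∈ Set.Ico (1-β:ℝ) 1 := ⟨by linarith, ht.2⟩
        rw [Set.indicator_of_mem htmem]
        apply ENNReal.ofReal_le_ofReal
        have hwnd : (1+t)^(κ-1/2) ≤ c₂ :=
          rpow_window _ _ (by linarith [ht.1]) (by linarith [ht.2])
        have hrp : (0:ℝ) ≤ (1-t)^(κ-1) := Real.rpow_nonneg hw.le _
        calc c₀*((1+t)^(κ-1/2)*(1-t)^(κ-1))
            = ((1+t)^(κ-1/2)) * (c₀ * (1-t)^(κ-1)) := by ring
          _ ≤ c₂ * (c₀*(1-t)^(κ-1)) :=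
              mul_le_mul_of_nonneg_right hwnd (by positivity)
          _ = c₀*c₂*(1-t)^(κ-1) := by ring
      · rw [if_neg hEr]
        simp only [ENNReal.ofReal_zero]
        exact zero_le
    calc ∫⁻ t in Set.Ioo (0:ℝ) 1, ENNReal.ofReal (Gfun κ c₀ x y r t)
        ≤ ∫⁻ t in Set.Ioo (0:ℝ) 1, (Set.Ico (1-β:ℝ) 1).indicator
            (fun t => ENNReal.ofReal (c₀*c₂*(1-t)^(κ-1))) t :=
          setLIntegral_mono' measurableSet_Ioo hpt
      _ = ∫⁻ t in Set.Ico (1-β:ℝ) 1 ∩ Set.Ioo (0:ℝ) 1,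
            ENNReal.ofReal (c₀*c₂*(1-t)^(κ-1)) := by
          rw [lintegral_indicator measurableSet_Ico, Measure.restrict_restrict measurableSet_Ico]
      _ ≤ ∫⁻ t in Set.Ico (1-β:ℝ) 1, ENNReal.ofReal (c₀*c₂*(1-t)^(κ-1)) :=
          lintegral_mono_set Set.inter_subset_left
      _ ≤ ENNReal.ofReal ((c₀*c₂)*(β^(κ-1+1)/(κ-1+1))) :=
          lint_shift' (κ-1) (by linarith) β (c₀*c₂) hβ0 (by positivity)
      _ ≤ ENNReal.ofReal (c₀*c₂*Kρ/(κ-1+1)) := by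
          apply ENNReal.ofReal_le_ofReal
          have hkey := key_bound κ hκ r |x| hr (abs_nonneg x) ((x-y)^2) ((x+y)^2)
            (sq_nonneg _) (by nlinarith [sq_abs x, sq_nonneg y]) hsm (κ-1+1) (by linarith)
          rw [← hβ, ← hKρ] at hkey
          have he1 : (0:ℝ) < κ-1+1 := by linarith
          calc c₀*c₂*(β^(κ-1+1)/(κ-1+1))
              = (c₀*c₂)*β^(κ-1+1)/(κ-1+1) := by ring
            _ ≤ c₀*c₂*Kρ/(κ-1+1) := by gcongr
  · have hpt : ∀ t ∈ Set.Ioo (0:ℝ) 1, ENNReal.ofReal (Gfun κ c₀ x y r t) ≤ 0 := by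
      intro t ht
      rw [Gfun, if_neg]
      · simp
      · intro hEr
        apply hsm
        have hq := quadE_ge_add x y t (le_of_lt ht.2)
        nlinarith [sq_nonneg (x+y), ht.1]
    calc ∫⁻ t in Set.Ioo (0:ℝ) 1, ENNReal.ofReal (Gfun κ c₀ x y r t)
        ≤ ∫⁻ _ in Set.Ioo (0:ℝ) 1, (0:ℝ≥0∞) := setLIntegral_mono' measurableSet_Ioo hpt
      _ = 0 := lintegral_zero
      _ ≤ _ := zero_le

private lemma pointwise_bound (κ x y r t : ℝ) (hκ : 0 < κ) (hr : 0 < r)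
    (hM : 0 < Mconst κ) (ht : t ∈ Set.Ioo (-1:ℝ) 1) (w u : ℝ)
    (hw : w = Real.sqrt (x^2+y^2+2*x*y*t) ∨ w = -Real.sqrt (x^2+y^2+2*x*y*t))
    (hu : u = 1 + (x+y)/Real.sqrt (x^2+y^2+2*x*y*t) ∨
          u = 1 - (x+y)/Real.sqrt (x^2+y^2+2*x*y*t)) :
    ‖(Set.Icc (-r) r).indicator (1 : ℝ → ℝ) w * u * (Mconst κ * (1+t) * (1-t^2)^(κ-1))‖ ≤
      Gfun κ (2*Real.sqrt 2*Mconst κ) x y r t := by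
  have hv : 0 < 1+t := by linarith [ht.1]
  have hw' : 0 < 1-t := by linarith [ht.2]
  have h1t2 : 0 < 1-t^2 := by nlinarith
  have hΦ : 0 ≤ Mconst κ * (1+t) * (1-t^2)^(κ-1) := by
    apply mul_nonneg (mul_nonneg hM.le hv.le) (Real.rpow_nonneg h1t2.le _)
  rw [Gfun]
  by_cases hEr : x^2+y^2+2*x*y*t ≤ r^2
  · rw [if_pos hEr]
    have hsq : Real.sqrt (x^2+y^2+2*x*y*t) ≤ r := by
      rw [← Real.sqrt_sq hr.le]
      exact Real.sqrt_le_sqrt hEr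
    have hwmem : w ∈ Set.Icc (-r) r := by
      rcases hw with h | h <;> subst h <;> constructor
      · linarith [Real.sqrt_nonneg (x^2+y^2+2*x*y*t)]
      · exact hsq
      · linarith
      · linarith [Real.sqrt_nonneg (x^2+y^2+2*x*y*t)]
    rw [Set.indicator_of_mem hwmem, Pi.one_apply, one_mul, Real.norm_eq_abs, abs_mul,
      abs_of_nonneg hΦ]
    have hub : |u| ≤ 2*(Real.sqrt 2/Real.sqrt (1+t)) := by
      have h1 : |(x+y)/Real.sqrt (x^2+y^2+2*x*y*t)| ≤ Real.sqrt 2/Real.sqrt (1+t) :=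
        u_bound x y t ht
      have h2 : (1:ℝ) ≤ Real.sqrt 2/Real.sqrt (1+t) := by
        rw [le_div_iff₀ (Real.sqrt_pos.2 hv), one_mul]
        exact Real.sqrt_le_sqrt (by linarith [ht.2])
      rcases hu with h | h <;> subst h
      · calc |1 + (x+y)/Real.sqrt (x^2+y^2+2*x*y*t)|
            ≤ |(1:ℝ)| + |(x+y)/Real.sqrt (x^2+y^2+2*x*y*t)| := abs_add_le _ _
          _ ≤ 2*(Real.sqrt 2/Real.sqrt (1+t)) := by rw [abs_one]; linarith
      · calc |1 - (x+y)/Real.sqrt (x^2+y^2+2*x*y*t)|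
            ≤ |(1:ℝ)| + |(x+y)/Real.sqrt (x^2+y^2+2*x*y*t)| := abs_sub _ _
          _ ≤ 2*(Real.sqrt 2/Real.sqrt (1+t)) := by rw [abs_one]; linarith
    calc |u| * (Mconst κ * (1+t) * (1-t^2)^(κ-1))
        ≤ (2*(Real.sqrt 2/Real.sqrt (1+t))) * (Mconst κ * (1+t) * (1-t^2)^(κ-1)) :=
          mul_le_mul_of_nonneg_right hub hΦ
      _ = (2*Real.sqrt 2*Mconst κ) *
            ((1/Real.sqrt (1+t)) * ((1+t)*(1-t^2)^(κ-1))) := by ring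
      _ = (2*Real.sqrt 2*Mconst κ) * ((1+t)^(κ-1/2)*(1-t)^(κ-1)) := by
          rw [phi_rearrange κ t hv hw']
  · rw [if_neg hEr]
    have hgt : r < Real.sqrt (x^2+y^2+2*x*y*t) := by
      rw [← Real.sqrt_sq hr.le]
      exact Real.sqrt_lt_sqrt (by positivity) (lt_of_not_ge hEr)
    have hwmem : w ∉ Set.Icc (-r) r := by
      rcases hw with h | h <;> subst h <;> rw [Set.mem_Icc] <;> push_neg <;> intro h2
      · linarith
      · linarith
    rw [Set.indicator_of_notMem hwmem, zero_mul, zero_mul, norm_zero]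
/-- Abdelkefi–Sifi's sharp estimate for the Dunkl translate of an indicator. -/
theorem dunkl_translate_indicator_bound (κ : ℝ) (hκ : 0 < κ) :
    ∃ C : ℝ, 0 < C ∧ ∀ (x y r : ℝ), 0 < r →
      |tauK κ x ((Set.Icc (-r) r).indicator 1) y| ≤
        C * (muK1 κ (Set.Ioo (-r) r)).toReal / (muK1 κ (Iset x r)).toReal := by
  have hM : 0 < Mconst κ := div_pos (Real.Gamma_pos_of_pos (by linarith))
    (mul_pos (Real.Gamma_pos_of_pos hκ) (Real.Gamma_pos_of_pos (by norm_num)))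
  set c₀ : ℝ := 2*Real.sqrt 2*Mconst κ with hc₀
  have hc₀p : 0 < c₀ := by positivity
  set c₁ : ℝ := max 1 ((2:ℝ)^(κ-1)) with hc₁
  set c₂ : ℝ := max 1 ((2:ℝ)^(κ-1/2)) with hc₂
  have hc₁p : (0:ℝ) < c₁ := lt_of_lt_of_le one_pos (le_max_left _ _)
  have hc₂p : (0:ℝ) < c₂ := lt_of_lt_of_le one_pos (le_max_left _ _)
  set K : ℝ := 4*6^(2*κ)*2^κ with hKdef
  have hKp : 0 < K := by positivity
  have he₁ : (0:ℝ) < κ-1/2+1 := by linarith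
  have he₂ : (0:ℝ) < κ-1+1 := by linarith
  set C : ℝ := c₀*c₁*K/(κ-1/2+1) + c₀*c₂*K/(κ-1+1) with hCdef
  have hCpos : 0 < C :=
    add_pos (div_pos (by positivity) he₁) (div_pos (by positivity) he₂)
  refine ⟨C, hCpos, ?_⟩
  intro x y r hr
  set ρ : ℝ := ((r/2)^(2*κ)*(r/2))/((|x|+r)^(2*κ)*(2*r)) with hρdef
  have hρ0 : 0 ≤ ρ := by
    apply div_nonneg
    · exact mul_nonneg (Real.rpow_nonneg (by linarith) _) (by linarith)
    · exact mul_nonneg (Real.rpow_nonneg (by positivity) _) (by linarith)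
  -- bound on the lintegral of Gfun over (-1,1)
  have hL : (∫⁻ t in Set.Ioo (-1:ℝ) 1, ENNReal.ofReal (Gfun κ c₀ x y r t)) ≤
      ENNReal.ofReal (C * ρ) := by
    have hsplit : (∫⁻ t in Set.Ioo (-1:ℝ) 1, ENNReal.ofReal (Gfun κ c₀ x y r t)) ≤
        (∫⁻ t in Set.Ioc (-1:ℝ) 0, ENNReal.ofReal (Gfun κ c₀ x y r t)) +
          ∫⁻ t in Set.Ioo (0:ℝ) 1, ENNReal.ofReal (Gfun κ c₀ x y r t) := by
      rw [← Set.Ioc_union_Ioo_eq_Ioo (by norm_num : (-1:ℝ) ≤ 0) (by norm_num : (0:ℝ) < 1)]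
      exact lintegral_union_le _ _ _
    refine hsplit.trans ?_
    refine (add_le_add (piece1_bound κ x y r c₀ hκ hr hc₀p.le)
      (piece2_bound κ x y r c₀ hκ hr hc₀p.le)).trans ?_
    rw [← ENNReal.ofReal_add]
    · apply ENNReal.ofReal_le_ofReal
      apply le_of_eq
      have hxr : (0:ℝ) < |x|+r := by positivity
      have hA : ((|x|+r):ℝ)^(2*κ) ≠ 0 := ne_of_gt (Real.rpow_pos_of_pos hxr _)
      have hr' : r ≠ 0 := ne_of_gt hr
      have hk1 : (κ-1/2+1) ≠ 0 := ne_of_gt he₁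
      have hk2 : (κ-1+1) ≠ 0 := ne_of_gt he₂
      rw [← hρdef, ← hKdef, ← hc₁, ← hc₂, hCdef]
      field_simp
    · apply div_nonneg _ he₁.le
      exact mul_nonneg (by positivity) (mul_nonneg hKp.le hρ0)
    · apply div_nonneg _ he₂.le
      exact mul_nonneg (by positivity) (mul_nonneg hKp.le hρ0)
  have hCρ : 0 ≤ C * ρ := mul_nonneg hCpos.le hρ0
  -- bound the two integrals
  have hIbound : ∀ g : ℝ → ℝ,
      (∀ t ∈ Set.Ioo (-1:ℝ) 1, ‖g t‖ ≤ Gfun κ c₀ x y r t) →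
      |∫ t in Set.Ioo (-1:ℝ) 1, g t| ≤ C * ρ := by
    intro g hg
    have h1 : |∫ t in Set.Ioo (-1:ℝ) 1, g t| ≤
        (∫⁻ t in Set.Ioo (-1:ℝ) 1, ENNReal.ofReal ‖g t‖).toReal := by
      rw [← Real.norm_eq_abs]
      exact norm_integral_le_lintegral_norm g
    refine h1.trans ?_
    refine ENNReal.toReal_le_of_le_ofReal hCρ ?_
    refine le_trans (setLIntegral_mono' measurableSet_Ioo fun t htt =>
      ENNReal.ofReal_le_ofReal (hg t htt)) hL
  have hI1 := hIbound
    (fun t => (Set.Icc (-r) r).indicator 1 (Real.sqrt (x^2 + y^2 + 2*x*y*t)) *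
        (1 + (x + y) / Real.sqrt (x^2 + y^2 + 2*x*y*t)) *
        (Mconst κ * (1 + t) * (1 - t^2) ^ (κ - 1)))
    (fun t htt => pointwise_bound κ x y r t hκ hr hM htt _ _ (Or.inl rfl) (Or.inl rfl))
  have hI2 := hIbound
    (fun t => (Set.Icc (-r) r).indicator 1 (-Real.sqrt (x^2 + y^2 + 2*x*y*t)) *
        (1 - (x + y) / Real.sqrt (x^2 + y^2 + 2*x*y*t)) *
        (Mconst κ * (1 + t) * (1 - t^2) ^ (κ - 1)))
    (fun t htt => pointwise_bound κ x y r t hκ hr hM htt _ _ (Or.inr rfl) (Or.inr rfl))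
  have htau : |tauK κ x ((Set.Icc (-r) r).indicator 1) y| ≤ C * ρ := by
    rw [tauK]
    calc |(1/2) * (∫ t in Set.Ioo (-1:ℝ) 1,
          (Set.Icc (-r) r).indicator 1 (Real.sqrt (x^2 + y^2 + 2*x*y*t)) *
            (1 + (x + y) / Real.sqrt (x^2 + y^2 + 2*x*y*t)) *
            (Mconst κ * (1 + t) * (1 - t^2) ^ (κ - 1)))
        + (1/2) * (∫ t in Set.Ioo (-1:ℝ) 1,
          (Set.Icc (-r) r).indicator 1 (-Real.sqrt (x^2 + y^2 + 2*x*y*t)) *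
            (1 - (x + y) / Real.sqrt (x^2 + y^2 + 2*x*y*t)) *
            (Mconst κ * (1 + t) * (1 - t^2) ^ (κ - 1)))|
        ≤ |(1/2) * (∫ t in Set.Ioo (-1:ℝ) 1,
            (Set.Icc (-r) r).indicator 1 (Real.sqrt (x^2 + y^2 + 2*x*y*t)) *
              (1 + (x + y) / Real.sqrt (x^2 + y^2 + 2*x*y*t)) *
              (Mconst κ * (1 + t) * (1 - t^2) ^ (κ - 1)))|
          + |(1/2) * (∫ t in Set.Ioo (-1:ℝ) 1,
            (Set.Icc (-r) r).indicator 1 (-Real.sqrt (x^2 + y^2 + 2*x*y*t)) *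
              (1 - (x + y) / Real.sqrt (x^2 + y^2 + 2*x*y*t)) *
              (Mconst κ * (1 + t) * (1 - t^2) ^ (κ - 1)))| := abs_add_le _ _
      _ ≤ C * ρ := by
          rw [abs_mul, abs_mul]
          rw [show |(1/2 : ℝ)| = 1/2 by norm_num]
          linarith [hI1, hI2]
  -- measure comparisons
  have hden_ne_top : muK1 κ (Iset x r) ≠ ⊤ := by
    refine ne_top_of_le_ne_top ?_ (den_upper κ x r hκ hr)
    exact ENNReal.mul_ne_top ENNReal.ofReal_ne_top ENNReal.ofReal_ne_top
  have hnum_ne_top : muK1 κ (Set.Ioo (-r) r) ≠ ⊤ := by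
    refine ne_top_of_le_ne_top ?_ (num_upper κ r hκ hr)
    exact ENNReal.mul_ne_top ENNReal.ofReal_ne_top ENNReal.ofReal_ne_top
  have hdR : 0 < (muK1 κ (Iset x r)).toReal :=
    ENNReal.toReal_pos (ne_of_gt (den_lower κ x r hκ hr)) hden_ne_top
  have hdRle : (muK1 κ (Iset x r)).toReal ≤ (|x|+r)^(2*κ)*(2*r) := by
    refine ENNReal.toReal_le_of_le_ofReal ?_ ?_
    · exact mul_nonneg (Real.rpow_nonneg (by positivity) _) (by linarith)
    · refine (den_upper κ x r hκ hr).trans (le_of_eq ?_)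
      rw [← ENNReal.ofReal_mul (Real.rpow_nonneg (by positivity) _)]
  have hnR : ((r/2)^(2*κ)*(r/2)) ≤ (muK1 κ (Set.Ioo (-r) r)).toReal := by
    rw [← ENNReal.ofReal_le_iff_le_toReal hnum_ne_top]
    exact num_lower κ r hκ hr
  have hratio : ρ ≤ (muK1 κ (Set.Ioo (-r) r)).toReal / (muK1 κ (Iset x r)).toReal := by
    rw [hρdef]
    exact div_le_div₀ (ENNReal.toReal_nonneg) hnR hdR hdRle
  calc |tauK κ x ((Set.Icc (-r) r).indicator 1) y| ≤ C * ρ := htau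
    _ ≤ C * ((muK1 κ (Set.Ioo (-r) r)).toReal / (muK1 κ (Iset x r)).toReal) :=
        mul_le_mul_of_nonneg_left hratio hCpos.le
    _ = C * (muK1 κ (Set.Ioo (-r) r)).toReal / (muK1 κ (Iset x r)).toReal :=
        (mul_div_assoc _ _ _).symm
end
end

section
/- For all x, y ∈ ℝ∖{0} and every r > 0, τ_x^κ(χ_{[−r,r]})(y) = ν^{κ,+}_{x,y}([−r,r]), i.e. the Dunkl translate of the indicator of [−r,r] equals the integral of χ_{[−r,r]} against the measure ν^{κ,+}_{x,y}. -/
set_option maxHeartbeats 1000000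
noncomputable section
open MeasureTheory Set Real
open scoped ENNReal NNReal

lemma betaInt {p q : ℝ} (hp : -1 < p) (hq : -1 < q) :
    IntegrableOn (fun t => (1+t)^p * (1-t)^q) (Set.Ioo (-1:ℝ) 1) := by
  have key : ∀ p q : ℝ, -1 < p → -1 < q →
      IntegrableOn (fun t => (1+t)^p * (1-t)^q) (Set.Ioc (-1:ℝ) 0) := by
    intro p q hp hq
    have h0 := (intervalIntegral.intervalIntegrable_rpow' (a := 0) (b := 1) hp).comp_add_right 1
    rw [intervalIntegrable_iff] at h0
    have h1 : IntegrableOn (fun t : ℝ => (1+t)^p) (Set.Ioc (-1:ℝ) 0) := by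
      have : Set.uIoc (0 - 1 : ℝ) (1 - 1) = Set.Ioc (-1:ℝ) 0 := by
        rw [Set.uIoc_of_le (by norm_num)]; norm_num
      rw [this] at h0
      exact h0.congr_fun (fun t _ => by rw [add_comm]) measurableSet_Ioc
    apply Integrable.mono (h1.const_mul (max 1 ((2:ℝ)^q)))
    · apply ContinuousOn.aestronglyMeasurable _ measurableSet_Ioc
      intro t ht
      have h1t : (0:ℝ) < 1 + t := by linarith [ht.1]
      have h2t : (0:ℝ) < 1 - t := by linarith [ht.2]
      exact (((continuous_const.add continuous_id).continuousAt.rpow_const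
        (Or.inl h1t.ne')).mul ((continuous_const.sub continuous_id).continuousAt.rpow_const
        (Or.inl h2t.ne'))).continuousWithinAt
    · rw [ae_restrict_iff' measurableSet_Ioc]
      refine ae_of_all _ fun t ht => ?_
      have h1t : (0:ℝ) ≤ 1 + t := by linarith [ht.1]
      have h2t : (1:ℝ) ≤ 1 - t := by linarith [ht.2]
      have hb : (1-t)^q ≤ max 1 ((2:ℝ)^q) := by
        rcases le_or_gt 0 q with hq0 | hq0
        · exact le_max_of_le_right (Real.rpow_le_rpow (by linarith) (by linarith [ht.1]) hq0)
        · exact le_max_of_le_left (Real.rpow_le_one_of_one_le_of_nonpos h2t hq0.le)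
      rw [Real.norm_eq_abs, Real.norm_eq_abs, abs_of_nonneg
        (mul_nonneg (Real.rpow_nonneg h1t _) (Real.rpow_nonneg (by linarith) _))]
      calc (1+t)^p * (1-t)^q ≤ (1+t)^p * max 1 ((2:ℝ)^q) :=
            mul_le_mul_of_nonneg_left hb (Real.rpow_nonneg h1t _)
        _ = max 1 ((2:ℝ)^q) * (1+t)^p := by ring
        _ ≤ |max 1 ((2:ℝ)^q) * (1+t)^p| := le_abs_self _
  have hlow := key p q hp hq
  have hhigh' := key q p hq hp
  -- transfer hhigh' to Ioo 0 1 via t ↦ -t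
  have hhigh : IntegrableOn (fun t => (1+t)^p * (1-t)^q) (Set.Ioo (0:ℝ) 1) := by
    have hneg : IntegrableOn (fun t => (1+t)^q * (1-t)^p) (Set.Ioc (-1:ℝ) 0) := hhigh'
    have himg : (fun z : ℝ => -z) '' Set.Ioc (-1:ℝ) 0 = Set.Ico 0 1 := by
      ext z; simp only [Set.mem_image, Set.mem_Ioc, Set.mem_Ico]
      constructor
      · rintro ⟨w, ⟨h1, h2⟩, rfl⟩; constructor <;> linarith
      · rintro ⟨h1, h2⟩; exact ⟨-z, ⟨by linarith, by linarith⟩, by ring⟩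
    have := (integrableOn_image_iff_integrableOn_abs_deriv_smul (f := fun z : ℝ => -z)
      (f' := fun _ => (-1:ℝ)) (s := Set.Ioc (-1:ℝ) 0) measurableSet_Ioc
      (fun z _ => (hasDerivAt_neg z).hasDerivWithinAt)
      (fun a _ b _ h => by simpa using h) (fun t => (1+t)^p * (1-t)^q)).mpr ?_
    · rw [himg] at this
      exact this.mono_set Set.Ioo_subset_Ico_self
    · apply hneg.congr_fun _ measurableSet_Ioc
      intro t _
      have e1 : 1 + -t = 1 - t := by ring
      have e2 : 1 - -t = 1 + t := by ring
      simp only [smul_eq_mul, abs_neg, abs_one, one_mul, e1, e2]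
      ring
  rw [show Set.Ioo (-1:ℝ) 1 = Set.Ioc (-1) 0 ∪ Set.Ioo 0 1 from
    (Set.Ioc_union_Ioo_eq_Ioo (by norm_num) (by norm_num)).symm]
  exact hlow.union hhigh

/-- Explicit formula: the Dunkl translate of `χ_{[-r,r]}` is the measure `ν^{κ,+}_{x,y}` of `[-r,r]`. -/
theorem dunkl_translate_indicator_eq_nuPlus (κ : ℝ) (hκ : 0 < κ) :
    ∀ x y : ℝ, x ≠ 0 → y ≠ 0 → ∀ r : ℝ, 0 < r →
      tauK κ x ((Set.Icc (-r) r).indicator 1) y = (nuPlus κ x y (Set.Icc (-r) r)).toReal := by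
  intro x y hx hy r hr
  have hX : (0:ℝ) < |x| := abs_pos.mpr hx
  have hY : (0:ℝ) < |y| := abs_pos.mpr hy
  have hP : (0:ℝ) < |x| * |y| := mul_pos hX hY
  have hxy : x * y ≠ 0 := mul_ne_zero hx hy
  have habs : |x * y| = |x| * |y| := abs_mul x y
  have hM : 0 < Mconst κ := by
    unfold Mconst
    have h1 := Real.Gamma_pos_of_pos (show (0:ℝ) < κ + 1/2 by linarith)
    have h2 := Real.Gamma_pos_of_pos hκ
    have h3 := Real.Gamma_pos_of_pos (show (0:ℝ) < 1/2 by norm_num)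
    positivity
  set X := |x| with hXdef
  set Y := |y| with hYdef
  set a : ℝ := |X - Y| with hadef
  set b : ℝ := X + Y with hbdef
  have ha0 : 0 ≤ a := abs_nonneg _
  have hab : a < b := by
    rw [hadef, hbdef, abs_sub_lt_iff]; constructor <;> linarith
  set s : Set ℝ := Set.Ioo (-1:ℝ) 1 with hsdef
  set A : ℝ → ℝ := fun t => x^2 + y^2 + 2*x*y*t with hAdef
  set g : ℝ → ℝ := fun t => Real.sqrt (A t) with hgdef
  set Φ : ℝ → ℝ := fun t => Mconst κ * (1 + t) * (1 - t^2) ^ (κ - 1) with hΦdef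
  set c : ℝ → ℝ := fun t => if A t ≤ r^2 then (1:ℝ) else 0 with hcdef
  set u : ℝ → ℝ := fun t => (x + y) / Real.sqrt (A t) with hudef
  set D : ℝ → ℝ := fun z => 1/2 * Kker κ |x| |y| |z| * (1 - sigma3 x y z) * |z| ^ (2*κ)
    with hDdef
  set Dr : ℝ → ℝ := fun z => (Set.Icc (-r) r).indicator D z with hDrdef
  -- bounds on A
  have hA : ∀ t ∈ s, (X - Y)^2 < A t ∧ A t < (X + Y)^2 := by
    intro t ht
    obtain ⟨ht1, ht2⟩ := ht
    have h1 : |x*y*t| < X*Y := by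
      rw [abs_mul, habs]
      calc X*Y*|t| < X*Y*1 := by
            apply mul_lt_mul_of_pos_left _ hP
            rw [abs_lt]; exact ⟨ht1, ht2⟩
        _ = X*Y := mul_one _
    have h2 : -(X*Y) < x*y*t ∧ x*y*t < X*Y := abs_lt.mp h1
    have hx2 : X^2 = x^2 := sq_abs x
    have hy2 : Y^2 = y^2 := sq_abs y
    constructor
    · simp only [hAdef]; nlinarith [h2.1, h2.2]
    · simp only [hAdef]; nlinarith [h2.1, h2.2]
  have hApos : ∀ t ∈ s, 0 < A t := fun t ht =>
    lt_of_le_of_lt (sq_nonneg _) (hA t ht).1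
  have hgpos : ∀ t ∈ s, 0 < g t := fun t ht => Real.sqrt_pos.mpr (hApos t ht)
  have hgsq : ∀ t ∈ s, (g t)^2 = A t := fun t ht => Real.sq_sqrt (hApos t ht).le
  have hgmem : ∀ t ∈ s, g t ∈ Set.Ioo a b := by
    intro t ht
    constructor
    · rw [hadef, ← Real.sqrt_sq_eq_abs]
      exact Real.sqrt_lt_sqrt (sq_nonneg _) (hA t ht).1
    · rw [hbdef, show X + Y = Real.sqrt ((X+Y)^2) from
        (Real.sqrt_sq (by linarith)).symm]
      exact Real.sqrt_lt_sqrt (hApos t ht).le (hA t ht).2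
  have hg' : ∀ t ∈ s, HasDerivWithinAt g (x*y / g t) s t := by
    intro t ht
    have hA' : HasDerivAt A (2*x*y) t := by
      have := ((hasDerivAt_id t).const_mul (2*x*y)).const_add (x^2 + y^2)
      exact this.congr_deriv (by ring)
    have hd := (Real.hasDerivAt_sqrt (hApos t ht).ne').comp t hA'
    have he : 1 / (2 * Real.sqrt (A t)) * (2*x*y) = x*y / g t := by
      have h0 : Real.sqrt (A t) ≠ 0 := (Real.sqrt_pos.mpr (hApos t ht)).ne'
      rw [hgdef]
      field_simp
    exact (he ▸ hd).hasDerivWithinAt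
  have hinj : Set.InjOn g s := by
    intro t1 h1 t2 h2 he
    have e1 : A t1 = A t2 := by
      rw [← hgsq t1 h1, ← hgsq t2 h2, he]
    have : 2*x*y*(t1 - t2) = 0 := by simp only [hAdef] at e1; linarith
    rcases mul_eq_zero.mp this with h | h
    · exact absurd h (by simpa using hxy)
    · linarith [sub_eq_zero.mp h]
  have himg : g '' s = Set.Ioo a b := by
    apply Set.Subset.antisymm
    · rintro z ⟨t, ht, rfl⟩; exact hgmem t ht
    · rintro z ⟨hz1, hz2⟩
      have hz0 : 0 ≤ z := le_trans ha0 hz1.le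
      refine ⟨(z^2 - x^2 - y^2)/(2*x*y), ?_, ?_⟩
      · have hzsq1 : (X - Y)^2 < z^2 := by
          rw [← sq_abs (X - Y)]
          exact pow_lt_pow_left₀ hz1 (abs_nonneg _) two_ne_zero
        have hzsq2 : z^2 < (X + Y)^2 := pow_lt_pow_left₀ hz2 hz0 two_ne_zero
        have hx2 : X^2 = x^2 := sq_abs x
        have hy2 : Y^2 = y^2 := sq_abs y
        have hnum : |z^2 - x^2 - y^2| < 2*(X*Y) := by
          rw [abs_lt]
          constructor
          · nlinarith [hzsq1, sq_abs x, sq_abs y]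
          · nlinarith [hzsq2, sq_abs x, sq_abs y]
        have habs2 : |2*x*y| = 2*(X*Y) := by
          rw [abs_mul, abs_mul, abs_two]; ring
        have hlt : |(z^2 - x^2 - y^2)/(2*x*y)| < 1 := by
          rw [abs_div, habs2, div_lt_one (by positivity)]
          exact hnum
        rw [hsdef, Set.mem_Ioo]
        exact abs_lt.mp hlt
      · have hAt0 : A ((z^2 - x^2 - y^2)/(2*x*y)) = z^2 := by
          simp only [hAdef]
          field_simp
          ring
        rw [hgdef]
        simp only [hAt0]
        exact Real.sqrt_sq hz0
  have hkey : ∀ t ∈ s, |x*y / g t| * D (g t) = 1/2 * Φ t := by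
    intro t ht
    have hz0 : 0 < g t := hgpos t ht
    have hz2 : (g t)^2 = A t := hgsq t ht
    obtain ⟨haz, hzb⟩ := hgmem t ht
    have ht2 : (0:ℝ) < 1 - t^2 := by
      obtain ⟨h1, h2⟩ := ht; nlinarith
    have habsg : |g t| = g t := abs_of_pos hz0
    have hq : |x*y / g t| = X*Y / g t := by
      rw [abs_div, habs, habsg]
    have hsig : sigma3 x y (g t) = -t := by
      rw [sigma3, if_pos ⟨hx, hy⟩, hz2]
      simp only [hAdef]
      field_simp
      ring
    have htri : triArea X Y (g t) = X*Y/2 * Real.sqrt (1 - t^2) := by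
      rw [triArea]
      have hx2 : X^2 = x^2 := sq_abs x
      have hy2 : Y^2 = y^2 := sq_abs y
      have h3 : (X*Y)^2 = (x*y)^2 := by rw [← habs, sq_abs]
      have e : ((X+Y+g t)/2) * ((X+Y+g t)/2 - X) * ((X+Y+g t)/2 - Y) * ((X+Y+g t)/2 - g t)
          = ((X+Y)^2 - (g t)^2) * ((g t)^2 - (X-Y)^2) / 16 := by ring
      rw [e, hz2]
      have step1 : (X+Y)^2 - A t = 2*(X*Y) - 2*(x*y)*t := by
        simp only [hAdef]; linear_combination hx2 + hy2
      have step2 : A t - (X-Y)^2 = 2*(X*Y) + 2*(x*y)*t := by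
        simp only [hAdef]; linear_combination -hx2 - hy2
      rw [step1, step2]
      have e2 : (2*(X*Y) - 2*(x*y)*t) * (2*(X*Y) + 2*(x*y)*t) / 16
          = (X*Y/2)^2 * (1 - t^2) := by
        linear_combination (t^2/4) * h3
      rw [e2, Real.sqrt_mul (sq_nonneg _), Real.sqrt_sq (by positivity)]
    have hw : Real.sqrt (1 - t^2) = (1 - t^2) ^ ((1:ℝ)/2) := Real.sqrt_eq_rpow _
    simp only [hDdef, habsg]
    rw [Kker, if_pos (⟨haz.le, hzb.le⟩ : |X - Y| ≤ g t ∧ g t ≤ X + Y)]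
    rw [htri, hsig, hq]
    have e1 : (X*Y/2*Real.sqrt (1-t^2))^(2*κ-2)
        = (X*Y)^(2*κ-2) / (2:ℝ)^(2*κ-2) * (1-t^2)^(κ-1) := by
      rw [Real.mul_rpow (by positivity) (Real.sqrt_nonneg _),
        Real.div_rpow (by positivity) (by norm_num), hw, ← Real.rpow_mul ht2.le,
        show (1:ℝ)/2*(2*κ-2) = κ-1 by ring]
    have e2 : (X*Y*(g t))^(1-2*κ) = (X*Y)^(1-2*κ) * (g t)^(1-2*κ) :=
      Real.mul_rpow hP.le hz0.le
    have e3 : X*Y * ((X*Y)^(2*κ-2) * (X*Y)^(1-2*κ)) = 1 := by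
      rw [← Real.rpow_add hP, show 2*κ-2+(1-2*κ) = -1 by ring, Real.rpow_neg_one]
      field_simp
    have e4 : (g t)^(1-2*κ) * (g t)^(2*κ) = g t := by
      rw [← Real.rpow_add hz0, show 1-2*κ+2*κ = 1 by ring, Real.rpow_one]
    rw [e1, e2]
    have hall : X*Y*((X*Y)^(2*κ-2)*(X*Y)^(1-2*κ))*((g t)^(1-2*κ)*(g t)^(2*κ)) = g t := by
      rw [e3, e4, one_mul]
    have h2ne : ((2:ℝ))^(2*κ-2) ≠ 0 := (Real.rpow_pos_of_pos (by norm_num) _).ne'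
    have hgne : g t ≠ 0 := hz0.ne'
    simp only [hΦdef]
    field_simp
    rw [show (2:ℝ)*(κ-1) = 2*κ-2 by ring]
    linear_combination (1+t) * hall
  -- nonnegativity of the density D
  have hD0 : ∀ z : ℝ, 0 ≤ D z := by
    intro z
    simp only [hDdef]
    by_cases hcond : |X - Y| ≤ |z| ∧ |z| ≤ X + Y
    · have hsig : sigma3 x y z ≤ 1 := by
        rw [sigma3, if_pos ⟨hx, hy⟩]
        have h2 : |2*x*y| = 2*(X*Y) := by
          rw [hXdef, hYdef, abs_mul, abs_mul, abs_two]
          ring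
        have hzsq1 : (X-Y)^2 ≤ z^2 := by
          rw [← sq_abs (X-Y), ← sq_abs z]
          exact pow_le_pow_left₀ (abs_nonneg _) hcond.1 2
        have hzsq2 : z^2 ≤ (X+Y)^2 := by
          rw [← sq_abs z]
          exact pow_le_pow_left₀ (abs_nonneg _) hcond.2 2
        have hnum : |x^2 + y^2 - z^2| ≤ 2*(X*Y) := by
          rw [abs_le]
          constructor
          · nlinarith [hzsq2, sq_abs x, sq_abs y]
          · nlinarith [hzsq1, sq_abs x, sq_abs y]
        calc (x^2 + y^2 - z^2) / (2*x*y) ≤ |(x^2 + y^2 - z^2) / (2*x*y)| := le_abs_self _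
          _ = |x^2 + y^2 - z^2| / (2*(X*Y)) := by rw [abs_div, h2]
          _ ≤ 1 := (div_le_one (by positivity)).mpr hnum
      have hKnn : 0 ≤ Kker κ X Y |z| := by
        rw [Kker, if_pos hcond]
        have h1 : (0:ℝ) ≤ (2:ℝ)^(2*κ-2) := Real.rpow_nonneg (by norm_num) _
        have h2 : (0:ℝ) ≤ triArea X Y |z| ^ (2*κ-2) :=
          Real.rpow_nonneg (Real.sqrt_nonneg _) _
        have h3 : (0:ℝ) ≤ (X*Y*|z|) ^ (1-2*κ) := Real.rpow_nonneg (by positivity) _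
        have := hM.le
        positivity
      have h4 : (0:ℝ) ≤ |z| ^ (2*κ) := Real.rpow_nonneg (abs_nonneg _) _
      have h5 : (0:ℝ) ≤ 1 - sigma3 x y z := by linarith
      positivity
    · rw [Kker, if_neg hcond]
      simp
  have h1t : ∀ t ∈ s, (0:ℝ) < 1 + t ∧ (0:ℝ) < 1 - t := fun t ht =>
    ⟨by linarith [ht.1], by linarith [ht.2]⟩
  have hPhiEq : Set.EqOn (fun t => Mconst κ * ((1+t)^κ * (1-t)^(κ-1))) Φ s := by
    intro t ht
    obtain ⟨hp1, hp2⟩ := h1t t ht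
    have hk : (1+t)^κ = (1+t) * (1+t)^(κ-1) := by
      have h := Real.rpow_add hp1 1 (κ-1)
      rw [show 1 + (κ-1) = κ by ring] at h
      rw [h, Real.rpow_one]
    simp only [hΦdef]
    rw [show (1:ℝ) - t^2 = (1+t)*(1-t) by ring, Real.mul_rpow hp1.le hp2.le, hk]
    ring
  have hPhiInt : IntegrableOn Φ s :=
    MeasureTheory.IntegrableOn.congr_fun
      ((betaInt (by linarith) (by linarith)).const_mul (Mconst κ))
      hPhiEq measurableSet_Ioo
  have hPhiPos : ∀ t ∈ s, 0 ≤ Φ t := by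
    intro t ht
    obtain ⟨hp1, hp2⟩ := h1t t ht
    have hw : (0:ℝ) ≤ (1 - t^2)^(κ-1) := Real.rpow_nonneg (by nlinarith) _
    simp only [hΦdef]
    have := hM.le
    positivity
  set C1 : ℝ := (X+Y)/Real.sqrt (2*(X*Y)) with hC1def
  have hC1 : 0 ≤ C1 := by positivity
  have husq : ∀ t ∈ s, |u t| * (1+t) ≤ 2 + C1 * Real.sqrt (1+t) := by
    intro t ht
    obtain ⟨hp1, hp2⟩ := h1t t ht
    have hApos' := hApos t ht
    have hsq : 0 < Real.sqrt (A t) := Real.sqrt_pos.mpr hApos'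
    have hC1s : 0 ≤ C1 * Real.sqrt (1+t) := mul_nonneg hC1 (Real.sqrt_nonneg _)
    rcases lt_or_gt_of_ne hxy with hneg | hpos
    · have hle : (x+y)^2 ≤ A t := by
        simp only [hAdef]
        nlinarith [mul_nonneg (neg_nonneg.mpr hneg.le) (sub_nonneg.mpr ht.2.le)]
      have habs_u : |u t| ≤ 1 := by
        simp only [hudef]
        rw [abs_div, abs_of_pos hsq, div_le_one hsq]
        calc |x+y| = Real.sqrt ((x+y)^2) := (Real.sqrt_sq_eq_abs _).symm
          _ ≤ Real.sqrt (A t) := Real.sqrt_le_sqrt hle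
      calc |u t| * (1+t) ≤ 1 * (1+t) := mul_le_mul_of_nonneg_right habs_u hp1.le
        _ ≤ 2 := by linarith [ht.2]
        _ ≤ 2 + C1*Real.sqrt (1+t) := by linarith
    · have hxyP : x*y = X*Y := by rw [← habs, abs_of_pos hpos]
      have hA_ge : 2*(X*Y)*(1+t) ≤ A t := by
        rw [← hxyP]
        simp only [hAdef]
        nlinarith [sq_nonneg (x - y)]
      have hsqrtge : Real.sqrt (2*(X*Y)) * Real.sqrt (1+t) ≤ Real.sqrt (A t) := by
        rw [← Real.sqrt_mul (by positivity)]
        exact Real.sqrt_le_sqrt (by nlinarith [hA_ge])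
      have hnum : |x+y| ≤ X+Y := abs_add_le x y
      have h2pos : 0 < Real.sqrt (2*(X*Y)) * Real.sqrt (1+t) := by positivity
      have hub : |u t| ≤ (X+Y)/(Real.sqrt (2*(X*Y)) * Real.sqrt (1+t)) := by
        simp only [hudef]
        rw [abs_div, abs_of_pos hsq]
        exact div_le_div₀ (by positivity) hnum h2pos hsqrtge
      calc |u t| * (1+t)
          ≤ ((X+Y)/(Real.sqrt (2*(X*Y)) * Real.sqrt (1+t))) * (1+t) :=
            mul_le_mul_of_nonneg_right hub hp1.le
        _ = C1 * Real.sqrt (1+t) := by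
            rw [hC1def]
            have hs1 : Real.sqrt (1+t) ≠ 0 := by positivity
            have hs2 : Real.sqrt (2*(X*Y)) ≠ 0 := by positivity
            have e : (X+Y)/(Real.sqrt (2*(X*Y)) * Real.sqrt (1+t)) * (1+t)
                = (X+Y) * ((1+t)/Real.sqrt (1+t)) / Real.sqrt (2*(X*Y)) := by ring
            rw [e, Real.div_sqrt]
            ring
        _ ≤ 2 + C1*Real.sqrt (1+t) := by linarith
  set B : ℝ → ℝ := fun t => Φ t + (2 + C1*Real.sqrt (1+t)) * (Mconst κ * (1-t^2)^(κ-1))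
    with hBdef
  have hBInt : IntegrableOn B s := by
    have i1 : IntegrableOn (fun t => (1+t)^(κ-1) * (1-t)^(κ-1)) s :=
      betaInt (by linarith) (by linarith)
    have i2 : IntegrableOn (fun t => (1+t)^(κ-1/2) * (1-t)^(κ-1)) s :=
      betaInt (by linarith) (by linarith)
    have hcomb : IntegrableOn (fun t => Φ t + ((2*Mconst κ) * ((1+t)^(κ-1)*(1-t)^(κ-1))
        + (C1*Mconst κ) * ((1+t)^(κ-1/2)*(1-t)^(κ-1)))) s :=
      hPhiInt.add ((i1.const_mul _).add (i2.const_mul _))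
    apply hcomb.congr_fun _ measurableSet_Ioo
    intro t ht
    obtain ⟨hp1, hp2⟩ := h1t t ht
    have hsplit : (1 - t^2)^(κ-1) = (1+t)^(κ-1) * (1-t)^(κ-1) := by
      rw [show (1:ℝ) - t^2 = (1+t)*(1-t) by ring, Real.mul_rpow hp1.le hp2.le]
    have hhalf : Real.sqrt (1+t) * (1+t)^(κ-1) = (1+t)^(κ-1/2) := by
      rw [Real.sqrt_eq_rpow, ← Real.rpow_add hp1, show 1/2 + (κ-1) = κ-1/2 by ring]
    simp only [hBdef]
    rw [hsplit, ← hhalf]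
    ring
  have hbound : ∀ (ε : ℝ), ε = 1 ∨ ε = -1 → ∀ t ∈ s,
      |c t * (1 + ε * u t) * Φ t| ≤ B t := by
    intro ε hε t ht
    obtain ⟨hp1, hp2⟩ := h1t t ht
    have hc0 : 0 ≤ c t := by simp only [hcdef]; split <;> norm_num
    have hc1 : c t ≤ 1 := by simp only [hcdef]; split <;> norm_num
    have hΦnn := hPhiPos t ht
    have hεabs : |ε| = 1 := by rcases hε with h|h <;> simp [h]
    have h2 : |1 + ε*u t| ≤ 1 + |u t| := by
      calc |1 + ε*u t| ≤ |(1:ℝ)| + |ε*u t| := abs_add_le _ _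
        _ = 1 + |u t| := by rw [abs_one, abs_mul, hεabs, one_mul]
    have hw : (0:ℝ) ≤ (1-t^2)^(κ-1) := Real.rpow_nonneg (by nlinarith) _
    calc |c t*(1+ε*u t)*Φ t| = c t * |1+ε*u t| * Φ t := by
          rw [abs_mul, abs_mul, abs_of_nonneg hc0, abs_of_nonneg hΦnn]
      _ ≤ 1 * (1 + |u t|) * Φ t := by
          apply mul_le_mul_of_nonneg_right _ hΦnn
          exact mul_le_mul hc1 h2 (abs_nonneg _) zero_le_one
      _ = Φ t + (|u t| * (1+t)) * (Mconst κ * (1-t^2)^(κ-1)) := by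
          simp only [hΦdef]; ring
      _ ≤ Φ t + (2 + C1*Real.sqrt (1+t)) * (Mconst κ * (1-t^2)^(κ-1)) := by
          have hmm : (0:ℝ) ≤ Mconst κ * (1-t^2)^(κ-1) := mul_nonneg hM.le hw
          exact add_le_add (le_refl _) (mul_le_mul_of_nonneg_right (husq t ht) hmm)
      _ = B t := by simp only [hBdef]
  have hAmeas : Measurable A := by
    simp only [hAdef]; fun_prop
  have hcmeas : Measurable c := by
    simp only [hcdef]
    exact Measurable.ite (measurableSet_le hAmeas measurable_const)
      measurable_const measurable_const
  have hcontPhi : ContinuousOn Φ s := by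
    intro t ht
    have hw : (0:ℝ) < 1 - t^2 := by obtain ⟨h1, h2⟩ := ht; nlinarith
    apply ContinuousAt.continuousWithinAt
    simp only [hΦdef]
    exact (continuousAt_const.mul (by fun_prop)).mul
      (((continuous_const.sub (continuous_pow 2)).continuousAt).rpow_const (Or.inl hw.ne'))
  have hcontu : ContinuousOn u s := by
    intro t ht
    apply ContinuousAt.continuousWithinAt
    simp only [hudef]
    apply ContinuousAt.div continuousAt_const
    · exact (Real.continuous_sqrt.comp (by fun_prop : Continuous A)).continuousAt
    · exact (Real.sqrt_pos.mpr (hApos t ht)).ne'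
  have hint : ∀ (ε : ℝ), ε = 1 ∨ ε = -1 →
      IntegrableOn (fun t => c t * (1 + ε * u t) * Φ t) s := by
    intro ε hε
    apply Integrable.mono hBInt
    · apply AEStronglyMeasurable.mul
      apply AEStronglyMeasurable.mul hcmeas.aestronglyMeasurable
      · exact ((continuousOn_const.add (hcontu.const_smul ε)).aestronglyMeasurable
          measurableSet_Ioo)
      · exact hcontPhi.aestronglyMeasurable measurableSet_Ioo
    · rw [ae_restrict_iff' measurableSet_Ioo]
      refine ae_of_all _ fun t ht => ?_
      rw [Real.norm_eq_abs, Real.norm_eq_abs]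
      exact le_trans (hbound ε hε t ht) (le_abs_self _)
  -- indicator values
  have hindpos : ∀ t ∈ s,
      (Set.Icc (-r) r).indicator (1 : ℝ → ℝ) (Real.sqrt (A t)) = c t := by
    intro t ht
    simp only [hcdef]
    by_cases hAr : A t ≤ r^2
    · rw [if_pos hAr, Set.indicator_of_mem, Pi.one_apply]
      rw [Set.mem_Icc]
      refine ⟨le_trans (by linarith) (Real.sqrt_nonneg _), ?_⟩
      exact (Real.sqrt_le_left hr.le).mpr hAr
    · rw [if_neg hAr, Set.indicator_of_notMem]
      rw [Set.mem_Icc]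
      intro hmem
      exact hAr ((Real.sqrt_le_left hr.le).mp hmem.2)
  have hindneg : ∀ t ∈ s,
      (Set.Icc (-r) r).indicator (1 : ℝ → ℝ) (-Real.sqrt (A t)) = c t := by
    intro t ht
    simp only [hcdef]
    by_cases hAr : A t ≤ r^2
    · rw [if_pos hAr, Set.indicator_of_mem, Pi.one_apply]
      rw [Set.mem_Icc]
      refine ⟨?_, le_trans (by linarith [Real.sqrt_nonneg (A t)]) hr.le⟩
      rw [neg_le_neg_iff]
      exact (Real.sqrt_le_left hr.le).mpr hAr
    · rw [if_neg hAr, Set.indicator_of_notMem]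
      rw [Set.mem_Icc]
      intro hmem
      have h1 : Real.sqrt (A t) ≤ r := by linarith [hmem.1, neg_le_neg hmem.1]
      exact hAr ((Real.sqrt_le_left hr.le).mp h1)
  have hLHS : tauK κ x ((Set.Icc (-r) r).indicator 1) y = ∫ t in s, c t * Φ t := by
    rw [tauK]
    have e1 : (∫ t in Set.Ioo (-1:ℝ) 1,
        (Set.Icc (-r) r).indicator 1 (Real.sqrt (x^2 + y^2 + 2*x*y*t)) *
          (1 + (x + y) / Real.sqrt (x^2 + y^2 + 2*x*y*t)) *
          (Mconst κ * (1 + t) * (1 - t^2) ^ (κ - 1)))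
        = ∫ t in s, c t * (1 + 1 * u t) * Φ t := by
      apply setIntegral_congr_fun measurableSet_Ioo
      intro t ht
      dsimp only
      have hAt : x^2 + y^2 + 2*x*y*t = A t := rfl
      rw [hAt, hindpos t ht]
      simp only [hudef, hΦdef, one_mul]
    have e2 : (∫ t in Set.Ioo (-1:ℝ) 1,
        (Set.Icc (-r) r).indicator 1 (-Real.sqrt (x^2 + y^2 + 2*x*y*t)) *
          (1 - (x + y) / Real.sqrt (x^2 + y^2 + 2*x*y*t)) *
          (Mconst κ * (1 + t) * (1 - t^2) ^ (κ - 1)))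
        = ∫ t in s, c t * (1 + (-1) * u t) * Φ t := by
      apply setIntegral_congr_fun measurableSet_Ioo
      intro t ht
      dsimp only
      have hAt : x^2 + y^2 + 2*x*y*t = A t := rfl
      rw [hAt, hindneg t ht]
      simp only [hudef, hΦdef]
      ring
    rw [e1, e2]
    have hsum := integral_add (hint 1 (Or.inl rfl)) (hint (-1) (Or.inr rfl))
    have e3 : (∫ t in s, (c t * (1 + 1 * u t) * Φ t + c t * (1 + (-1) * u t) * Φ t))
        = ∫ t in s, 2 * (c t * Φ t) := by
      apply setIntegral_congr_fun measurableSet_Ioo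
      intro t _
      ring
    have e4 : (∫ t in s, 2 * (c t * Φ t)) = 2 * ∫ t in s, c t * Φ t := by
      simpa using MeasureTheory.integral_const_mul (μ := volume.restrict s) 2
        (fun t => c t * Φ t)
    have := hsum.symm.trans (e3.trans e4)
    linarith [this]
  -- integrability of D via change of variables
  have hIab : IntegrableOn D (Set.Ioo a b) := by
    rw [← himg,
      integrableOn_image_iff_integrableOn_abs_deriv_smul measurableSet_Ioo hg' hinj D]
    exact MeasureTheory.IntegrableOn.congr_fun (hPhiInt.const_mul (1/2))
      (fun t ht => by rw [smul_eq_mul, hkey t ht]) measurableSet_Ioo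
  have hDeven : ∀ z : ℝ, D (-z) = D z := by
    intro z
    have hsig : sigma3 x y (-z) = sigma3 x y z := by
      simp only [sigma3, neg_sq]
    simp only [hDdef, abs_neg, hsig]
  have himgneg : (fun z : ℝ => -z) '' Set.Ioo a b = Set.Ioo (-b) (-a) := by
    ext z; simp only [Set.mem_image, Set.mem_Ioo]
    constructor
    · rintro ⟨w, ⟨h1, h2⟩, rfl⟩; exact ⟨by linarith, by linarith⟩
    · rintro ⟨h1, h2⟩; exact ⟨-z, ⟨by linarith, by linarith⟩, by ring⟩
  have hIneg : IntegrableOn D (Set.Ioo (-b) (-a)) := by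
    rw [← himgneg,
      integrableOn_image_iff_integrableOn_abs_deriv_smul (f' := fun _ => (-1:ℝ))
        measurableSet_Ioo (fun z _ => (hasDerivAt_neg z).hasDerivWithinAt)
        (fun p _ q _ h => by simpa using h) D]
    exact MeasureTheory.IntegrableOn.congr_fun hIab
      (fun z _ => by rw [smul_eq_mul, abs_neg, abs_one, one_mul, hDeven]) measurableSet_Ioo
  set U : Set ℝ := Set.Ioo (-b) (-a) ∪ Set.Ioo a b with hUdef
  have hUmeas : MeasurableSet U := measurableSet_Ioo.union measurableSet_Ioo
  have hNnull : volume ({-b, -a, a, b} : Set ℝ) = 0 := by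
    have hcnt : ({-b, -a, a, b} : Set ℝ).Countable := by
      apply Set.Countable.insert
      apply Set.Countable.insert
      apply Set.Countable.insert
      exact Set.countable_singleton _
    exact hcnt.measure_zero _
  have hDvanish : ∀ z : ℝ, z ∉ U → z ∉ ({-b, -a, a, b} : Set ℝ) → D z = 0 := by
    intro z hzU hzN
    by_contra hD
    have hcond : |X - Y| ≤ |z| ∧ |z| ≤ X + Y := by
      by_contra hc
      apply hD
      simp only [hDdef]
      rw [Kker, if_neg hc]
      simp
    simp only [hUdef, Set.mem_union, Set.mem_Ioo, not_or, not_and_or] at hzU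
    simp only [Set.mem_insert_iff, Set.mem_singleton_iff, not_or] at hzN
    obtain ⟨hzN1, hzN2, hzN3, hzN4⟩ := hzN
    rcases le_or_gt 0 z with hz0 | hz0
    · rw [abs_of_nonneg hz0] at hcond
      obtain ⟨h1, h2⟩ := hcond
      rcases hzU.2 with h | h
      · push_neg at h; exact hzN3 (le_antisymm h h1)
      · push_neg at h; exact hzN4 (le_antisymm h2 h)
    · rw [abs_of_neg hz0] at hcond
      obtain ⟨h1, h2⟩ := hcond
      rcases hzU.1 with h | h
      · push_neg at h; exact hzN1 (le_antisymm h (by linarith))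
      · push_neg at h; exact hzN2 (le_antisymm (by linarith) (by linarith))
  have hIcompl : IntegrableOn D Uᶜ := by
    have hae : (fun _ => (0:ℝ)) =ᵐ[volume.restrict Uᶜ] D := by
      have h1 : ∀ᵐ z ∂volume.restrict Uᶜ, z ∈ Uᶜ := ae_restrict_mem hUmeas.compl
      have h2 : ∀ᵐ z ∂volume.restrict Uᶜ, z ∉ ({-b,-a,a,b} : Set ℝ) :=
        ae_restrict_of_ae (measure_eq_zero_iff_ae_notMem.mp hNnull)
      filter_upwards [h1, h2] with z hz1 hz2
      exact (hDvanish z hz1 hz2).symm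
    exact (integrable_zero _ _ _).congr hae
  have hDInt : Integrable D := by
    rw [← MeasureTheory.integrableOn_univ, ← Set.union_compl_self U]
    exact (hIneg.union hIab).union hIcompl
  have hDrInt : Integrable Dr := hDInt.indicator measurableSet_Icc
  have hRHS1 : (nuPlus κ x y (Set.Icc (-r) r)).toReal = ∫ z in Set.Icc (-r) r, D z := by
    have happ : nuPlus κ x y (Set.Icc (-r) r)
        = ∫⁻ z in Set.Icc (-r) r, ENNReal.ofReal (D z) := by
      rw [nuPlus, withDensity_apply _ measurableSet_Icc]
      rfl
    rw [happ, ← MeasureTheory.ofReal_integral_eq_lintegral_ofReal hDInt.integrableOn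
      (ae_restrict_of_ae (ae_of_all _ hD0)),
      ENNReal.toReal_ofReal (setIntegral_nonneg measurableSet_Icc fun z _ => hD0 z)]
  have hdisj : Disjoint (Set.Ioo (-b) (-a)) (Set.Ioo a b) := by
    apply Set.disjoint_left.mpr
    intro z h1 h2
    have := h1.2; have := h2.1
    linarith [ha0]
  have hsplit2 : ∫ z in Set.Icc (-r) r, D z
      = (∫ z in Set.Ioo (-b) (-a), Dr z) + ∫ z in Set.Ioo a b, Dr z := by
    rw [← MeasureTheory.integral_indicator measurableSet_Icc]
    have hae2 : (Set.Icc (-r) r).indicator D =ᵐ[volume] U.indicator Dr := by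
      have h2 : ∀ᵐ z : ℝ ∂volume, z ∉ ({-b,-a,a,b} : Set ℝ) :=
        measure_eq_zero_iff_ae_notMem.mp hNnull
      filter_upwards [h2] with z hz2
      by_cases hzU : z ∈ U
      · rw [Set.indicator_of_mem hzU]
      · rw [Set.indicator_of_notMem hzU]
        have hzero := hDvanish z hzU hz2
        simp [Set.indicator_apply, hzero]
    rw [integral_congr_ae hae2, MeasureTheory.integral_indicator hUmeas, hUdef]
    exact setIntegral_union hdisj measurableSet_Ioo hDrInt.integrableOn hDrInt.integrableOn
  have hneg_eq : ∫ z in Set.Ioo (-b) (-a), Dr z = ∫ z in Set.Ioo a b, Dr z := by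
    rw [← himgneg, integral_image_eq_integral_abs_deriv_smul (f' := fun _ => (-1:ℝ))
      measurableSet_Ioo (fun z _ => (hasDerivAt_neg z).hasDerivWithinAt)
      (fun p _ q _ h => by simpa using h) Dr]
    apply setIntegral_congr_fun measurableSet_Ioo
    intro z _
    dsimp only
    rw [smul_eq_mul, abs_neg, abs_one, one_mul]
    simp only [hDrdef]
    by_cases hmem : z ∈ Set.Icc (-r) r
    · rw [Set.mem_Icc] at hmem
      have hmem' : -z ∈ Set.Icc (-r) r := by
        rw [Set.mem_Icc]; constructor <;> linarith [hmem.1, hmem.2]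
      rw [Set.indicator_of_mem hmem', Set.indicator_of_mem (Set.mem_Icc.mpr hmem), hDeven]
    · have hmem' : -z ∉ Set.Icc (-r) r := by
        rw [Set.mem_Icc]
        intro hc
        exact hmem (Set.mem_Icc.mpr ⟨by linarith [hc.2], by linarith [hc.1]⟩)
      rw [Set.indicator_of_notMem hmem', Set.indicator_of_notMem hmem]
  have hIoo_eq : ∫ z in Set.Ioo a b, Dr z = ∫ t in s, c t * (1/2 * Φ t) := by
    rw [← himg, integral_image_eq_integral_abs_deriv_smul measurableSet_Ioo hg' hinj Dr]
    apply setIntegral_congr_fun measurableSet_Ioo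
    intro t ht
    dsimp only
    rw [smul_eq_mul]
    simp only [hDrdef]
    by_cases hAr : A t ≤ r^2
    · have hmem : g t ∈ Set.Icc (-r) r :=
        ⟨le_trans (by linarith) (Real.sqrt_nonneg _), (Real.sqrt_le_left hr.le).mpr hAr⟩
      rw [Set.indicator_of_mem hmem, hkey t ht]
      simp only [hcdef]
      rw [if_pos hAr]
      ring
    · have hmem : g t ∉ Set.Icc (-r) r := fun hc =>
        hAr ((Real.sqrt_le_left hr.le).mp hc.2)
      rw [Set.indicator_of_notMem hmem]
      simp only [hcdef]
      rw [if_neg hAr]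
      ring
  rw [hLHS, hRHS1, hsplit2, hneg_eq, hIoo_eq]
  have hhalf2 : ∫ t in s, c t * (1/2 * Φ t) = 1/2 * ∫ t in s, c t * Φ t := by
    have e : ∀ t, c t * (1/2 * Φ t) = 1/2 * (c t * Φ t) := fun t => by ring
    simp_rw [e]
    rw [show (1:ℝ)/2 = 2⁻¹ by norm_num] at *
    simpa using MeasureTheory.integral_const_mul (μ := volume.restrict s) (2⁻¹:ℝ)
      (fun t => c t * Φ t)
  rw [hhalf2]
  ring
end
end

section
/- For all x, y ∈ ℝ∖{0} and every r > 0, the Dunkl translate of the indicator of [−r,r] is nonnegative: τ_x^κ(χ_{[−r,r]})(y) ≥ 0. -/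
noncomputable section
open MeasureTheory Set Real
open scoped ENNReal NNReal

/-- Positivity of the Dunkl translate of the indicator of `[-r,r]`. -/
theorem dunkl_translate_indicator_nonneg (κ : ℝ) (hκ : 0 < κ) :
    ∀ x y : ℝ, x ≠ 0 → y ≠ 0 → ∀ r : ℝ, 0 < r →
      0 ≤ tauK κ x ((Set.Icc (-r) r).indicator 1) y := by
  
  intro x y hx hy r hr
  have hM : 0 ≤ Mconst κ := le_of_lt (by
    unfold Mconst
    exact div_pos (Real.Gamma_pos_of_pos (by linarith))
      (mul_pos (Real.Gamma_pos_of_pos hκ) (Real.Gamma_pos_of_pos (by norm_num))))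
  set f : ℝ → ℝ := (Set.Icc (-r) r).indicator 1 with hfdef
  have hf0 : ∀ s, 0 ≤ f s := fun s => Set.indicator_nonneg (fun _ _ => zero_le_one) s
  have hf1 : ∀ s, f s ≤ 1 := by
    intro s; by_cases hs : s ∈ Set.Icc (-r) r <;> simp [hfdef, hs]
  have hfsym : ∀ s, f (-s) = f s := by
    intro s
    simp only [hfdef, Set.indicator_apply, Set.mem_Icc]
    have hiff : (-r ≤ -s ∧ -s ≤ r) ↔ (-r ≤ s ∧ s ≤ r) := by
      constructor <;> rintro ⟨a, b⟩ <;> constructor <;> linarith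
    rw [if_congr hiff rfl rfl]
    simp
  set Φ : ℝ → ℝ := fun t => Mconst κ * (1 + t) * (1 - t ^ 2) ^ (κ - 1) with hΦdef
  set e : ℝ → ℝ := fun t => x ^ 2 + y ^ 2 + 2 * x * y * t with hedef
  set g : ℝ → ℝ := fun t => f (Real.sqrt (e t)) * Φ t with hgdef
  set h : ℝ → ℝ := fun t => f (Real.sqrt (e t)) * ((x + y) / Real.sqrt (e t)) * Φ t
    with hhdef
  have hΦnn : ∀ t ∈ Set.Ioo (-1 : ℝ) 1, 0 ≤ Φ t := by
    intro t ht
    have h1 : (0 : ℝ) ≤ 1 + t := by linarith [ht.1]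
    have h2 : (0 : ℝ) ≤ 1 - t ^ 2 := by nlinarith [ht.1, ht.2]
    exact mul_nonneg (mul_nonneg hM h1) (Real.rpow_nonneg h2 _)
  have hΦle : ∀ t ∈ Set.Ioo (-1 : ℝ) 1,
      Φ t ≤ Mconst κ * 2 ^ κ * (1 - t) ^ (κ - 1) := by
    intro t ht
    have h1 : (0 : ℝ) < 1 + t := by linarith [ht.1]
    have h2 : (0 : ℝ) < 1 - t := by linarith [ht.2]
    have hpow : (1 + t) * (1 + t) ^ (κ - 1) = (1 + t) ^ κ := by
      have := Real.rpow_add h1 1 (κ - 1)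
      rw [Real.rpow_one] at this
      rw [show (1 : ℝ) + (κ - 1) = κ by ring] at this
      exact this.symm
    have hΦeq : Φ t = Mconst κ * ((1 + t) ^ κ * (1 - t) ^ (κ - 1)) := by
      rw [hΦdef]
      simp only
      rw [show (1 : ℝ) - t ^ 2 = (1 + t) * (1 - t) by ring,
        Real.mul_rpow h1.le h2.le, ← hpow]
      ring
    rw [hΦeq, mul_assoc]
    refine mul_le_mul_of_nonneg_left ?_ hM
    exact mul_le_mul_of_nonneg_right
      (Real.rpow_le_rpow h1.le (by linarith [ht.2]) hκ.le)
      (Real.rpow_nonneg h2.le _)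
  have hmg : AEStronglyMeasurable g (volume.restrict (Set.Ioo (-1 : ℝ) 1)) := by
    have hmf : Measurable f := measurable_one.indicator measurableSet_Icc
    have hme : Measurable e := by fun_prop
    have hmΦ : AEStronglyMeasurable Φ (volume.restrict (Set.Ioo (-1 : ℝ) 1)) := by
      refine ContinuousOn.aestronglyMeasurable ?_ measurableSet_Ioo
      refine ContinuousOn.mul ?_ (ContinuousOn.rpow_const ?_ ?_)
      · exact (continuous_const.mul (continuous_const.add continuous_id)).continuousOn
      · exact (continuous_const.sub (continuous_pow 2)).continuousOn
      · intro t ht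
        left
        have : (0:ℝ) < 1 - t ^ 2 := by nlinarith [ht.1, ht.2]
        positivity
    exact ((hmf.comp
      (Real.continuous_sqrt.measurable.comp hme)).aestronglyMeasurable).mul hmΦ
  have hbnd : IntegrableOn (fun t => Mconst κ * 2 ^ κ * (1 - t) ^ (κ - 1))
      (Set.Ioo (-1 : ℝ) 1) := by
    have h1 : IntervalIntegrable (fun s : ℝ => s ^ (κ - 1)) volume 0 2 :=
      intervalIntegral.intervalIntegrable_rpow' (by linarith)
    have h2 := ((h1.comp_sub_left 1).symm)
    norm_num at h2
    rw [intervalIntegrable_iff_integrableOn_Ioo_of_le (by norm_num)] at h2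
    exact h2.const_mul _
  have hgI : IntegrableOn g (Set.Ioo (-1 : ℝ) 1) := by
    refine Integrable.mono' hbnd hmg ?_
    refine (ae_restrict_iff' measurableSet_Ioo).2 (Filter.Eventually.of_forall fun t ht => ?_)
    have hnn : 0 ≤ g t := mul_nonneg (hf0 _) (hΦnn t ht)
    rw [Real.norm_eq_abs, abs_of_nonneg hnn]
    calc f (Real.sqrt (e t)) * Φ t ≤ 1 * Φ t :=
          mul_le_mul_of_nonneg_right (hf1 _) (hΦnn t ht)
      _ = Φ t := one_mul _
      _ ≤ _ := hΦle t ht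
  have hgnn : 0 ≤ ∫ t in Set.Ioo (-1 : ℝ) 1, g t :=
    setIntegral_nonneg measurableSet_Ioo fun t ht => mul_nonneg (hf0 _) (hΦnn t ht)
  unfold tauK
  have E1 : (∫ t in Set.Ioo (-1:ℝ) 1,
      f (Real.sqrt (x^2 + y^2 + 2*x*y*t)) *
        (1 + (x + y) / Real.sqrt (x^2 + y^2 + 2*x*y*t)) *
        (Mconst κ * (1 + t) * (1 - t^2) ^ (κ - 1)))
      = ∫ t in Set.Ioo (-1:ℝ) 1, (g t + h t) := by
    congr 1; funext t
    simp only [hgdef, hhdef, hΦdef, hedef]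
    ring
  have E2 : (∫ t in Set.Ioo (-1:ℝ) 1,
      f (-Real.sqrt (x^2 + y^2 + 2*x*y*t)) *
        (1 - (x + y) / Real.sqrt (x^2 + y^2 + 2*x*y*t)) *
        (Mconst κ * (1 + t) * (1 - t^2) ^ (κ - 1)))
      = ∫ t in Set.Ioo (-1:ℝ) 1, (g t - h t) := by
    congr 1; funext t
    rw [hfsym]
    simp only [hgdef, hhdef, hΦdef, hedef]
    ring
  rw [E1, E2]
  by_cases hI : IntegrableOn h (Set.Ioo (-1 : ℝ) 1) volume
  · rw [integral_add hgI hI, integral_sub hgI hI]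
    linarith [hgnn]
  · have h1 : ¬ IntegrableOn (fun t => g t + h t) (Set.Ioo (-1 : ℝ) 1) volume := by
      intro H
      exact hI ((H.sub hgI).congr (Filter.Eventually.of_forall fun t => by
        simp [Pi.sub_apply]))
    have h2 : ¬ IntegrableOn (fun t => g t - h t) (Set.Ioo (-1 : ℝ) 1) volume := by
      intro H
      exact hI ((hgI.sub H).congr (Filter.Eventually.of_forall fun t => by
        simp [Pi.sub_apply]))
    rw [integral_undef h1, integral_undef h2]
    norm_num
end
end

section
/- There exists a constant C > 0, depending only on κ_1,…,κ_d, with the following property: if E is a μ_κ-measurable subset of ℝ_+×⋯×ℝ_+ and E ⊂ ⋃_{j∈J} R_j where each R_j = R(z_j, r_j) with z_j ∈ ℝ^d and r_j > 0, and sup_{j∈J} r_j < ∞, then one can select from this family a finite or countable pairwise disjoint subfamily R_1, …, R_n, … such that μ_κ(E) ≤ C Σ_n μ_κ(R_n). -/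
noncomputable section
open MeasureTheory Set Real
open scoped ENNReal NNReal

/-! ### Auxiliary lemmas for the covering lemma -/

lemma max_lt_add {x r : ℝ} (hr : 0 < r) : max 0 (|x| - r) < |x| + r := by
  have := abs_nonneg x
  apply max_lt <;> linarith

lemma measurableSet_Rset (d : ℕ) (z : Fin d → ℝ) (r : ℝ) : MeasurableSet (Rset d z r) :=
  MeasurableSet.univ_pi fun _ => measurableSet_Ico

lemma Iset_subset_enlarge {x x' r r' : ℝ} (hr : 0 < r) (hr' : 0 < r')
    (h : (Iset x r ∩ Iset x' r').Nonempty) (hle : r ≤ 2 * r') :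
    Iset x r ⊆ Iset x' (5 * r') := by
  obtain ⟨s, hs1, hs2⟩ := h
  rw [Iset, mem_Ico] at hs1 hs2
  have h1 : |x| - r ≤ s := le_trans (le_max_right _ _) hs1.1
  have h2 : |x'| - r' ≤ s := le_trans (le_max_right _ _) hs2.1
  intro p hp
  rw [Iset, mem_Ico] at hp ⊢
  have h0 : (0:ℝ) ≤ p := le_trans (le_max_left _ _) hp.1
  have h3 : |x| - r ≤ p := le_trans (le_max_right _ _) hp.1
  refine ⟨max_le h0 ?_, ?_⟩
  · linarith [hs1.2]
  · linarith [hs2.2, hp.2]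

lemma Rset_subset_enlarge {d : ℕ} {z z' : Fin d → ℝ} {r r' : ℝ} (hr : 0 < r) (hr' : 0 < r')
    (h : (Rset d z r ∩ Rset d z' r').Nonempty) (hle : r ≤ 2 * r') :
    Rset d z r ⊆ Rset d z' (5 * r') := by
  obtain ⟨w, hw1, hw2⟩ := h
  intro x hx j _
  exact Iset_subset_enlarge hr hr'
    ⟨w j, hw1 j (mem_univ j), hw2 j (mem_univ j)⟩ hle (hx j (mem_univ j))

lemma Rset_interior_nonempty {d : ℕ} (z : Fin d → ℝ) {r : ℝ} (hr : 0 < r) :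
    (interior (Rset d z r)).Nonempty := by
  set O : Set (Fin d → ℝ) := univ.pi fun j => Ioo (max 0 (|z j| - r)) (|z j| + r) with hO_def
  have hO : IsOpen O := isOpen_set_pi finite_univ fun j _ => isOpen_Ioo
  have hsub : O ⊆ Rset d z r := pi_mono fun j _ => Ioo_subset_Ico_self
  have hne : O.Nonempty := by
    rw [hO_def, univ_pi_nonempty_iff]
    exact fun j => nonempty_Ioo.2 (max_lt_add hr)
  exact hne.mono (hO.subset_interior_iff.mpr hsub)

lemma Rset_nonempty {d : ℕ} (z : Fin d → ℝ) {r : ℝ} (hr : 0 < r) :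
    (Rset d z r).Nonempty := by
  refine ⟨fun j => |z j|, fun j _ => ?_⟩
  simp only [Iset, mem_Ico]
  exact ⟨max_le (abs_nonneg _) (by linarith), by linarith⟩

lemma muK_Rset_doubling {d : ℕ} {κ : Fin d → ℝ} (hκ : ∀ j, 0 ≤ κ j)
    (z : Fin d → ℝ) {r : ℝ} (hr : 0 < r) :
    muK d κ (Rset d z (5 * r)) ≤
      ENNReal.ofReal (∏ j, 20 * (10:ℝ) ^ (2 * κ j)) * muK d κ (Rset d z r) := by
  set a : Fin d → ℝ := fun j => |z j| with ha
  have ha0 : ∀ j, 0 ≤ a j := fun j => abs_nonneg _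
  set U : Fin d → ℝ := fun j => (5 * (a j + r)) ^ (2 * κ j) with hU_def
  set L : Fin d → ℝ := fun j => ((a j + r) / 2) ^ (2 * κ j) with hL_def
  have hU0 : ∀ j, 0 ≤ U j := fun j => Real.rpow_nonneg (by linarith [ha0 j]) _
  have hL0 : ∀ j, 0 ≤ L j := fun j => Real.rpow_nonneg (by linarith [ha0 j]) _
  -- upper bound for the big rectangle
  have hupper : muK d κ (Rset d z (5 * r)) ≤
      ENNReal.ofReal ((∏ j, U j) * (10 * r) ^ d) := by
    rw [muK, withDensity_apply _ (measurableSet_Rset d z (5 * r))]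
    calc ∫⁻ x in Rset d z (5 * r), ENNReal.ofReal (∏ j, |x j| ^ (2 * κ j)) ∂volume
        ≤ ∫⁻ _ in Rset d z (5 * r), ENNReal.ofReal (∏ j, U j) ∂volume := by
          refine setLIntegral_mono' (measurableSet_Rset d z (5 * r)) fun x hx => ?_
          refine ENNReal.ofReal_le_ofReal (Finset.prod_le_prod
            (fun j _ => Real.rpow_nonneg (abs_nonneg _) _) fun j _ => ?_)
          have hxj := hx j (mem_univ j)
          simp only [Iset, mem_Ico] at hxj
          have h0x : (0:ℝ) ≤ x j := le_trans (le_max_left _ _) hxj.1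
          have : |x j| ≤ 5 * (a j + r) := by
            rw [abs_of_nonneg h0x]; have := hxj.2; have := ha0 j; linarith
          exact Real.rpow_le_rpow (abs_nonneg _) this (by linarith [hκ j])
      _ = ENNReal.ofReal (∏ j, U j) * volume (Rset d z (5 * r)) := setLIntegral_const _ _
      _ ≤ ENNReal.ofReal (∏ j, U j) * ENNReal.ofReal ((10 * r) ^ d) := by
          refine mul_le_mul_right ?_ _
          rw [Rset, volume_pi_pi]
          calc (∏ j, volume (Iset (z j) (5 * r)))
              ≤ ∏ _j : Fin d, ENNReal.ofReal (10 * r) := by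
                refine Finset.prod_le_prod' fun j _ => ?_
                rw [Iset, Real.volume_Ico]
                refine ENNReal.ofReal_le_ofReal ?_
                have := le_max_right 0 (|z j| - 5 * r)
                linarith
            _ = ENNReal.ofReal ((10 * r) ^ d) := by
                rw [Finset.prod_const, Finset.card_univ, Fintype.card_fin,
                  ENNReal.ofReal_pow (by linarith)]
      _ = ENNReal.ofReal ((∏ j, U j) * (10 * r) ^ d) := by
          rw [ENNReal.ofReal_mul (Finset.prod_nonneg fun j _ => hU0 j)]
  -- lower bound for the small rectangle
  have hlower : ENNReal.ofReal ((∏ j, L j) * (r / 2) ^ d) ≤ muK d κ (Rset d z r) := by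
    set B : Set (Fin d → ℝ) := univ.pi fun j => Ico (a j + r / 2) (a j + r) with hB_def
    have hBmeas : MeasurableSet B := MeasurableSet.univ_pi fun _ => measurableSet_Ico
    have hBsub : B ⊆ Rset d z r := by
      refine pi_mono fun j _ => ?_
      refine Ico_subset_Ico ?_ le_rfl
      exact max_le (by linarith [ha0 j]) (by linarith [ha0 j])
    have hvolB : volume B = ENNReal.ofReal ((r / 2) ^ d) := by
      rw [hB_def, volume_pi_pi]
      have : ∀ j : Fin d, volume (Ico (a j + r / 2) (a j + r)) = ENNReal.ofReal (r / 2) := by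
        intro j; rw [Real.volume_Ico]; congr 1; ring
      simp_rw [this]
      rw [Finset.prod_const, Finset.card_univ, Fintype.card_fin,
        ENNReal.ofReal_pow (by linarith)]
    rw [muK, withDensity_apply _ (measurableSet_Rset d z r)]
    calc ENNReal.ofReal ((∏ j, L j) * (r / 2) ^ d)
        = ENNReal.ofReal (∏ j, L j) * volume B := by
          rw [hvolB, ENNReal.ofReal_mul (Finset.prod_nonneg fun j _ => hL0 j)]
      _ = ∫⁻ _ in B, ENNReal.ofReal (∏ j, L j) ∂volume := (setLIntegral_const _ _).symm
      _ ≤ ∫⁻ x in B, ENNReal.ofReal (∏ j, |x j| ^ (2 * κ j)) ∂volume := by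
          refine setLIntegral_mono' hBmeas fun x hx => ?_
          refine ENNReal.ofReal_le_ofReal (Finset.prod_le_prod
            (fun j _ => hL0 j) fun j _ => ?_)
          have hxj := hx j (mem_univ j)
          rw [mem_Ico] at hxj
          have h1 : (a j + r) / 2 ≤ x j := by linarith [hxj.1, ha0 j]
          have h2 : (a j + r) / 2 ≤ |x j| := le_trans h1 (le_abs_self _)
          exact Real.rpow_le_rpow (by linarith [ha0 j]) h2 (by linarith [hκ j])
      _ ≤ ∫⁻ x in Rset d z r, ENNReal.ofReal (∏ j, |x j| ^ (2 * κ j)) ∂volume :=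
          lintegral_mono_set hBsub
  -- combine via the exact real identity
  have key : (∏ j, U j) * (10 * r) ^ d =
      (∏ j, 20 * (10:ℝ) ^ (2 * κ j)) * ((∏ j, L j) * (r / 2) ^ d) := by
    have hfac : ∀ j : Fin d, U j * (10 * r) =
        (20 * (10:ℝ) ^ (2 * κ j)) * (L j * (r / 2)) := by
      intro j
      have h5 : (5 : ℝ) * (a j + r) = 10 * ((a j + r) / 2) := by ring
      have := Real.mul_rpow (by norm_num : (0:ℝ) ≤ 10) (by linarith [ha0 j] : 0 ≤ (a j + r) / 2)
        (z := 2 * κ j)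
      rw [hU_def, hL_def]
      simp only [h5, this]
      ring
    calc (∏ j, U j) * (10 * r) ^ d
        = ∏ j, U j * (10 * r) := by
          rw [Finset.prod_mul_distrib, Finset.prod_const, Finset.card_univ, Fintype.card_fin]
      _ = ∏ j, (20 * (10:ℝ) ^ (2 * κ j)) * (L j * (r / 2)) := Finset.prod_congr rfl fun j _ => hfac j
      _ = (∏ j, 20 * (10:ℝ) ^ (2 * κ j)) * ((∏ j, L j) * (r / 2) ^ d) := by
          simp only [Finset.prod_mul_distrib, Finset.prod_const, Finset.card_univ,
            Fintype.card_fin]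
  calc muK d κ (Rset d z (5 * r)) ≤ ENNReal.ofReal ((∏ j, U j) * (10 * r) ^ d) := hupper
    _ = ENNReal.ofReal (∏ j, 20 * (10:ℝ) ^ (2 * κ j)) *
          ENNReal.ofReal ((∏ j, L j) * (r / 2) ^ d) := by
        rw [key, ENNReal.ofReal_mul (Finset.prod_nonneg fun j _ => by positivity)]
    _ ≤ ENNReal.ofReal (∏ j, 20 * (10:ℝ) ^ (2 * κ j)) * muK d κ (Rset d z r) :=
        mul_le_mul_right hlower _

/-- Vitali-type covering lemma for the rectangles `R(z,r)` and the measure `μ_κ`. -/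
theorem covering_lemma_Rset
    (d : ℕ) (hd : 1 ≤ d) (κ : Fin d → ℝ) (hκ : ∀ j, 0 ≤ κ j) :
    ∃ C : ℝ, 0 < C ∧ ∀ (J : Type) (z : J → Fin d → ℝ) (rad : J → ℝ),
      (∀ j, 0 < rad j) → BddAbove (Set.range rad) →
      ∀ E : Set (Fin d → ℝ), MeasurableSet E → E ⊆ {x | ∀ j, 0 ≤ x j} →
        E ⊆ ⋃ j, Rset d (z j) (rad j) →
        ∃ s : Set J, s.Countable ∧
          s.PairwiseDisjoint (fun j => Rset d (z j) (rad j)) ∧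
          muK d κ E ≤ ENNReal.ofReal C * ∑' j : s, muK d κ (Rset d (z j) (rad j)) := by
  refine ⟨∏ j, 20 * (10:ℝ) ^ (2 * κ j), Finset.prod_pos fun j _ => by positivity, ?_⟩
  intro J z rad hrad hbdd E hE hEpos hcov
  obtain ⟨Rb, hRb⟩ := hbdd
  obtain ⟨u, hu_sub, hu_disj, hu_int⟩ :=
    Vitali.exists_disjoint_subfamily_covering_enlargement
      (fun j => Rset d (z j) (rad j)) univ rad 2 one_lt_two
      (fun a _ => (hrad a).le) Rb (fun a _ => hRb (mem_range_self a))
      (fun a _ => Rset_nonempty (z a) (hrad a))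
  have hcount : u.Countable :=
    hu_disj.countable_of_nonempty_interior fun j _ => Rset_interior_nonempty (z j) (hrad j)
  refine ⟨u, hcount, hu_disj, ?_⟩
  have hEsub : E ⊆ ⋃ b ∈ u, Rset d (z b) (5 * rad b) := by
    intro x hx
    obtain ⟨j, hj⟩ := mem_iUnion.1 (hcov hx)
    obtain ⟨b, hbu, hint, hle⟩ := hu_int j (mem_univ j)
    exact mem_biUnion hbu (Rset_subset_enlarge (hrad j) (hrad b) hint hle hj)
  calc muK d κ E ≤ muK d κ (⋃ b ∈ u, Rset d (z b) (5 * rad b)) := measure_mono hEsub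
    _ ≤ ∑' b : u, muK d κ (Rset d (z b) (5 * rad b)) :=
        measure_biUnion_le _ hcount _
    _ ≤ ∑' b : u, ENNReal.ofReal (∏ j, 20 * (10:ℝ) ^ (2 * κ j)) *
          muK d κ (Rset d (z b) (rad b)) :=
        ENNReal.tsum_le_tsum fun b => muK_Rset_doubling hκ _ (hrad b)
    _ = ENNReal.ofReal (∏ j, 20 * (10:ℝ) ^ (2 * κ j)) *
          ∑' b : u, muK d κ (Rset d (z b) (rad b)) := ENNReal.tsum_mul_left
end
end
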